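/- arXiv:1712.08077 — 7 statements merged into one kernel-verified Lean document; each statement's English description precedes it below -/
import Mathlib

section
/- For every 1 ≤ p, q ≤ ∞ and every m, n ∈ ℕ, the m-homogeneous mixed Bohr radius equals the reciprocal of the m-th root of the mixed unconditional constant: K_m(B_{ℓ_p^n}, B_{ℓ_q^n}) = 1 / χ_M(𝒫(^m ℓ_p^n), 𝒫(^m ℓ_q^n))^{1/m}. -/
open scoped ENNReal NNReal BigOperators

/-- The `ℓ_p` norm on `ℂ^n`, for `p ∈ [1,∞]` (an extended real). -/
noncomputable def lpNorm (p : ℝ≥0∞) {n : ℕ} (z : Fin n → ℂ) : ℝ :=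
  if p = ∞ then ⨆ i, ‖z i‖ else (∑ i, ‖z i‖ ^ p.toReal) ^ (1 / p.toReal)

/-- The closed ball of radius `r` of `ℓ_p^n`. -/
def lpBall (p : ℝ≥0∞) (n : ℕ) (r : ℝ) : Set (Fin n → ℂ) :=
  {z | lpNorm p z ≤ r}

/-- The mixed `(p,q)`-Bohr radius `K(B_{ℓ_p^n}, B_{ℓ_q^n})`: the supremum of all `r ≥ 0`
such that for every entire function `f` on `ℂ^n` with monomial expansion coefficients `a`,
`sup_{z ∈ r·B_{ℓ_q^n}} Σ_α |a_α z^α| ≤ sup_{z ∈ B_{ℓ_p^n}} |f(z)|`. -/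
noncomputable def mixedBohrRadius (p q : ℝ≥0∞) (n : ℕ) : ℝ :=
  sSup {r : ℝ | 0 ≤ r ∧ ∀ (f : (Fin n → ℂ) → ℂ) (a : (Fin n → ℕ) → ℂ),
    (∀ z : Fin n → ℂ, HasSum (fun α : Fin n → ℕ => a α * ∏ i, z i ^ α i) (f z)) →
    ∀ z ∈ lpBall q n r,
      (∑' α : Fin n → ℕ, ((‖a α‖₊ : ℝ≥0∞) * ∏ i, (‖z i‖₊ : ℝ≥0∞) ^ α i))
        ≤ ⨆ w ∈ lpBall p n 1, (‖f w‖₊ : ℝ≥0∞)}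

/-- `Λ(m,n)`, the finite set of multi-indices `α ∈ ℕ_0^n` with `|α| = m`. -/
def Lam (m n : ℕ) : Finset (Fin n → ℕ) := Finset.Nat.antidiagonalTuple n m

/-- The mixed `(p,q)`-unconditional constant `χ_M(𝒫(^m ℓ_p^n), 𝒫(^m ℓ_q^n))`: the least
`λ > 0` such that for all coefficients `a` and unimodular `θ`,
`sup_{z ∈ B_{ℓ_q^n}} |Σ θ_α a_α z^α| ≤ λ · sup_{z ∈ B_{ℓ_p^n}} |Σ a_α z^α|`. -/
noncomputable def unconditionalConst (m : ℕ) (p q : ℝ≥0∞) (n : ℕ) : ℝ :=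
  sInf {l : ℝ | 0 < l ∧ ∀ (a θ : (Fin n → ℕ) → ℂ), (∀ α ∈ Lam m n, ‖θ α‖ = 1) →
    ∀ z ∈ lpBall q n 1,
      ‖∑ α ∈ Lam m n, θ α * a α * ∏ i, z i ^ α i‖ ≤
        l * ⨆ w ∈ lpBall p n 1, ‖∑ α ∈ Lam m n, a α * ∏ i, w i ^ α i‖}

/-- The `m`-homogeneous mixed Bohr radius `K_m(B_{ℓ_p^n}, B_{ℓ_q^n})`: the greatest `r > 0`
such that for every `m`-homogeneous polynomial `P = Σ_{|α|=m} a_α z^α`,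
`sup_{z ∈ r·B_{ℓ_q^n}} Σ |a_α z^α| ≤ sup_{z ∈ B_{ℓ_p^n}} |P(z)|`. -/
noncomputable def homBohrRadius (m : ℕ) (p q : ℝ≥0∞) (n : ℕ) : ℝ :=
  sSup {r : ℝ | 0 < r ∧ ∀ a : (Fin n → ℕ) → ℂ, ∀ z ∈ lpBall q n r,
      ∑ α ∈ Lam m n, ‖a α‖ * ∏ i, ‖z i‖ ^ α i ≤
        ⨆ w ∈ lpBall p n 1, ‖∑ α ∈ Lam m n, a α * ∏ i, w i ^ α i‖}

section aux
variable {n : ℕ} {p : ℝ≥0∞}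

lemma toReal_pos (hp : 1 ≤ p) (hp' : p ≠ ∞) : 0 < p.toReal := by
  have h1 : (1:ℝ≥0∞).toReal ≤ p.toReal := ENNReal.toReal_mono hp' hp
  simpa using lt_of_lt_of_le one_pos (by simpa using h1) |>.trans_le le_rfl

lemma lpNorm_nonneg (p : ℝ≥0∞) (z : Fin n → ℂ) : 0 ≤ lpNorm p z := by
  unfold lpNorm
  split
  · exact Real.iSup_nonneg fun i => norm_nonneg _
  · exact Real.rpow_nonneg (Finset.sum_nonneg fun i _ => Real.rpow_nonneg (norm_nonneg _) _) _

lemma lpNorm_zero (hp : 1 ≤ p) : lpNorm p (0 : Fin n → ℂ) = 0 := by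
  unfold lpNorm
  split_ifs with h
  · simp [Real.iSup_const_zero]
  · have ht : p.toReal ≠ 0 := (toReal_pos hp h).ne'
    simp [Real.zero_rpow ht, Real.zero_rpow (inv_ne_zero ht)]

lemma lpNorm_smul (hp : 1 ≤ p) (c : ℝ) (z : Fin n → ℂ) :
    lpNorm p (c • z) = |c| * lpNorm p z := by
  unfold lpNorm
  split_ifs with h
  · rw [Real.mul_iSup_of_nonneg (abs_nonneg c)]
    congr 1; ext i
    simp [norm_smul, Real.norm_eq_abs]
  · have ht : 0 < p.toReal := toReal_pos hp h
    have : ∀ i, ‖(c • z) i‖ ^ p.toReal = |c| ^ p.toReal * ‖z i‖ ^ p.toReal := by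
      intro i
      simp only [Pi.smul_apply, norm_smul, Real.norm_eq_abs]
      rw [Real.mul_rpow (abs_nonneg c) (norm_nonneg _)]
    rw [Finset.sum_congr rfl fun i _ => this i, ← Finset.mul_sum,
      Real.mul_rpow (Real.rpow_nonneg (abs_nonneg c) _)
        (Finset.sum_nonneg fun i _ => Real.rpow_nonneg (norm_nonneg _) _),
      ← Real.rpow_mul (abs_nonneg c), mul_one_div, div_self ht.ne', Real.rpow_one]

lemma norm_coord_le (hp : 1 ≤ p) {z : Fin n → ℂ} (hz : z ∈ lpBall p n 1) (i : Fin n) :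
    ‖z i‖ ≤ 1 := by
  have hz' : lpNorm p z ≤ 1 := hz
  unfold lpNorm at hz'
  split_ifs at hz' with h
  · exact le_trans (le_ciSup (f := fun i => ‖z i‖) (Set.Finite.bddAbove (Set.finite_range _)) i) hz'
  · have ht : 0 < p.toReal := toReal_pos hp h
    have h1 : ‖z i‖ ^ p.toReal ≤ ∑ j, ‖z j‖ ^ p.toReal :=
      Finset.single_le_sum (fun j _ => Real.rpow_nonneg (norm_nonneg _) _) (Finset.mem_univ i)
    have h2 : (‖z i‖ ^ p.toReal) ^ (1 / p.toReal) ≤ (∑ j, ‖z j‖ ^ p.toReal) ^ (1 / p.toReal) :=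
      Real.rpow_le_rpow (Real.rpow_nonneg (norm_nonneg _) _) h1 (by positivity)
    rw [← Real.rpow_mul (norm_nonneg _), mul_one_div, div_self ht.ne', Real.rpow_one] at h2
    exact h2.trans hz'

lemma zero_mem_lpBall (hp : 1 ≤ p) {r : ℝ} (hr : 0 ≤ r) : (0 : Fin n → ℂ) ∈ lpBall p n r := by
  show lpNorm p 0 ≤ r
  rw [lpNorm_zero hp]; exact hr

lemma mem_Lam {m : ℕ} {α : Fin n → ℕ} : α ∈ Lam m n ↔ ∑ i, α i = m :=
  Finset.Nat.mem_antidiagonalTuple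

lemma prod_pow_hom {M : Type*} [CommMonoid M] {m : ℕ} {α : Fin n → ℕ} (hα : α ∈ Lam m n)
    (c : M) (x : Fin n → M) : (∏ i, (c * x i) ^ α i) = c ^ m * ∏ i, x i ^ α i := by
  have : (∏ i, (c * x i) ^ α i) = (∏ i, c ^ α i) * ∏ i, x i ^ α i := by
    rw [← Finset.prod_mul_distrib]; exact Finset.prod_congr rfl fun i _ => mul_pow _ _ _
  rw [this, Finset.prod_pow_eq_pow_sum, mem_Lam.mp hα]

section bsup
variable {X : Type*} {s : Set X} {f : X → ℝ} {M : ℝ}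

lemma bsup_le (h : ∀ x ∈ s, f x ≤ M) (hM : 0 ≤ M) : (⨆ x ∈ s, f x) ≤ M := by
  refine Real.iSup_le (fun x => Real.iSup_le (fun hx => h x hx) hM) hM

lemma le_bsup (h : ∀ x ∈ s, f x ≤ M) {x : X} (hx : x ∈ s) : f x ≤ ⨆ x ∈ s, f x := by
  have hM0 : 0 ≤ max M 0 := le_max_right _ _
  have hbdd : BddAbove (Set.range fun x => ⨆ _ : x ∈ s, f x) := by
    refine ⟨max M 0, Set.forall_mem_range.mpr fun y => ?_⟩
    by_cases hy : y ∈ s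
    · rw [ciSup_pos hy]; exact le_max_of_le_left (h y hy)
    · simp [hy, Real.iSup_of_isEmpty, isEmpty_Prop.mpr hy, Real.iSup_const_zero]
  calc f x = ⨆ _ : x ∈ s, f x := (ciSup_pos (p := x ∈ s) (f := fun _ => f x) hx).symm
    _ ≤ ⨆ x ∈ s, f x := le_ciSup hbdd x

lemma bsup_nonneg (h : ∀ x ∈ s, f x ≤ M) {x : X} (hx : x ∈ s) (hf : 0 ≤ f x) :
    0 ≤ ⨆ x ∈ s, f x := le_trans hf (le_bsup h hx)

lemma bsup_mul (h : ∀ x ∈ s, f x ≤ M) {r : ℝ} (hr : 0 ≤ r) :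
    (⨆ x ∈ s, r * f x) = r * ⨆ x ∈ s, f x := by
  rw [Real.mul_iSup_of_nonneg hr]
  exact iSup_congr fun x => (Real.mul_iSup_of_nonneg hr _).symm

end bsup
end aux

section csup
variable {m : ℕ}

/-- `C(a) = sup_{w ∈ B_p} ‖P_a(w)‖`. -/
noncomputable def Csup (p : ℝ≥0∞) (m n : ℕ) (a : (Fin n → ℕ) → ℂ) : ℝ :=
  ⨆ w ∈ lpBall p n 1, ‖∑ α ∈ Lam m n, a α * ∏ i, w i ^ α i‖

lemma Pa_bound (hp : 1 ≤ p) {a : (Fin n → ℕ) → ℂ} {w : Fin n → ℂ} (hw : w ∈ lpBall p n 1) :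
    ‖∑ α ∈ Lam m n, a α * ∏ i, w i ^ α i‖ ≤ ∑ α ∈ Lam m n, ‖a α‖ := by
  refine (norm_sum_le _ _).trans (Finset.sum_le_sum fun α _ => ?_)
  rw [norm_mul]
  have h1 : ‖∏ i, w i ^ α i‖ ≤ 1 := by
    rw [norm_prod]
    refine Finset.prod_le_one (fun i _ => norm_nonneg _) fun i _ => ?_
    rw [norm_pow]
    exact pow_le_one₀ (norm_nonneg _) (norm_coord_le hp hw i)
  calc ‖a α‖ * ‖∏ i, w i ^ α i‖ ≤ ‖a α‖ * 1 := by
        exact mul_le_mul_of_nonneg_left h1 (norm_nonneg _)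
    _ = ‖a α‖ := mul_one _

lemma Csup_nonneg (hp : 1 ≤ p) (a : (Fin n → ℕ) → ℂ) : 0 ≤ Csup p m n a :=
  bsup_nonneg (fun w hw => Pa_bound hp hw) (zero_mem_lpBall hp zero_le_one) (norm_nonneg _)

lemma le_Csup (hp : 1 ≤ p) {a : (Fin n → ℕ) → ℂ} {w : Fin n → ℂ} (hw : w ∈ lpBall p n 1) :
    ‖∑ α ∈ Lam m n, a α * ∏ i, w i ^ α i‖ ≤ Csup p m n a :=
  by unfold Csup; exact le_bsup (s := lpBall p n 1) (f := fun w => ‖∑ α ∈ Lam m n, a α * ∏ i, w i ^ α i‖) (M := ∑ α ∈ Lam m n, ‖a α‖) (fun w hw => Pa_bound hp hw) hw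

lemma Csup_le (hp : 1 ≤ p) (a : (Fin n → ℕ) → ℂ) : Csup p m n a ≤ ∑ α ∈ Lam m n, ‖a α‖ :=
  bsup_le (fun w hw => Pa_bound hp hw) (Finset.sum_nonneg fun _ _ => norm_nonneg _)

lemma Csup_congr (hp : 1 ≤ p) {a a' : (Fin n → ℕ) → ℂ}
    (h : ∀ α ∈ Lam m n, a α = a' α) : Csup p m n a = Csup p m n a' := by
  unfold Csup
  refine iSup_congr fun w => iSup_congr fun hw => ?_
  rw [Finset.sum_congr rfl fun α hα => by rw [h α hα]]

lemma Csup_smul (hp : 1 ≤ p) (c : ℂ) (a : (Fin n → ℕ) → ℂ) :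
    Csup p m n (fun α => c * a α) = ‖c‖ * Csup p m n a := by
  unfold Csup
  rw [← bsup_mul (fun w hw => Pa_bound hp (a := a) hw) (norm_nonneg c)]
  refine iSup_congr fun w => iSup_congr fun hw => ?_
  rw [← norm_mul, Finset.mul_sum]
  congr 1
  exact Finset.sum_congr rfl fun α _ => by ring
end csup

lemma sum_eq_zero_on_ball {m : ℕ} (hp : 1 ≤ p) {a : (Fin n → ℕ) → ℂ}
    (h0 : ∀ w ∈ lpBall p n 1, ∑ α ∈ Lam m n, a α * ∏ i, w i ^ α i = 0) :
    ∀ α ∈ Lam m n, a α = 0 := by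
  classical
  have hall : ∀ w : Fin n → ℂ, ∑ α ∈ Lam m n, a α * ∏ i, w i ^ α i = 0 := by
    intro w
    set s := lpNorm p w with hs_def
    have hs : 0 ≤ s := lpNorm_nonneg _ _
    set t : ℝ := (1 + s)⁻¹ with ht_def
    have hts : 0 < 1 + s := by linarith
    have ht : 0 < t := inv_pos.mpr hts
    have hmem : t • w ∈ lpBall p n 1 := by
      show lpNorm p (t • w) ≤ 1
      rw [lpNorm_smul hp, abs_of_pos ht, ← hs_def, ht_def, inv_mul_le_iff₀ hts]
      linarith
    have h1 := h0 _ hmem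
    have h2 : ∀ α ∈ Lam m n, a α * ∏ i, (t • w) i ^ α i =
        (t : ℂ) ^ m * (a α * ∏ i, w i ^ α i) := by
      intro α hα
      have hpr : ∏ i, ((t : ℂ) * w i) ^ α i = (t : ℂ) ^ m * ∏ i, w i ^ α i :=
        prod_pow_hom hα _ _
      have : ∀ i, (t • w) i = (t : ℂ) * w i := fun i => by
        simp [Complex.real_smul]
      simp only [this]
      rw [hpr]; ring
    rw [Finset.sum_congr rfl h2, ← Finset.mul_sum] at h1
    have htm : ((t : ℂ)) ^ m ≠ 0 := pow_ne_zero _ (by exact_mod_cast ht.ne')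
    exact (mul_eq_zero.mp h1).resolve_left htm
  intro α hα
  set Q : MvPolynomial (Fin n) ℂ :=
    ∑ β ∈ Lam m n, MvPolynomial.monomial (Finsupp.equivFunOnFinite.symm β) (a β) with hQdef
  have hev : ∀ x : Fin n → ℂ,
      MvPolynomial.eval x Q = ∑ β ∈ Lam m n, a β * ∏ i, x i ^ β i := by
    intro x
    rw [hQdef, map_sum]
    refine Finset.sum_congr rfl fun β _ => ?_
    rw [MvPolynomial.eval_monomial]
    congr 1
    rw [Finsupp.prod_fintype]
    · exact Finset.prod_congr rfl fun i _ => by simp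
    · intro i; exact pow_zero _
  have hQ : Q = 0 := by
    apply MvPolynomial.funext
    intro x
    rw [hev x, hall x, map_zero]
  have hc := congrArg (MvPolynomial.coeff (Finsupp.equivFunOnFinite.symm α)) hQ
  rw [MvPolynomial.coeff_zero, hQdef, MvPolynomial.coeff_sum] at hc
  have hcol : ∀ β ∈ Lam m n, β ≠ α →
      MvPolynomial.coeff (Finsupp.equivFunOnFinite.symm α)
        (MvPolynomial.monomial (Finsupp.equivFunOnFinite.symm β) (a β)) = 0 := by
    intro β _ hβα
    rw [MvPolynomial.coeff_monomial, if_neg]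
    exact fun h => hβα (Finsupp.equivFunOnFinite.symm.injective h)
  rw [Finset.sum_eq_single_of_mem α hα (fun β hβ hβα => hcol β hβ hβα),
    MvPolynomial.coeff_monomial, if_pos rfl] at hc
  exact hc

lemma norm_lower (hp : 1 ≤ p) (m : ℕ) :
    ∃ c : ℝ, 0 < c ∧ ∀ a : (Fin n → ℕ) → ℂ,
      (∑ α ∈ Lam m n, ‖a α‖) ≤ c * Csup p m n a := by
  classical
  rcases Finset.eq_empty_or_nonempty (Lam m n) with hL | hL
  · exact ⟨1, one_pos, fun a => by
      rw [hL]
      simpa using Csup_nonneg (m := m) hp a⟩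
  let E := {α // α ∈ Lam m n} → ℂ
  let ext : E → (Fin n → ℕ) → ℂ := fun b α => if h : α ∈ Lam m n then b ⟨α, h⟩ else 0
  let N : E → ℝ := fun b => ∑ x, ‖b x‖
  let G : E → ℝ := fun b => Csup p m n (ext b)
  have hsum_ext : ∀ a : (Fin n → ℕ) → ℂ, (∑ α ∈ Lam m n, ‖a α‖) = ∑ x : {α // α ∈ Lam m n}, ‖a ↑x‖ := by
    intro a
    rw [Finset.univ_eq_attach, Finset.sum_attach (Lam m n) (fun α => ‖a α‖)]
  have hN_ext : ∀ b : E, (∑ α ∈ Lam m n, ‖ext b α‖) = N b := by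
    intro b
    rw [hsum_ext]
    exact Finset.sum_congr rfl fun x _ => by simp [ext, x.2]
  -- Lipschitz continuity of G
  have hkey : ∀ b b' : E, G b ≤ G b' + ∑ x : {α // α ∈ Lam m n}, ‖b x - b' x‖ := by
    intro b b'
    have hRnn : (0:ℝ) ≤ G b' + ∑ x : {α // α ∈ Lam m n}, ‖b x - b' x‖ :=
      add_nonneg (Csup_nonneg hp _) (Finset.sum_nonneg fun _ _ => norm_nonneg _)
    refine bsup_le (fun w hw => ?_) hRnn
    have hsplit : ‖∑ α ∈ Lam m n, ext b α * ∏ i, w i ^ α i‖ ≤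
        ‖∑ α ∈ Lam m n, ext b' α * ∏ i, w i ^ α i‖ +
        ‖∑ α ∈ Lam m n, (ext b α - ext b' α) * ∏ i, w i ^ α i‖ := by
      have : (∑ α ∈ Lam m n, ext b α * ∏ i, w i ^ α i) =
          (∑ α ∈ Lam m n, ext b' α * ∏ i, w i ^ α i) +
          ∑ α ∈ Lam m n, (ext b α - ext b' α) * ∏ i, w i ^ α i := by
        rw [← Finset.sum_add_distrib]
        exact Finset.sum_congr rfl fun α _ => by ring
      rw [this]
      exact norm_add_le _ _
    refine hsplit.trans (add_le_add (le_Csup hp hw) ?_)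
    refine (Pa_bound hp hw).trans ?_
    rw [hsum_ext (fun α => ext b α - ext b' α)]
    exact Finset.sum_le_sum fun x _ => by simp [ext, x.2]
  have hGcont : Continuous G := by
    rw [Metric.continuous_iff]
    intro b ε hε
    have hcard : (0:ℝ) < (Lam m n).card + 1 := by positivity
    refine ⟨ε / ((Lam m n).card + 1), by positivity, fun b' hbb' => ?_⟩
    have hsumlt : ∀ b₁ b₂ : E, dist b₁ b₂ < ε / ((Lam m n).card + 1) →
        (∑ x : {α // α ∈ Lam m n}, ‖b₁ x - b₂ x‖) < ε := by
      intro b₁ b₂ hd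
      have h1 : ∀ x : {α // α ∈ Lam m n}, ‖b₁ x - b₂ x‖ ≤ dist b₁ b₂ := by
        intro x
        rw [← dist_eq_norm]
        exact dist_le_pi_dist b₁ b₂ x
      calc (∑ x : {α // α ∈ Lam m n}, ‖b₁ x - b₂ x‖)
          ≤ ∑ _x : {α // α ∈ Lam m n}, dist b₁ b₂ := Finset.sum_le_sum fun x _ => h1 x
        _ = (Lam m n).card * dist b₁ b₂ := by
            rw [Finset.sum_const, nsmul_eq_mul]
            congr 1
            simp [Finset.univ_eq_attach, Finset.card_attach]
        _ ≤ ((Lam m n).card + 1) * dist b₁ b₂ := by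
            have : (0:ℝ) ≤ dist b₁ b₂ := dist_nonneg
            nlinarith
        _ < ((Lam m n).card + 1) * (ε / ((Lam m n).card + 1)) := by
            apply mul_lt_mul_of_pos_left hd hcard
        _ = ε := by field_simp
    rw [Real.dist_eq, abs_sub_lt_iff]
    constructor
    · have := hkey b' b
      have h2 := hsumlt b' b hbb'
      linarith
    · have := hkey b b'
      have h2 := hsumlt b b' (by rwa [dist_comm])
      linarith
  -- the compact sphere
  set K : Set E := {b | N b = 1} with hKdef
  have hKsub : K ⊆ Metric.closedBall 0 1 := by
    intro b hb
    rw [Metric.mem_closedBall, dist_zero_right]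
    refine (pi_norm_le_iff_of_nonneg zero_le_one).mpr fun x => ?_
    calc ‖b x‖ ≤ N b := Finset.single_le_sum (f := fun x => ‖b x‖)
          (fun y _ => norm_nonneg _) (Finset.mem_univ x)
      _ = 1 := hb
  have hKclosed : IsClosed K := by
    have hNcont : Continuous N := by
      apply continuous_finset_sum
      intro x _
      exact (continuous_apply x).norm
    exact isClosed_eq hNcont continuous_const
  have hKcomp : IsCompact K :=
    (isCompact_closedBall (0 : E) 1).of_isClosed_subset hKclosed hKsub
  have hKne : K.Nonempty := by
    obtain ⟨α₀, hα₀⟩ := hL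
    refine ⟨fun x => if x = ⟨α₀, hα₀⟩ then 1 else 0, ?_⟩
    show N _ = 1
    simp [N, apply_ite]
  obtain ⟨b₀, hb₀K, hminOn⟩ := hKcomp.exists_isMinOn hKne hGcont.continuousOn
  have hmin : ∀ b ∈ K, G b₀ ≤ G b := fun b hb => hminOn hb
  have hGb₀ : 0 < G b₀ := by
    rcases lt_or_eq_of_le (Csup_nonneg hp (ext b₀)) with h | h
    · exact h
    · exfalso
      have hzero : ∀ w ∈ lpBall p n 1, ∑ α ∈ Lam m n, ext b₀ α * ∏ i, w i ^ α i = 0 := by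
        intro w hw
        have h1 := le_Csup (m := m) hp (a := ext b₀) hw
        have : ‖∑ α ∈ Lam m n, ext b₀ α * ∏ i, w i ^ α i‖ ≤ 0 := by
          rw [← h] at h1; exact h1
        simpa using le_antisymm this (norm_nonneg _)
      have hcoeff := sum_eq_zero_on_ball hp hzero
      have : N b₀ = 0 := by
        rw [← hN_ext]
        refine Finset.sum_eq_zero fun α hα => by rw [hcoeff α hα, norm_zero]
      rw [hb₀K] at this
      norm_num at this
  refine ⟨(G b₀)⁻¹, inv_pos.mpr hGb₀, fun a => ?_⟩
  set S : ℝ := ∑ α ∈ Lam m n, ‖a α‖ with hSdef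
  have hS0 : 0 ≤ S := Finset.sum_nonneg fun _ _ => norm_nonneg _
  rcases eq_or_lt_of_le hS0 with h | hSpos
  · rw [← h]
    exact mul_nonneg (inv_pos.mpr hGb₀).le (Csup_nonneg hp a)
  · set b : E := fun x => (S : ℂ)⁻¹ * a ↑x with hbdef
    have hbK : b ∈ K := by
      show N b = 1
      have : N b = ∑ x : {α // α ∈ Lam m n}, S⁻¹ * ‖a ↑x‖ := by
        refine Finset.sum_congr rfl fun x _ => ?_
        rw [hbdef, norm_mul, norm_inv, Complex.norm_real, Real.norm_eq_abs,
          abs_of_pos hSpos]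
      rw [this, ← Finset.mul_sum, ← hsum_ext, ← hSdef, inv_mul_cancel₀ hSpos.ne']
    have hGb : G b = S⁻¹ * Csup p m n a := by
      show Csup p m n (ext b) = _
      have h1 : Csup p m n (ext b) = Csup p m n (fun α => (S : ℂ)⁻¹ * a α) := by
        refine Csup_congr hp fun α hα => ?_
        simp [ext, hα, hbdef]
      rw [h1, Csup_smul hp, norm_inv, Complex.norm_real, Real.norm_eq_abs,
        abs_of_pos hSpos]
    have h2 : G b₀ ≤ S⁻¹ * Csup p m n a := by
      rw [← hGb]; exact hmin b hbK
    have h3 : S * G b₀ ≤ Csup p m n a := by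
      have := mul_le_mul_of_nonneg_left h2 hS0
      rwa [← mul_assoc, mul_inv_cancel₀ hSpos.ne', one_mul] at this
    calc S ≤ Csup p m n a / G b₀ := (le_div_iff₀ hGb₀).mpr h3
      _ = (G b₀)⁻¹ * Csup p m n a := div_eq_inv_mul _ _

/-- the defining set of the unconditional constant, in terms of `Csup`. -/
def chiSet (m : ℕ) (p q : ℝ≥0∞) (n : ℕ) : Set ℝ :=
  {l : ℝ | 0 < l ∧ ∀ (a θ : (Fin n → ℕ) → ℂ), (∀ α ∈ Lam m n, ‖θ α‖ = 1) →
    ∀ z ∈ lpBall q n 1,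
      ‖∑ α ∈ Lam m n, θ α * a α * ∏ i, z i ^ α i‖ ≤ l * Csup p m n a}


/-- the defining set of the homogeneous Bohr radius, in terms of `Csup`. -/
def KSet (m : ℕ) (p q : ℝ≥0∞) (n : ℕ) : Set ℝ :=
  {r : ℝ | 0 < r ∧ ∀ a : (Fin n → ℕ) → ℂ, ∀ z ∈ lpBall q n r,
      ∑ α ∈ Lam m n, ‖a α‖ * ∏ i, ‖z i‖ ^ α i ≤ Csup p m n a}

lemma norm_theta_sum_le {m : ℕ} {θ a : (Fin n → ℕ) → ℂ} {z : Fin n → ℂ}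
    (hθ : ∀ α ∈ Lam m n, ‖θ α‖ = 1) :
    ‖∑ α ∈ Lam m n, θ α * a α * ∏ i, z i ^ α i‖ ≤
      ∑ α ∈ Lam m n, ‖a α‖ * ∏ i, ‖z i‖ ^ α i := by
  refine (norm_sum_le _ _).trans (Finset.sum_le_sum fun α hα => ?_)
  rw [norm_mul, norm_mul, hθ α hα, one_mul, norm_prod]
  refine le_of_eq ?_
  congr 1
  exact Finset.prod_congr rfl fun i _ => norm_pow _ _

lemma prod_norm_le_one (hq : 1 ≤ q) {z : Fin n → ℂ} {α : Fin n → ℕ}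
    (hz : z ∈ lpBall q n 1) : (∏ i, ‖z i‖ ^ α i) ≤ 1 := by
  refine Finset.prod_le_one (fun i _ => by positivity) fun i _ =>
    pow_le_one₀ (norm_nonneg _) (norm_coord_le hq hz i)

variable {q : ℝ≥0∞}

lemma chiSet_nonempty (hp : 1 ≤ p) (hq : 1 ≤ q) (m : ℕ) : (chiSet m p q n).Nonempty := by
  obtain ⟨c, hc, hcall⟩ := norm_lower (n := n) hp m
  refine ⟨c, hc, fun a θ hθ z hz => ?_⟩
  refine (norm_theta_sum_le hθ).trans ?_
  have h1 : (∑ α ∈ Lam m n, ‖a α‖ * ∏ i, ‖z i‖ ^ α i) ≤ ∑ α ∈ Lam m n, ‖a α‖ := by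
    refine Finset.sum_le_sum fun α _ => ?_
    calc ‖a α‖ * ∏ i, ‖z i‖ ^ α i ≤ ‖a α‖ * 1 :=
          mul_le_mul_of_nonneg_left (prod_norm_le_one hq hz) (norm_nonneg _)
      _ = ‖a α‖ := mul_one _
  exact h1.trans (hcall a)

lemma stepC (hp : 1 ≤ p) (hq : 1 ≤ q) (m : ℕ) (a : (Fin n → ℕ) → ℂ)
    {z : Fin n → ℂ} (hz : z ∈ lpBall q n 1) :
    (∑ α ∈ Lam m n, ‖a α‖ * ∏ i, ‖z i‖ ^ α i) ≤
      sInf (chiSet m p q n) * Csup p m n a := by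
  classical
  have hne := chiSet_nonempty (n := n) hp hq m
  set c : (Fin n → ℕ) → ℂ := fun α => a α * ∏ i, z i ^ α i with hcdef
  set θ : (Fin n → ℕ) → ℂ := fun α => if h : c α = 0 then 1 else (‖c α‖ : ℂ) / c α
    with hθdef
  have hθ1 : ∀ α, ‖θ α‖ = 1 := by
    intro α
    by_cases h : c α = 0
    · simp [hθdef, h]
    · rw [hθdef]
      simp only [h, dif_neg, not_false_iff]
      rw [norm_div, Complex.norm_real, Real.norm_eq_abs, abs_of_nonneg (norm_nonneg _),
        div_self (norm_ne_zero_iff.mpr h)]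
  have hθc : ∀ α, θ α * c α = (‖c α‖ : ℂ) := by
    intro α
    by_cases h : c α = 0
    · simp [hθdef, h]
    · rw [hθdef]
      simp only [h, dif_neg, not_false_iff]
      field_simp
  have hnorm_c : ∀ α, ‖c α‖ = ‖a α‖ * ∏ i, ‖z i‖ ^ α i := by
    intro α
    rw [hcdef]
    simp only [norm_mul, norm_prod, norm_pow]
  have hkey : ∑ α ∈ Lam m n, θ α * a α * ∏ i, z i ^ α i =
      ((∑ α ∈ Lam m n, ‖a α‖ * ∏ i, ‖z i‖ ^ α i : ℝ) : ℂ) := by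
    push_cast
    refine Finset.sum_congr rfl fun α hα => ?_
    calc θ α * a α * ∏ i, z i ^ α i = θ α * c α := by rw [hcdef, mul_assoc]
      _ = (‖c α‖ : ℂ) := hθc α
      _ = ((‖a α‖ : ℂ)) * ∏ i, ((‖z i‖ : ℂ)) ^ α i := by
          rw [hnorm_c α]; push_cast; ring
  have hall : ∀ l ∈ chiSet m p q n,
      (∑ α ∈ Lam m n, ‖a α‖ * ∏ i, ‖z i‖ ^ α i) ≤ l * Csup p m n a := by
    intro l hl
    have h2 := hl.2 a θ (fun α _ => hθ1 α) z hz
    rw [hkey] at h2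
    rwa [Complex.norm_real, Real.norm_eq_abs,
      abs_of_nonneg (Finset.sum_nonneg fun α _ => by positivity)] at h2
  rcases eq_or_lt_of_le (Csup_nonneg (m := m) hp a) with hC | hC
  · obtain ⟨l₀, hl₀⟩ := hne
    have h2 := hall l₀ hl₀
    rw [← hC, mul_zero] at h2 ⊢
    exact h2
  · have h3 : (∑ α ∈ Lam m n, ‖a α‖ * ∏ i, ‖z i‖ ^ α i) / Csup p m n a ≤
        sInf (chiSet m p q n) :=
      le_csInf hne fun l hl => (div_le_iff₀ hC).mpr (hall l hl)
    exact (div_le_iff₀ hC).mp h3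

lemma chi_ge_one (hp : 1 ≤ p) (hq : 1 ≤ q) (hn : 1 ≤ n) (m : ℕ) :
    1 ≤ sInf (chiSet m p q n) := by
  classical
  have hne := chiSet_nonempty (n := n) hp hq m
  have hχ0 : 0 ≤ sInf (chiSet m p q n) := le_csInf hne fun l hl => hl.1.le
  set i₀ : Fin n := ⟨0, hn⟩ with hi₀
  set α₀ : Fin n → ℕ := fun i => if i = i₀ then m else 0 with hα₀def
  have hα₀ : α₀ ∈ Lam m n := by
    rw [mem_Lam, hα₀def]
    simp [Finset.sum_ite_eq']
  set z : Fin n → ℂ := fun i => if i = i₀ then 1 else 0 with hzdef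
  have hz : z ∈ lpBall q n 1 := by
    show lpNorm q z ≤ 1
    unfold lpNorm
    split_ifs with h
    · refine Real.iSup_le (fun i => ?_) zero_le_one
      by_cases hi : i = i₀ <;> simp [hzdef, hi]
    · have ht : 0 < q.toReal := toReal_pos hq h
      have hsum : (∑ i, ‖z i‖ ^ q.toReal) = 1 := by
        have : ∀ i, ‖z i‖ ^ q.toReal = if i = i₀ then 1 else 0 := by
          intro i
          by_cases hi : i = i₀ <;>
            simp [hzdef, hi, Real.zero_rpow ht.ne', Real.one_rpow]
        rw [Finset.sum_congr rfl fun i _ => this i]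
        simp [Finset.sum_ite_eq']
      rw [hsum, Real.one_rpow]
  set a : (Fin n → ℕ) → ℂ := fun α => if α = α₀ then 1 else 0 with hadef
  have hprod1 : (∏ i, ‖z i‖ ^ α₀ i) = 1 := by
    refine Finset.prod_eq_one fun i _ => ?_
    by_cases hi : i = i₀ <;> simp [hzdef, hα₀def, hi]
  have hLHS : (∑ α ∈ Lam m n, ‖a α‖ * ∏ i, ‖z i‖ ^ α i) = 1 := by
    have h1 : ∀ α, ‖a α‖ * ∏ i, ‖z i‖ ^ α i =
        if α = α₀ then ∏ i, ‖z i‖ ^ α i else 0 := by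
      intro α
      by_cases h : α = α₀ <;> simp [hadef, h]
    rw [Finset.sum_congr rfl fun α _ => h1 α, Finset.sum_ite_eq' (Lam m n) α₀,
      if_pos hα₀, hprod1]
  have hC1 : Csup p m n a ≤ 1 := by
    refine (Csup_le hp a).trans ?_
    have : ∀ α, ‖a α‖ = if α = α₀ then 1 else 0 := by
      intro α; by_cases h : α = α₀ <;> simp [hadef, h]
    rw [Finset.sum_congr rfl fun α _ => this α, Finset.sum_ite_eq' (Lam m n) α₀,
      if_pos hα₀]
  have h2 := stepC hp hq m a hz
  rw [hLHS] at h2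
  calc (1:ℝ) ≤ sInf (chiSet m p q n) * Csup p m n a := h2
    _ ≤ sInf (chiSet m p q n) * 1 := mul_le_mul_of_nonneg_left hC1 hχ0
    _ = sInf (chiSet m p q n) := mul_one _

/-- For all `1 ≤ p, q ≤ ∞` and `m, n ≥ 1`:
`K_m(B_{ℓ_p^n}, B_{ℓ_q^n}) = 1 / χ_M(𝒫(^m ℓ_p^n), 𝒫(^m ℓ_q^n))^(1/m)`. -/
theorem homBohrRadius_eq_inv_rpow_unconditionalConst (p q : ℝ≥0∞) (hp : 1 ≤ p) (hq : 1 ≤ q)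
    (m n : ℕ) (hm : 1 ≤ m) (hn : 1 ≤ n) :
    homBohrRadius m p q n = 1 / unconditionalConst m p q n ^ ((1:ℝ) / m) := by
  set χ := sInf (chiSet m p q n) with hχdef
  have hne := chiSet_nonempty (n := n) hp hq m
  have hbdd : BddBelow (chiSet m p q n) := ⟨0, fun l hl => le_of_lt hl.1⟩
  have hχ1 : 1 ≤ χ := chi_ge_one hp hq hn m
  have hχpos : 0 < χ := lt_of_lt_of_le one_pos hχ1
  have hmR : (m : ℝ) ≠ 0 := Nat.cast_ne_zero.mpr (by omega)
  set R : ℝ := 1 / χ ^ ((1:ℝ)/m) with hRdef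
  have hχm : 0 < χ ^ ((1:ℝ)/m) := Real.rpow_pos_of_pos hχpos _
  have hRpos : 0 < R := by rw [hRdef]; positivity
  have hpowχ : (χ ^ ((1:ℝ)/m)) ^ m = χ := by
    rw [← Real.rpow_natCast (χ ^ ((1:ℝ)/m)) m, ← Real.rpow_mul hχpos.le, one_div,
      inv_mul_cancel₀ hmR, Real.rpow_one]
  have hRpow : R ^ m = χ⁻¹ := by
    rw [hRdef, div_pow, one_pow, hpowχ, one_div]
  have hRmem : R ∈ KSet m p q n := by
    refine ⟨hRpos, fun a z hz => ?_⟩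
    set w : Fin n → ℂ := R⁻¹ • z with hwdef
    have hw : w ∈ lpBall q n 1 := by
      show lpNorm q w ≤ 1
      rw [hwdef, lpNorm_smul hq, abs_of_pos (inv_pos.mpr hRpos), inv_mul_le_iff₀ hRpos,
        mul_one]
      exact hz
    have hnormz : ∀ i, ‖z i‖ = R * ‖w i‖ := by
      intro i
      rw [hwdef]
      simp only [Pi.smul_apply, norm_smul, Real.norm_eq_abs,
        abs_of_pos (inv_pos.mpr hRpos)]
      field_simp
    have hsum : (∑ α ∈ Lam m n, ‖a α‖ * ∏ i, ‖z i‖ ^ α i) =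
        R ^ m * ∑ α ∈ Lam m n, ‖a α‖ * ∏ i, ‖w i‖ ^ α i := by
      rw [Finset.mul_sum]
      refine Finset.sum_congr rfl fun α hα => ?_
      rw [Finset.prod_congr rfl fun i _ => by rw [hnormz i], prod_pow_hom hα R]
      ring
    rw [hsum]
    have h1 := stepC hp hq m a hw
    calc R ^ m * ∑ α ∈ Lam m n, ‖a α‖ * ∏ i, ‖w i‖ ^ α i
        ≤ R ^ m * (χ * Csup p m n a) :=
          mul_le_mul_of_nonneg_left h1 (by positivity)
      _ = (R ^ m * χ) * Csup p m n a := (mul_assoc _ _ _).symm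
      _ = Csup p m n a := by rw [hRpow, inv_mul_cancel₀ hχpos.ne', one_mul]
  have hub : ∀ r ∈ KSet m p q n, r ≤ R := by
    intro r hr
    obtain ⟨hrpos, hrprop⟩ := hr
    have hrm : (0:ℝ) < r ^ m := pow_pos hrpos m
    have hl : (1 / r ^ m) ∈ chiSet m p q n := by
      refine ⟨by positivity, fun a θ hθ z hz => ?_⟩
      refine (norm_theta_sum_le hθ).trans ?_
      have hrz : r • z ∈ lpBall q n r := by
        show lpNorm q (r • z) ≤ r
        rw [lpNorm_smul hq, abs_of_pos hrpos]
        calc r * lpNorm q z ≤ r * 1 := mul_le_mul_of_nonneg_left hz hrpos.le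
          _ = r := mul_one r
      have h2 := hrprop a (r • z) hrz
      have h3 : (∑ α ∈ Lam m n, ‖a α‖ * ∏ i, ‖(r • z) i‖ ^ α i) =
          r ^ m * ∑ α ∈ Lam m n, ‖a α‖ * ∏ i, ‖z i‖ ^ α i := by
        rw [Finset.mul_sum]
        refine Finset.sum_congr rfl fun α hα => ?_
        have hnz : ∀ i, ‖(r • z) i‖ = r * ‖z i‖ := fun i => by
          simp [norm_smul, Real.norm_eq_abs, abs_of_pos hrpos]
        rw [Finset.prod_congr rfl fun i _ => by rw [hnz i], prod_pow_hom hα r]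
        ring
      rw [h3] at h2
      calc (∑ α ∈ Lam m n, ‖a α‖ * ∏ i, ‖z i‖ ^ α i)
          = (1 / r ^ m) * (r ^ m * ∑ α ∈ Lam m n, ‖a α‖ * ∏ i, ‖z i‖ ^ α i) := by
            field_simp
        _ ≤ (1 / r ^ m) * Csup p m n a :=
            mul_le_mul_of_nonneg_left h2 (by positivity)
    have hχle : χ ≤ 1 / r ^ m := csInf_le hbdd hl
    have h5 : χ * r ^ m ≤ 1 := (le_div_iff₀ hrm).mp hχle
    have h4 : r ^ m ≤ R ^ m := by
      rw [hRpow, ← one_div]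
      exact (le_div_iff₀ hχpos).mpr (by linarith [mul_comm χ (r ^ m)])
    exact (pow_le_pow_iff_left₀ hrpos.le hRpos.le (by omega)).mp h4
  show sSup (KSet m p q n) = R
  exact le_antisymm (csSup_le ⟨R, hRmem⟩ hub) (le_csSup ⟨R, hub⟩ hRmem)
end

section
/- (Wiener's inequality for the ℓ_p ball.) Let 1 ≤ p ≤ ∞, n ∈ ℕ, and let f be an entire function on ℂ^n with sup_{z ∈ B_{ℓ_p^n}} |f(z)| ≤ 1. Write f = Σ_{m ≥ 0} P_m where each P_m is the m-homogeneous part of the Taylor expansion of f at 0, and let a_0 = f(0). Then for every m ≥ 1, sup_{z ∈ B_{ℓ_p^n}} |P_m(z)| ≤ 1 − |a_0|². -/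
open scoped ENNReal NNReal BigOperators

section WienerAux

open Metric Set

lemma normSq_le_one_of_norm_le_one {u : ℂ} (hu : ‖u‖ ≤ 1) : u.re ^ 2 + u.im ^ 2 ≤ 1 := by
  have h : Complex.normSq u ≤ 1 := by
    rw [Complex.normSq_eq_norm_sq]
    nlinarith [norm_nonneg u, hu]
  simpa [Complex.normSq_apply, sq] using h

/-- Möbius key inequality. -/
lemma moebius_key (u v : ℂ) (hu : ‖u‖ ≤ 1) (hv : ‖v‖ ≤ 1) :
    ‖u - v‖ ≤ ‖1 - (starRingEnd ℂ) v * u‖ := by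
  have hu' := normSq_le_one_of_norm_le_one hu
  have hv' := normSq_le_one_of_norm_le_one hv
  rw [Complex.norm_def, Complex.norm_def]
  apply Real.sqrt_le_sqrt
  simp only [Complex.normSq_apply, Complex.sub_re, Complex.sub_im, Complex.mul_re,
    Complex.mul_im, Complex.one_re, Complex.one_im, Complex.conj_re, Complex.conj_im]
  nlinarith [mul_nonneg (sub_nonneg.2 hu') (sub_nonneg.2 hv'), sq_nonneg (u.re*v.im - u.im*v.re),
    sq_nonneg (u.re*v.re + u.im*v.im)]

lemma series_setup (c : ℕ → ℂ) (g : ℂ → ℂ)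
    (hg : ∀ w : ℂ, HasSum (fun k => c k * w ^ k) (g w)) :
    Differentiable ℂ g ∧ g 0 = c 0 ∧ deriv g 0 = c 1 := by
  set p : FormalMultilinearSeries ℂ ℂ ℂ := FormalMultilinearSeries.ofScalars ℂ c with hp
  have happ : ∀ (k : ℕ) (y : ℂ), (p k fun _ => y) = c k * y ^ k := by
    intro k y
    rw [hp, FormalMultilinearSeries.ofScalars_apply_eq, smul_eq_mul]
  have hcoeff : ∀ k, p.coeff k = c k := by
    intro k
    show (p k fun _ => (1 : ℂ)) = c k
    rw [happ]; simp
  have hrad : p.radius = ⊤ := by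
    apply p.radius_eq_top_of_summable_norm
    intro r
    have hs : Summable fun k => c k * ((r : ℝ) : ℂ) ^ k := (hg ((r : ℝ) : ℂ)).summable
    have h2 := (summable_norm_iff.2 hs)
    simp only [norm_mul, norm_pow, Complex.norm_real, Real.norm_eq_abs,
      abs_of_nonneg r.coe_nonneg] at h2
    refine h2.congr fun k => ?_
    rw [FormalMultilinearSeries.ofScalars_norm]
  have hball : HasFPowerSeriesOnBall g p 0 ⊤ := by
    refine ⟨by rw [hrad], by simp, fun {y} _ => ?_⟩
    have hfun : (fun k => p k fun _ => y) = fun k => c k * y ^ k := by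
      funext k; exact happ k y
    rw [hfun, zero_add]
    exact hg y
  have hdiff : Differentiable ℂ g := by
    intro x
    exact (hball.analyticAt_of_mem (by simp [edist_lt_top])).differentiableAt
  have h0 : g 0 = c 0 := by
    have h1 : HasSum (fun k => c k * (0 : ℂ) ^ k) (c 0) := by
      have := hasSum_single (f := fun k => c k * (0 : ℂ) ^ k) 0
        (fun b hb => by simp [zero_pow hb])
      simpa using this
    exact (hg 0).unique h1
  have h1 : deriv g 0 = c 1 := by
    rw [hball.hasFPowerSeriesAt.deriv]; exact hcoeff 1
  exact ⟨hdiff, h0, h1⟩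

lemma wiener_one' (c : ℕ → ℂ) (g : ℂ → ℂ)
    (hg : ∀ w : ℂ, HasSum (fun k => c k * w ^ k) (g w))
    (hb : ∀ w : ℂ, ‖w‖ ≤ 1 → ‖g w‖ ≤ 1) (hlt : ‖c 0‖ < 1) :
    ‖c 1‖ ≤ 1 - ‖c 0‖ ^ 2 := by
  obtain ⟨hdiff, h0, h1⟩ := series_setup c g hg
  set b0 : ℂ := c 0 with hb0
  set d : ℂ := (starRingEnd ℂ) b0 with hd
  have hdn : ‖d‖ < 1 := by rwa [hd, RCLike.norm_conj]
  -- denominator nonzero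
  have hden : ∀ w : ℂ, ‖w‖ ≤ 1 → 1 - d * g w ≠ 0 := by
    intro w hw h
    have h2 : ‖d * g w‖ < 1 := by
      rw [norm_mul]
      calc ‖d‖ * ‖g w‖ ≤ ‖d‖ * 1 := by
            exact mul_le_mul_of_nonneg_left (hb w hw) (norm_nonneg _)
        _ < 1 := by simpa using hdn
    have : d * g w = 1 := by linear_combination -h
    rw [this] at h2; simp at h2
  set h : ℂ → ℂ := fun w => (g w - b0) / (1 - d * g w) with hh
  have hmem : ∀ w : ℂ, w ∈ Metric.ball (0:ℂ) 1 → ‖w‖ ≤ 1 := by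
    intro w hw
    rw [Metric.mem_ball, dist_zero_right] at hw
    exact hw.le
  have hdOn : DifferentiableOn ℂ h (Metric.ball (0:ℂ) 1) := by
    apply DifferentiableOn.div
    · exact (hdiff.sub_const b0).differentiableOn
    · exact ((differentiable_const (1:ℂ)).sub ((differentiable_const d).mul hdiff)).differentiableOn
    · intro w hw; exact hden w (hmem w hw)
  have hbound : ∀ w : ℂ, ‖w‖ ≤ 1 → ‖h w‖ ≤ 1 := by
    intro w hw
    rw [hh]
    simp only [norm_div]
    rw [div_le_one_iff]
    left
    constructor
    · exact norm_pos_iff.2 (hden w hw)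
    · exact moebius_key (g w) b0 (hb w hw) hlt.le
  have hzero : h 0 = 0 := by
    rw [hh]; simp [h0, ← hb0]
  -- derivative of h at 0
  have hgd : HasDerivAt g (c 1) 0 := h1 ▸ (hdiff 0).hasDerivAt
  have hnum : HasDerivAt (fun w => g w - b0) (c 1) 0 := hgd.sub_const b0
  have hdenom : HasDerivAt (fun w => 1 - d * g w) (-(d * c 1)) 0 := by
    have := (hgd.const_mul d).const_sub 1
    simpa using this
  have hden0 : (1 : ℂ) - d * g 0 ≠ 0 := hden 0 (by simp)
  have hder : HasDerivAt h ((c 1 * (1 - d * g 0) - (g 0 - b0) * -(d * c 1)) / (1 - d * g 0) ^ 2)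
      0 := hnum.div hdenom hden0
  have hkey : 1 - d * g 0 = ((1 - ‖b0‖ ^ 2 : ℝ) : ℂ) := by
    rw [h0, hd, mul_comm, Complex.mul_conj, Complex.normSq_eq_norm_sq]
    push_cast
    ring
  have hb2 : (0:ℝ) < 1 - ‖b0‖ ^ 2 := by nlinarith [norm_nonneg b0]
  have hcast : ((1 - ‖b0‖ ^ 2 : ℝ) : ℂ) ≠ 0 := Complex.ofReal_ne_zero.2 hb2.ne'
  have hderval : deriv h 0 = c 1 / ((1 - ‖b0‖ ^ 2 : ℝ) : ℂ) := by
    rw [hder.deriv, hkey, h0, sub_self, zero_mul, sub_zero,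
      pow_two (((1 - ‖b0‖ ^ 2 : ℝ) : ℂ)), mul_div_mul_right _ _ hcast]
  -- Schwarz lemma with radius 1 + ε
  have hds : ∀ ε : ℝ, 0 < ε → ‖deriv h 0‖ ≤ 1 + ε := by
    intro ε hε
    have hmaps : Set.MapsTo h (Metric.ball (0:ℂ) 1) (Metric.ball (h 0) (1 + ε)) := by
      intro w hw
      rw [Metric.mem_ball, hzero, dist_zero_right]
      exact lt_of_le_of_lt (hbound w (hmem w hw)) (by linarith)
    have := Complex.norm_deriv_le_div_of_mapsTo_ball hdOn (hmaps.mono_right Metric.ball_subset_closedBall) one_pos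
    simpa using this
  have hds1 : ‖deriv h 0‖ ≤ 1 := le_of_forall_pos_le_add hds
  rw [hderval] at hds1
  rw [norm_div, Complex.norm_real, Real.norm_eq_abs, abs_of_pos hb2, div_le_one hb2] at hds1
  simpa using hds1

lemma wiener_one (c : ℕ → ℂ) (g : ℂ → ℂ)
    (hg : ∀ w : ℂ, HasSum (fun k => c k * w ^ k) (g w))
    (hb : ∀ w : ℂ, ‖w‖ ≤ 1 → ‖g w‖ ≤ 1) :
    ‖c 1‖ ≤ 1 - ‖c 0‖ ^ 2 := by
  obtain ⟨-, h0, -⟩ := series_setup c g hg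
  have hc0 : ‖c 0‖ ≤ 1 := h0 ▸ hb 0 (by simp)
  have key : ∀ t : ℝ, 0 < t → t < 1 → t * ‖c 1‖ ≤ 1 - t ^ 2 * ‖c 0‖ ^ 2 := by
    intro t ht0 ht1
    have hsum : ∀ w : ℂ, HasSum (fun k => ((t:ℂ) * c k) * w ^ k) ((t:ℂ) * g w) := by
      intro w
      exact ((hg w).mul_left (t:ℂ)).congr (fun k => Finset.sum_congr rfl fun x _ => by ring)
    have hbd : ∀ w : ℂ, ‖w‖ ≤ 1 → ‖(t:ℂ) * g w‖ ≤ 1 := by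
      intro w hw
      rw [norm_mul, Complex.norm_real, Real.norm_eq_abs, abs_of_pos ht0]
      calc t * ‖g w‖ ≤ t * 1 := mul_le_mul_of_nonneg_left (hb w hw) ht0.le
        _ ≤ 1 := by linarith
    have hlt : ‖(t:ℂ) * c 0‖ < 1 := by
      rw [norm_mul, Complex.norm_real, Real.norm_eq_abs, abs_of_pos ht0]
      calc t * ‖c 0‖ ≤ t * 1 := mul_le_mul_of_nonneg_left hc0 ht0.le
        _ < 1 := by linarith
    have := wiener_one' (fun k => (t:ℂ) * c k) (fun w => (t:ℂ) * g w) hsum hbd hlt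
    rw [norm_mul, norm_mul, Complex.norm_real, Real.norm_eq_abs, abs_of_pos ht0,
      mul_pow] at this
    linarith
  have l1 : Filter.Tendsto (fun t : ℝ => t * ‖c 1‖) (nhdsWithin 1 (Set.Iio 1))
      (nhds (‖c 1‖)) := by
    have hco : Continuous fun t : ℝ => t * ‖c 1‖ := by continuity
    simpa using (hco.tendsto 1).mono_left nhdsWithin_le_nhds
  have l2 : Filter.Tendsto (fun t : ℝ => 1 - t ^ 2 * ‖c 0‖ ^ 2) (nhdsWithin 1 (Set.Iio 1))
      (nhds (1 - ‖c 0‖ ^ 2)) := by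
    have hco : Continuous fun t : ℝ => 1 - t ^ 2 * ‖c 0‖ ^ 2 := by continuity
    simpa using (hco.tendsto 1).mono_left nhdsWithin_le_nhds
  refine le_of_tendsto_of_tendsto l1 l2 ?_
  filter_upwards [Ioo_mem_nhdsLT (show (0:ℝ) < 1 by norm_num)] with t ht
  exact key t ht.1 ht.2

lemma wiener_disk (c : ℕ → ℂ) (g : ℂ → ℂ)
    (hg : ∀ w : ℂ, HasSum (fun k => c k * w ^ k) (g w))
    (hb : ∀ w : ℂ, ‖w‖ ≤ 1 → ‖g w‖ ≤ 1) (m : ℕ) (hm : 1 ≤ m) :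
    ‖c m‖ ≤ 1 - ‖c 0‖ ^ 2 := by
  have hm0 : m ≠ 0 := by omega
  have hmC : (m:ℂ) ≠ 0 := Nat.cast_ne_zero.2 hm0
  have hinj : Function.Injective (fun j : ℕ => m * j) := fun a b hab => by
    simpa [hm0] using hab
  set d : ℕ → ℂ := fun j => c (m * j) with hd
  have exroot : ∀ w : ℂ, ∃ ζ : ℂ, ζ ^ m = w := fun w =>
    IsAlgClosed.exists_pow_nat_eq w (Nat.pos_of_ne_zero hm0)
  have hsm : ∀ w : ℂ, Summable (fun j => d j * w ^ j) := by
    intro w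
    obtain ⟨ζ, hζ⟩ := exroot w
    have h1 := (hg ζ).summable.comp_injective hinj
    refine h1.congr fun j => ?_
    show c (m * j) * ζ ^ (m * j) = d j * w ^ j
    rw [hd, ← hζ, ← pow_mul]
  set H : ℂ → ℂ := fun w => ∑' j, d j * w ^ j with hH'
  have hH : ∀ w, HasSum (fun j => d j * w ^ j) (H w) := fun w => (hsm w).hasSum
  have hHb : ∀ w : ℂ, ‖w‖ ≤ 1 → ‖H w‖ ≤ 1 := by
    intro w hw
    obtain ⟨ζ, hζ⟩ := exroot w
    have hζn : ‖ζ‖ ≤ 1 := by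
      by_contra hgt
      push_neg at hgt
      have h1 : 1 < ‖ζ‖ ^ m := one_lt_pow₀ hgt hm0
      rw [← norm_pow, hζ] at h1
      linarith
    set ω : ℂ := Complex.exp (2 * Real.pi * Complex.I / m) with hω'
    have hω : IsPrimitiveRoot ω m := Complex.isPrimitiveRoot_exp m hm0
    have hωabs : ‖ω‖ = 1 := by
      rw [hω', show (2 * Real.pi * Complex.I / m) = ((2 * Real.pi / m : ℝ) : ℂ) * Complex.I by
        push_cast; ring]
      exact Complex.norm_exp_ofReal_mul_I _
    have hωn : ∀ k : ℕ, ‖ω ^ k * ζ‖ ≤ 1 := by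
      intro k
      rw [norm_mul, norm_pow, hωabs, one_pow, one_mul]
      exact hζn
    set S : ℂ := ∑ k ∈ Finset.range m, g (ω ^ k * ζ) with hS'
    have heval : ∀ j : ℕ, (∑ k ∈ Finset.range m, (ω ^ j) ^ k) = if m ∣ j then (m:ℂ) else 0 := by
      intro j
      by_cases hdvd : m ∣ j
      · rw [if_pos hdvd, (hω.pow_eq_one_iff_dvd j).2 hdvd]
        simp
      · rw [if_neg hdvd]
        have hne : ω ^ j ≠ 1 := fun h => hdvd ((hω.pow_eq_one_iff_dvd j).1 h)
        rw [geom_sum_eq hne]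
        have hone : (ω ^ j) ^ m = 1 := by
          rw [← pow_mul, mul_comm, pow_mul, hω.pow_eq_one, one_pow]
        rw [hone]
        simp
    have sums : HasSum (fun j => (if m ∣ j then (m:ℂ) else 0) * (c j * ζ ^ j)) S := by
      have h2 := hasSum_sum (s := Finset.range m)
        (f := fun k (j : ℕ) => c j * (ω ^ k * ζ) ^ j) (a := fun k => g (ω ^ k * ζ))
        (fun k _ => hg (ω ^ k * ζ))
      refine h2.congr_fun fun j => ?_
      rw [← heval j, Finset.sum_mul]
      refine Finset.sum_congr rfl fun k _ => ?_
      show (ω ^ j) ^ k * (c j * ζ ^ j) = c j * (ω ^ k * ζ) ^ j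
      rw [mul_pow, ← pow_mul, ← pow_mul, mul_comm j k]
      ring
    have hvanish : ∀ x ∉ Set.range (fun j : ℕ => m * j),
        (if m ∣ x then (m:ℂ) else 0) * (c x * ζ ^ x) = 0 := by
      intro x hx
      rw [if_neg, zero_mul]
      rintro ⟨y, rfl⟩
      exact hx ⟨y, rfl⟩
    have sums2 : HasSum (fun j : ℕ => (m:ℂ) * (d j * w ^ j)) S := by
      have h3 := (hinj.hasSum_iff hvanish).2 sums
      refine h3.congr_fun fun j => ?_
      show (m:ℂ) * (d j * w ^ j) = (if m ∣ m * j then (m:ℂ) else 0) * (c (m * j) * ζ ^ (m * j))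
      rw [if_pos ⟨j, rfl⟩, ← hζ, ← pow_mul]
    have sums3 : HasSum (fun j : ℕ => d j * w ^ j) ((m:ℂ)⁻¹ * S) := by
      refine (sums2.mul_left ((m:ℂ)⁻¹)).congr_fun fun j => ?_
      rw [← mul_assoc, inv_mul_cancel₀ hmC, one_mul]
    have hHw : H w = (m:ℂ)⁻¹ * S := (hH w).unique sums3
    rw [hHw, norm_mul, norm_inv]
    have hSle : ‖S‖ ≤ m := by
      rw [hS']
      calc ‖∑ k ∈ Finset.range m, g (ω ^ k * ζ)‖ ≤ ∑ k ∈ Finset.range m, ‖g (ω ^ k * ζ)‖ :=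
            norm_sum_le _ _
        _ ≤ ∑ _k ∈ Finset.range m, 1 := Finset.sum_le_sum fun k _ => hb _ (hωn k)
        _ = m := by simp
    have hmn : ‖(m:ℂ)‖ = (m:ℝ) := by simp
    rw [hmn]
    have hmpos : (0:ℝ) < m := by exact_mod_cast Nat.pos_of_ne_zero hm0
    rw [inv_mul_le_iff₀ hmpos, mul_one]
    exact hSle
  have := wiener_one d H hH hHb
  simpa [hd] using this

lemma lpNorm_mul_le (p : ℝ≥0∞) {n : ℕ} (w : ℂ) (hw : ‖w‖ ≤ 1) (z : Fin n → ℂ) :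
    lpNorm p (fun i => w * z i) ≤ lpNorm p z := by
  unfold lpNorm
  have hterm : ∀ i, ‖w * z i‖ ≤ ‖z i‖ := fun i => by
    rw [norm_mul]; exact mul_le_of_le_one_left (norm_nonneg _) hw
  split_ifs
  · cases isEmpty_or_nonempty (Fin n) with
    | inl h => rw [iSup_of_empty', iSup_of_empty']
    | inr h =>
      exact ciSup_mono (Set.Finite.bddAbove (Set.finite_range _)) fun i => hterm i
  · have ht : 0 ≤ p.toReal := ENNReal.toReal_nonneg
    refine Real.rpow_le_rpow (Finset.sum_nonneg fun i _ =>
      Real.rpow_nonneg (norm_nonneg _) _) ?_ (by positivity)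
    exact Finset.sum_le_sum fun i _ => Real.rpow_le_rpow (norm_nonneg _) (hterm i) ht

end WienerAux

/-- Wiener's inequality for the `ℓ_p` ball: if `f` is entire on `ℂ^n` with monomial
coefficients `a`, and `|f| ≤ 1` on `B_{ℓ_p^n}`, then for each `m ≥ 1` the `m`-homogeneous
part `P_m` of `f` satisfies `sup_{B_{ℓ_p^n}} |P_m| ≤ 1 - |f(0)|²`. -/
theorem wiener_inequality (p : ℝ≥0∞) (hp : 1 ≤ p) (n : ℕ)
    (f : (Fin n → ℂ) → ℂ) (a : (Fin n → ℕ) → ℂ)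
    (hexp : ∀ z : Fin n → ℂ, HasSum (fun α : Fin n → ℕ => a α * ∏ i, z i ^ α i) (f z))
    (hbd : ∀ z ∈ lpBall p n 1, ‖f z‖ ≤ 1)
    (m : ℕ) (hm : 1 ≤ m) :
    ∀ z ∈ lpBall p n 1,
      ‖∑ α ∈ Lam m n, a α * ∏ i, z i ^ α i‖ ≤ 1 - ‖a 0‖ ^ 2 := by
  intro z hz
  set c : ℕ → ℂ := fun k => ∑ α ∈ Lam k n, a α * ∏ i, z i ^ α i with hc
  set g : ℂ → ℂ := fun w => f (fun i => w * z i) with hgdef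
  set deg : (Fin n → ℕ) → ℕ := fun α => ∑ i, α i with hdeg
  haveI inst : ∀ k, Fintype {α : Fin n → ℕ // deg α = k} := fun k =>
    Fintype.ofFinset (Lam k n) (fun α => Finset.Nat.mem_antidiagonalTuple)
  have hgsum : ∀ w : ℂ, HasSum (fun k => c k * w ^ k) (g w) := by
    intro w
    have h1 := hexp (fun i => w * z i)
    have h2 : ∀ α : Fin n → ℕ,
        a α * ∏ i, (w * z i) ^ α i = (a α * ∏ i, z i ^ α i) * w ^ deg α := by
      intro α
      simp_rw [mul_pow]
      rw [Finset.prod_mul_distrib, Finset.prod_pow_eq_pow_sum]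
      ring
    set F : (Fin n → ℕ) → ℂ := fun α => (a α * ∏ i, z i ^ α i) * w ^ deg α with hF
    have h3 : HasSum (F ∘ (Equiv.sigmaFiberEquiv deg)) (g w) := by
      rw [Equiv.hasSum_iff]
      exact h1.congr_fun fun α => (h2 α).symm
    have h4 := HasSum.sigma h3 (fun k =>
      hasSum_fintype (fun x : {α : Fin n → ℕ // deg α = k} =>
        F ((Equiv.sigmaFiberEquiv deg) ⟨k, x⟩)))
    have h5 : (fun k => ∑ x : {α : Fin n → ℕ // deg α = k},
        F ((Equiv.sigmaFiberEquiv deg) ⟨k, x⟩)) = fun k => c k * w ^ k := by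
      funext k
      have hmem : ∀ α : Fin n → ℕ, α ∈ Lam k n ↔ deg α = k := fun α =>
        Finset.Nat.mem_antidiagonalTuple
      calc ∑ x : {α : Fin n → ℕ // deg α = k}, F ((Equiv.sigmaFiberEquiv deg) ⟨k, x⟩)
          = ∑ x : {α : Fin n → ℕ // deg α = k}, (a x.1 * ∏ i, z i ^ x.1 i) * w ^ k := by
            refine Finset.sum_congr rfl fun x _ => ?_
            show F x.1 = _
            rw [hF]
            simp only []
            rw [x.2]
        _ = ∑ α ∈ Lam k n, (a α * ∏ i, z i ^ α i) * w ^ k :=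
            (Finset.sum_subtype (Lam k n) hmem
              (fun α => (a α * ∏ i, z i ^ α i) * w ^ k)).symm
        _ = c k * w ^ k := by rw [hc, Finset.sum_mul]
    rw [← h5]
    exact h4
  have hgb : ∀ w : ℂ, ‖w‖ ≤ 1 → ‖g w‖ ≤ 1 := by
    intro w hw
    refine hbd _ ?_
    show lpNorm p (fun i => w * z i) ≤ 1
    exact le_trans (lpNorm_mul_le p w hw z) hz
  have hres := wiener_disk c g hgsum hgb m hm
  have hc0 : c 0 = a 0 := by
    rw [hc]
    show ∑ α ∈ Lam 0 n, a α * ∏ i, z i ^ α i = a 0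
    rw [Lam, Finset.Nat.antidiagonalTuple_zero_right, Finset.sum_singleton]
    simp
  rw [hc0] at hres
  exact hres
end

section
/- Let 1 < q ≤ p ≤ 2, with conjugate exponents p', q'. There exists a constant C > 0 (depending only on p and q) such that for all m, n ∈ ℕ with n ≥ 2 and m ≥ (log n)^{q'/p'}, one has ( Σ_{α ∈ Λ(m−1,n)} ((m−1)!/α!)^{(1/p − 1/q) q'} )^{1/q'} ≤ C^m · n^{m/q'} / (log n)^{m/p'}. -/
open scoped ENNReal NNReal BigOperators

section Aux
open Finset

lemma auxA (K : ℕ) : ((K:ℝ)+1) ^ K ≤ Real.exp 1 * (K:ℝ) ^ K := by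
  rcases Nat.eq_zero_or_pos K with h | h
  · subst h; simpa using Real.one_le_exp (by norm_num)
  · have hK : (0:ℝ) < K := by exact_mod_cast h
    have h1 : (K:ℝ) + 1 ≤ K * Real.exp (1/K) := by
      have h2 := Real.add_one_le_exp (1/(K:ℝ))
      have h3 : (K:ℝ) * (1/K + 1) ≤ K * Real.exp (1/K) :=
        mul_le_mul_of_nonneg_left h2 hK.le
      calc (K:ℝ)+1 = K * (1/K + 1) := by field_simp; ring
        _ ≤ K * Real.exp (1/K) := h3
    calc ((K:ℝ)+1)^K ≤ ((K:ℝ) * Real.exp (1/K))^K := by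
          exact pow_le_pow_left₀ (by positivity) h1 K
      _ = (K:ℝ)^K * Real.exp (1/K)^K := mul_pow _ _ _
      _ = (K:ℝ)^K * Real.exp 1 := by
          rw [← Real.exp_nat_mul]
          congr 1
          field_simp
      _ = Real.exp 1 * (K:ℝ)^K := mul_comm _ _

lemma auxB (K : ℕ) : (K:ℝ)^K ≤ Real.exp 1 ^ K * (K.factorial : ℝ) := by
  induction K with
  | zero => simp
  | succ K ih =>
    have h1 : (((K:ℕ)+1 : ℕ):ℝ)^(K+1) = ((K:ℝ)+1) * ((K:ℝ)+1)^K := by push_cast; ring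
    calc (((K:ℕ)+1 : ℕ):ℝ)^(K+1) = ((K:ℝ)+1) * ((K:ℝ)+1)^K := h1
      _ ≤ ((K:ℝ)+1) * (Real.exp 1 * (K:ℝ)^K) := by
          have := auxA K
          gcongr
      _ ≤ ((K:ℝ)+1) * (Real.exp 1 * (Real.exp 1 ^ K * (K.factorial : ℝ))) := by
          have h := Real.exp_pos 1
          gcongr
      _ = Real.exp 1 ^ (K+1) * (((K:ℕ)+1).factorial : ℝ) := by
          rw [Nat.factorial_succ]; push_cast; ring

lemma auxC (N K : ℕ) : N.choose K ≤ 2 ^ N := by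
  rcases le_or_gt K N with h | h
  · calc N.choose K ≤ ∑ i ∈ Finset.range (N+1), N.choose i :=
        Finset.single_le_sum (f := fun i => N.choose i) (fun i _ => Nat.zero_le _)
          (Finset.mem_range.2 (Nat.lt_succ_of_le h))
    _ = 2^N := Nat.sum_range_choose N
  · rw [Nat.choose_eq_zero_of_lt h]; exact Nat.zero_le _

lemma auxCard (M n : ℕ) : (Finset.Nat.antidiagonalTuple n M).card ≤ (n + M - 1).choose M := by
  classical
  rw [← Nat.multichoose_eq]
  have hcard : Nat.multichoose n M = Fintype.card (Sym (Fin n) M) := by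
    rw [Sym.card_sym_eq_multichoose, Fintype.card_fin]
  rw [hcard, ← Finset.card_univ,
    ← Finset.card_map (s := (Finset.univ : Finset (Sym (Fin n) M))) ⟨(Subtype.val : Sym (Fin n) M → Multiset (Fin n)), Subtype.val_injective⟩]
  refine Finset.card_le_card_of_injOn (fun α => ∑ i, Multiset.replicate (α i) i) ?_ ?_
  · intro α hα
    rw [Finset.mem_coe, Finset.Nat.mem_antidiagonalTuple] at hα
    have hc : Multiset.card (∑ i, Multiset.replicate (α i) i) = M := by
      let c : Multiset (Fin n) →+ ℕ := ⟨⟨Multiset.card, Multiset.card_zero⟩, Multiset.card_add⟩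
      show c (∑ i, Multiset.replicate (α i) i) = M
      rw [map_sum c]
      simpa [c] using hα
    exact Finset.mem_map_of_mem _ (Finset.mem_univ (Sym.mk _ hc))
  · intro α hα β hβ h
    funext j
    have h2 := congrArg (Multiset.count j) h
    simp only [Multiset.count_sum', Multiset.count_replicate] at h2
    simpa using h2

end Aux

/-- For `1 < q ≤ p ≤ 2` with conjugate exponents `p'`, `q'`, there is `C > 0` such that
for `n ≥ 2` and `m ≥ (log n)^(q'/p')`:
`(Σ_{α ∈ Λ(m−1,n)} ((m−1)!/α!)^((1/p − 1/q) q'))^(1/q') ≤ C^m n^(m/q') / (log n)^(m/p')`. -/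
theorem sum_multinomial_bound_large_m (p q p' q' : ℝ) (hq : 1 < q) (hqp : q ≤ p) (hp : p ≤ 2)
    (hp' : 1/p + 1/p' = 1) (hq' : 1/q + 1/q' = 1) :
    ∃ C : ℝ, 0 < C ∧ ∀ m n : ℕ, 2 ≤ n → 1 ≤ m →
      Real.log n ^ (q'/p') ≤ (m : ℝ) →
      (∑ α ∈ Lam (m-1) n,
          (((m-1).factorial : ℝ) / ∏ i, ((α i).factorial : ℝ)) ^ ((1/p - 1/q) * q'))
          ^ ((1:ℝ)/q')
        ≤ C ^ m * (n : ℝ) ^ ((m : ℝ)/q') / Real.log n ^ ((m : ℝ)/p') := by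
  have hq0 : 0 < q := lt_trans one_pos hq
  have hp1 : 1 < p := hq.trans_le hqp
  have hp0 : 0 < p := lt_trans one_pos hp1
  have hp'pos : 0 < p' := by
    have h1 : 0 < 1/p' := by
      have : 1/p < 1 := by rw [div_lt_one hp0]; exact hp1
      linarith
    exact one_div_pos.mp h1
  have hq'pos : 0 < q' := by
    have h1 : 0 < 1/q' := by
      have : 1/q < 1 := by rw [div_lt_one hq0]; exact hq
      linarith
    exact one_div_pos.mp h1
  have hq'1 : 1 ≤ q' := by
    have h1 : 1/q' < 1 := by
      have : 0 < 1/q := by positivity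
      linarith
    exact le_of_lt ((div_lt_one hq'pos).mp h1)
  have hipq : 1/p ≤ 1/q := one_div_le_one_div_of_le hq0 hqp
  have hpq' : p' ≤ q' := by
    have h1 : 1/q' ≤ 1/p' := by linarith
    exact le_of_one_div_le_one_div hq'pos h1
  set k : ℝ := q'/p' with hk
  have hk1 : 1 ≤ k := (one_le_div hp'pos).mpr hpq'
  have hk0 : 0 < k := lt_of_lt_of_le one_pos hk1
  have he1 : (1:ℝ) ≤ Real.exp 1 := Real.one_le_exp zero_le_one
  have hkk1 : (1:ℝ) ≤ k ^ k := Real.one_le_rpow hk1 hk0.le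
  set C : ℝ := 4 * Real.exp 1 * k ^ k with hC
  have hC1 : 1 ≤ C := by nlinarith
  have hC0 : 0 < C := lt_of_lt_of_le one_pos hC1
  refine ⟨C, hC0, ?_⟩
  intro m n hn2 hm1 hmlog
  set M : ℕ := m - 1 with hM
  have hmM : m = M + 1 := by omega
  set L : ℝ := Real.log n with hLdef
  have hn1 : (1:ℝ) < n := by exact_mod_cast lt_of_lt_of_le one_lt_two (by exact_mod_cast hn2)
  have hnpos : (0:ℝ) < n := lt_trans one_pos hn1
  have hL : 0 < L := Real.log_pos hn1
  set S : ℝ := ∑ α ∈ Lam M n,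
      (((M).factorial : ℝ) / ∏ i, ((α i).factorial : ℝ)) ^ ((1/p - 1/q) * q') with hSdef
  have hS0 : 0 ≤ S := Finset.sum_nonneg fun α _ => Real.rpow_nonneg (by positivity) _
  have ht : (1/p - 1/q) * q' ≤ 0 :=
    mul_nonpos_iff.mpr (Or.inr ⟨by linarith, hq'pos.le⟩)
  -- Step 1 : each term is ≤ 1
  have hSle : S ≤ ((Lam M n).card : ℝ) := by
    have hterm : ∀ α ∈ Lam M n,
        (((M).factorial : ℝ) / ∏ i, ((α i).factorial : ℝ)) ^ ((1/p - 1/q) * q') ≤ 1 := by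
      intro α hα
      have hsum : ∑ i, α i = M := Finset.Nat.mem_antidiagonalTuple.mp hα
      have hdvd : (∏ i, (α i).factorial) ∣ M.factorial := by
        rw [← hsum]; exact Nat.prod_factorial_dvd_factorial_sum _ _
      have hprodpos : 0 < (∏ i, ((α i).factorial : ℝ)) := by positivity
      have hle : (∏ i, ((α i).factorial : ℝ)) ≤ (M.factorial : ℝ) := by
        have h2 := Nat.le_of_dvd (Nat.factorial_pos M) hdvd
        exact_mod_cast h2
      have h1 : (1:ℝ) ≤ (M.factorial : ℝ) / ∏ i, ((α i).factorial : ℝ) :=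
        (one_le_div hprodpos).mpr hle
      exact Real.rpow_le_one_of_one_le_of_nonpos h1 ht
    calc S ≤ ∑ α ∈ Lam M n, (1:ℝ) := Finset.sum_le_sum hterm
      _ = ((Lam M n).card : ℝ) := by simp
  -- Step 2 : cardinality bound
  set μ : ℕ := min m n with hμ
  have hμpos : (0:ℝ) < μ := by
    have : 1 ≤ μ := le_min hm1 (le_trans one_le_two hn2)
    exact_mod_cast this
  have key2 : ((Lam M n).card : ℝ) * (μ:ℝ)^m ≤ (4 * Real.exp 1)^m * (n:ℝ)^m := by
    have hcard := auxCard M n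
    rcases le_total m n with hmn | hnm
    · -- m ≤ n : μ = m
      have hμm : (μ:ℕ) = m := min_eq_left hmn
      set N' : ℕ := n + M - 1 with hN'
      have hN2n : (N' : ℝ) ≤ 2 * n := by
        have : N' ≤ 2 * n := by omega
        exact_mod_cast this
      have hc1 : ((N'.choose M : ℝ)) * (M:ℝ)^M ≤ Real.exp 1 ^ M * (N':ℝ)^M := by
        have h1 : (N'.choose M : ℝ) ≤ (N':ℝ)^M / (M.factorial : ℝ) :=
          Nat.choose_le_pow_div M N'
        have h2 := auxB M
        have hfp : (0:ℝ) < (M.factorial : ℝ) := by positivity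
        calc ((N'.choose M : ℝ)) * (M:ℝ)^M
            ≤ ((N':ℝ)^M / (M.factorial : ℝ)) * (Real.exp 1 ^ M * (M.factorial : ℝ)) := by
              apply mul_le_mul h1 h2 (by positivity) (by positivity)
          _ = Real.exp 1 ^ M * (N':ℝ)^M := by field_simp
      have hc2 : ((m:ℝ))^m ≤ (2:ℝ)^m * Real.exp 1 * (M:ℝ)^M := by
        have h3 : ((m:ℝ)) ≤ (2:ℝ)^m := by
          have := Nat.lt_two_pow_self (n := m)
          exact_mod_cast this.le
        have h4 : ((M:ℝ)+1)^M ≤ Real.exp 1 * (M:ℝ)^M := auxA M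
        calc ((m:ℝ))^m = ((M:ℝ)+1)^(M+1) := by rw [hmM]; push_cast; ring
          _ = ((M:ℝ)+1) * ((M:ℝ)+1)^M := by ring
          _ ≤ (2:ℝ)^m * (Real.exp 1 * (M:ℝ)^M) := by
              apply mul_le_mul _ h4 (by positivity) (by positivity)
              · calc ((M:ℝ)+1) = (m:ℝ) := by rw [hmM]; push_cast; ring
                  _ ≤ (2:ℝ)^m := h3
          _ = (2:ℝ)^m * Real.exp 1 * (M:ℝ)^M := by ring
      have hcardR : ((Lam M n).card : ℝ) ≤ (N'.choose M : ℝ) := by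
        exact_mod_cast hcard
      have hMm : (M:ℝ)^M * 1 ≤ (M:ℝ)^M := by simp
      -- combine
      have hmain : ((Lam M n).card : ℝ) * ((m:ℝ))^m
          ≤ (2:ℝ)^m * Real.exp 1 * (Real.exp 1 ^ M * (N':ℝ)^M) := by
        calc ((Lam M n).card : ℝ) * ((m:ℝ))^m
            ≤ (N'.choose M : ℝ) * ((2:ℝ)^m * Real.exp 1 * (M:ℝ)^M) := by
              apply mul_le_mul hcardR hc2 (by positivity) (by positivity)
          _ = (2:ℝ)^m * Real.exp 1 * ((N'.choose M : ℝ) * (M:ℝ)^M) := by ring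
          _ ≤ (2:ℝ)^m * Real.exp 1 * (Real.exp 1 ^ M * (N':ℝ)^M) := by
              apply mul_le_mul_of_nonneg_left hc1 (by positivity)
      have hfin : (2:ℝ)^m * Real.exp 1 * (Real.exp 1 ^ M * (N':ℝ)^M)
          ≤ (4 * Real.exp 1)^m * (n:ℝ)^m := by
        have hNle : (N':ℝ)^M ≤ (2:ℝ)^M * (n:ℝ)^M := by
          calc (N':ℝ)^M ≤ (2*n:ℝ)^M := by
                apply pow_le_pow_left₀ (by positivity) hN2n
            _ = (2:ℝ)^M * (n:ℝ)^M := mul_pow _ _ _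
        have h2M : (2:ℝ)^M ≤ (2:ℝ)^m := by
          apply pow_le_pow_right₀ one_le_two (by omega)
        have hnM : (n:ℝ)^M ≤ (n:ℝ)^m := by
          apply pow_le_pow_right₀ hn1.le (by omega)
        have heM : Real.exp 1 * Real.exp 1 ^ M = Real.exp 1 ^ m := by
          rw [hmM]; ring
        calc (2:ℝ)^m * Real.exp 1 * (Real.exp 1 ^ M * (N':ℝ)^M)
            = (2:ℝ)^m * Real.exp 1 ^ m * (N':ℝ)^M := by rw [← heM]; ring
          _ ≤ (2:ℝ)^m * Real.exp 1 ^ m * ((2:ℝ)^M * (n:ℝ)^M) := by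
              apply mul_le_mul_of_nonneg_left hNle (by positivity)
          _ ≤ (2:ℝ)^m * Real.exp 1 ^ m * ((2:ℝ)^m * (n:ℝ)^m) := by
              apply mul_le_mul_of_nonneg_left _ (by positivity)
              apply mul_le_mul h2M hnM (by positivity) (by positivity)
          _ = (4 * Real.exp 1)^m * (n:ℝ)^m := by
              rw [mul_pow]
              have : (4:ℝ)^m = (2:ℝ)^m * (2:ℝ)^m := by
                rw [← mul_pow]; norm_num
              rw [this]; ring
      rw [hμm]
      exact le_trans hmain hfin
    · -- n ≤ m : μ = n
      have hμn : (μ:ℕ) = n := min_eq_right hnm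
      have h4 : ((Lam M n).card : ℝ) ≤ (4:ℝ)^m := by
        have h5 : (Lam M n).card ≤ 2 ^ (n + M - 1) := le_trans hcard (auxC _ _)
        have h6 : 2 ^ (n + M - 1) ≤ 2 ^ (2*m) := by
          apply Nat.pow_le_pow_right (by norm_num) (by omega)
        have h7 : ((Lam M n).card : ℝ) ≤ ((2:ℝ))^(2*m) := by
          have := le_trans h5 h6
          exact_mod_cast this
        calc ((Lam M n).card : ℝ) ≤ ((2:ℝ))^(2*m) := h7
          _ = (4:ℝ)^m := by rw [pow_mul]; norm_num
      rw [hμn]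
      calc ((Lam M n).card : ℝ) * (n:ℝ)^m ≤ (4:ℝ)^m * (n:ℝ)^m := by
            apply mul_le_mul_of_nonneg_right h4 (by positivity)
        _ ≤ (4 * Real.exp 1)^m * (n:ℝ)^m := by
            apply mul_le_mul_of_nonneg_right _ (by positivity)
            apply pow_le_pow_left₀ (by norm_num)
            nlinarith
  -- Step 3 : logarithm bound
  have key3 : L ^ ((m:ℝ) * k) ≤ (k ^ k * (μ:ℝ))^m := by
    have hbase : L ^ k ≤ k ^ k * (μ:ℝ) := by
      rcases le_total m n with hmn | hnm
      · have hμm : (μ:ℕ) = m := min_eq_left hmn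
        rw [hμm]
        calc L ^ k ≤ (m:ℝ) := hmlog
          _ = 1 * (m:ℝ) := (one_mul _).symm
          _ ≤ k ^ k * (m:ℝ) := by
              apply mul_le_mul_of_nonneg_right hkk1 (by positivity)
      · have hμn : (μ:ℕ) = n := min_eq_right hnm
        rw [hμn]
        have hLle : L ≤ k * (n:ℝ) ^ (1/k) := by
          have h1 : Real.log ((n:ℝ) ^ (1/k)) = (1/k) * L := Real.log_rpow hnpos _
          have h2 : Real.log ((n:ℝ) ^ (1/k)) ≤ (n:ℝ) ^ (1/k) :=
            Real.log_le_self (by positivity)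
          have h3 : L = k * Real.log ((n:ℝ) ^ (1/k)) := by
            rw [h1]; field_simp
          rw [h3]
          apply mul_le_mul_of_nonneg_left h2 hk0.le
        calc L ^ k ≤ (k * (n:ℝ) ^ (1/k)) ^ k :=
              Real.rpow_le_rpow hL.le hLle hk0.le
          _ = k ^ k * ((n:ℝ) ^ (1/k)) ^ k := Real.mul_rpow hk0.le (by positivity)
          _ = k ^ k * (n:ℝ) := by
              rw [← Real.rpow_mul hnpos.le]
              congr 1
              rw [one_div_mul_cancel (ne_of_gt hk0), Real.rpow_one]
    calc L ^ ((m:ℝ) * k) = L ^ (k * (m:ℝ)) := by rw [mul_comm]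
      _ = (L ^ k) ^ ((m:ℝ)) := Real.rpow_mul hL.le _ _
      _ = (L ^ k) ^ m := Real.rpow_natCast _ m
      _ ≤ (k ^ k * (μ:ℝ))^m := by
          apply pow_le_pow_left₀ (Real.rpow_nonneg hL.le _) hbase
  -- Step 4 : combine
  have key : S * L ^ ((m:ℝ) * k) ≤ (C ^ q')^m * (n:ℝ)^m := by
    have h1 : S * L ^ ((m:ℝ) * k) ≤ ((Lam M n).card : ℝ) * (k ^ k * (μ:ℝ))^m := by
      apply mul_le_mul hSle key3 (Real.rpow_nonneg hL.le _) (Nat.cast_nonneg _)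
    have h2 : ((Lam M n).card : ℝ) * (k ^ k * (μ:ℝ))^m ≤ C^m * (n:ℝ)^m := by
      calc ((Lam M n).card : ℝ) * (k ^ k * (μ:ℝ))^m
          = (((Lam M n).card : ℝ) * (μ:ℝ)^m) * (k^k)^m := by rw [mul_pow]; ring
        _ ≤ ((4 * Real.exp 1)^m * (n:ℝ)^m) * (k^k)^m := by
            apply mul_le_mul_of_nonneg_right key2 (by positivity)
        _ = C^m * (n:ℝ)^m := by rw [hC, mul_pow, mul_pow]; ring
    have h3 : C^m * (n:ℝ)^m ≤ (C ^ q')^m * (n:ℝ)^m := by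
      apply mul_le_mul_of_nonneg_right _ (by positivity)
      apply pow_le_pow_left₀ hC0.le
      calc C = C ^ (1:ℝ) := (Real.rpow_one C).symm
        _ ≤ C ^ q' := Real.rpow_le_rpow_of_exponent_le hC1 hq'1
    exact le_trans (le_trans h1 h2) h3
  -- Step 5 : conclude
  rw [le_div_iff₀ (Real.rpow_pos_of_pos hL ((m:ℝ)/p'))]
  have hp'ne : p' ≠ 0 := ne_of_gt hp'pos
  have hq'ne : q' ≠ 0 := ne_of_gt hq'pos
  have e1 : (S * L ^ ((m:ℝ) * k)) ^ ((1:ℝ)/q') = S ^ ((1:ℝ)/q') * L ^ ((m:ℝ)/p') := by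
    have hexp : ((m:ℝ) * k) * (1/q') = (m:ℝ)/p' := by
      rw [hk]; field_simp
    rw [Real.mul_rpow hS0 (Real.rpow_nonneg hL.le _), ← Real.rpow_mul hL.le, hexp]
  have e2 : ((C ^ q')^m * (n:ℝ)^m) ^ ((1:ℝ)/q') = C^m * (n:ℝ)^((m:ℝ)/q') := by
    rw [Real.mul_rpow (by positivity) (by positivity)]
    congr 1
    · rw [← Real.rpow_natCast (C ^ q') m, ← Real.rpow_mul hC0.le, ← Real.rpow_mul hC0.le]
      rw [show q' * (m:ℝ) * (1/q') = (m:ℝ) by field_simp]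
      exact Real.rpow_natCast C m
    · rw [← Real.rpow_natCast (n:ℝ) m, ← Real.rpow_mul hnpos.le, mul_one_div]
  calc S ^ ((1:ℝ)/q') * L ^ ((m:ℝ)/p') = (S * L ^ ((m:ℝ)*k)) ^ ((1:ℝ)/q') := e1.symm
    _ ≤ ((C ^ q')^m * (n:ℝ)^m) ^ ((1:ℝ)/q') := by
        apply Real.rpow_le_rpow (mul_nonneg hS0 (Real.rpow_nonneg hL.le _)) key (by positivity)
    _ = C^m * (n:ℝ)^((m:ℝ)/q') := e2
end

section
/- Let 1 < q ≤ p ≤ 2, with conjugate exponents p', q', and set β = q'(1/q − 1/p). There exists a constant C > 0 (depending only on p and q) such that for all m, n ∈ ℕ with n large enough and m ≤ log(n) / (β · log log(n)), one has ( Σ_{α ∈ Λ(m−1,n)} ((m−1)!/α!)^{(1/p − 1/q) q'} )^{1/q'} ≤ C^m · n^{m/q'} / (log n)^{m/p'}. -/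
open scoped ENNReal NNReal BigOperators

/-! ### Auxiliary lemmas -/

private lemma aux_pow_self_le_factorial_mul_exp :
    ∀ M : ℕ, (M : ℝ) ^ M ≤ (M.factorial : ℝ) * Real.exp M := by
  intro M
  induction M with
  | zero => simp
  | succ M ih =>
    have hstep : ((M : ℝ) + 1) ^ M ≤ (M : ℝ) ^ M * Real.exp 1 := by
      rcases Nat.eq_zero_or_pos M with h0 | hMpos
      · subst h0
        simp only [Nat.cast_zero, zero_add, pow_zero, one_pow, one_mul]
        linarith [Real.add_one_le_exp (1 : ℝ)]
      · have hM0 : (0 : ℝ) < M := by exact_mod_cast hMpos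
        have h1 : (M : ℝ) + 1 ≤ (M : ℝ) * Real.exp (1 / (M : ℝ)) := by
          have h2 := Real.add_one_le_exp (1 / (M : ℝ))
          have h3 : (M : ℝ) + 1 = (M : ℝ) * (1 / (M : ℝ) + 1) := by field_simp; ring
          rw [h3]
          exact mul_le_mul_of_nonneg_left h2 hM0.le
        calc ((M : ℝ) + 1) ^ M ≤ ((M : ℝ) * Real.exp (1 / (M : ℝ))) ^ M :=
              pow_le_pow_left₀ (by positivity) h1 M
          _ = (M : ℝ) ^ M * (Real.exp (1 / (M : ℝ))) ^ M := mul_pow _ _ _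
          _ = (M : ℝ) ^ M * Real.exp ((M : ℝ) * (1 / (M : ℝ))) := by
              rw [← Real.exp_nat_mul]
          _ = (M : ℝ) ^ M * Real.exp 1 := by
              rw [mul_one_div, div_self (ne_of_gt hM0)]
    have hfact : ((M + 1).factorial : ℝ) = ((M : ℝ) + 1) * (M.factorial : ℝ) := by
      rw [Nat.factorial_succ]; push_cast; ring
    have hcast : ((M + 1 : ℕ) : ℝ) = (M : ℝ) + 1 := by push_cast; ring
    rw [hcast, hfact]
    calc ((M : ℝ) + 1) ^ (M + 1) = ((M : ℝ) + 1) ^ M * ((M : ℝ) + 1) := pow_succ _ _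
      _ ≤ ((M : ℝ) ^ M * Real.exp 1) * ((M : ℝ) + 1) :=
          mul_le_mul_of_nonneg_right hstep (by positivity)
      _ ≤ (((M.factorial : ℝ)) * Real.exp M * Real.exp 1) * ((M : ℝ) + 1) := by
          have h4 : (M : ℝ) ^ M * Real.exp 1 ≤ (M.factorial : ℝ) * Real.exp M * Real.exp 1 :=
            mul_le_mul_of_nonneg_right ih (Real.exp_pos 1).le
          exact mul_le_mul_of_nonneg_right h4 (by positivity)
      _ = ((M : ℝ) + 1) * (M.factorial : ℝ) * Real.exp ((M : ℝ) + 1) := by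
          rw [Real.exp_add]; ring

private lemma aux_factorial_le_pow : ∀ i : ℕ, (i + 1).factorial ≤ (i + 1) ^ i := by
  intro i
  induction i with
  | zero => simp
  | succ i ih =>
    calc (i + 2).factorial = (i + 2) * (i + 1).factorial := Nat.factorial_succ _
      _ ≤ (i + 2) * (i + 1) ^ i := Nat.mul_le_mul_left _ ih
      _ ≤ (i + 2) * (i + 2) ^ i := Nat.mul_le_mul_left _ (Nat.pow_le_pow_left (by omega) i)
      _ = (i + 2) ^ (i + 1) := (pow_succ' _ _).symm

private lemma aux_rpow_pow_comm {x : ℝ} (hx : 0 ≤ x) (i : ℕ) (b : ℝ) :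
    (x ^ i) ^ b = (x ^ b) ^ i := by
  rw [← Real.rpow_natCast x i, ← Real.rpow_mul hx, mul_comm, Real.rpow_mul hx,
    Real.rpow_natCast]

/-- The key scalar estimate: for `1 ≤ x ≤ L/(βℓ)` with `ℓ = log L` and `βℓ ≥ 64γ²`,
we have `γ x (ℓ - log x) ≤ L/2`. -/
private lemma aux_S1 (γ β L ℓ x : ℝ) (hγ : 1 ≤ γ) (hβ : 0 < β) (hℓ : 0 < ℓ)
    (hℓL : Real.log L = ℓ) (hy : 64 * γ ^ 2 ≤ β * ℓ) (hx1 : 1 ≤ x)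
    (hxK : x ≤ L / (β * ℓ)) :
    γ * (x * (ℓ - Real.log x)) ≤ L / 2 := by
  have hβℓ : 0 < β * ℓ := mul_pos hβ hℓ
  have hy1 : (1 : ℝ) ≤ β * ℓ := le_trans (by nlinarith) hy
  have hx0 : 0 < x := lt_of_lt_of_le one_pos hx1
  set K := L / (β * ℓ) with hKdef
  have hK0 : 0 < K := lt_of_lt_of_le hx0 hxK
  have hL0 : 0 < L := by
    have h1 : 0 < K * (β * ℓ) := mul_pos hK0 hβℓ
    rwa [hKdef, div_mul_cancel₀ _ (ne_of_gt hβℓ)] at h1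
  have hKβℓ : K * (β * ℓ) = L := div_mul_cancel₀ _ (ne_of_gt hβℓ)
  have hlogK : Real.log K = ℓ - Real.log (β * ℓ) := by
    rw [hKdef, Real.log_div (ne_of_gt hL0) (ne_of_gt hβℓ), hℓL]
  have hlogβℓ0 : 0 ≤ Real.log (β * ℓ) := Real.log_nonneg hy1
  have hxlog : x * (ℓ - Real.log x) ≤ K * (1 + Real.log (β * ℓ)) := by
    have h1 : Real.log K - Real.log x = Real.log (K / x) :=
      (Real.log_div (ne_of_gt hK0) (ne_of_gt hx0)).symm
    have h2 : Real.log (K / x) ≤ K / x - 1 := Real.log_le_sub_one_of_pos (by positivity)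
    have h3 : x * (Real.log K - Real.log x) ≤ K - x := by
      calc x * (Real.log K - Real.log x) = x * Real.log (K / x) := by rw [h1]
        _ ≤ x * (K / x - 1) := mul_le_mul_of_nonneg_left h2 hx0.le
        _ = K - x := by field_simp
    have h4 : x * Real.log (β * ℓ) ≤ K * Real.log (β * ℓ) :=
      mul_le_mul_of_nonneg_right hxK hlogβℓ0
    have hid : x * (ℓ - Real.log x) =
        x * Real.log (β * ℓ) + x * (Real.log K - Real.log x) := by
      rw [hlogK]; ring
    nlinarith [h3, h4, hx0.le]
  have hsq : Real.sqrt (β * ℓ) * Real.sqrt (β * ℓ) = β * ℓ := Real.mul_self_sqrt hβℓ.le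
  have h8γ : 8 * γ ≤ Real.sqrt (β * ℓ) := by
    have h5 : Real.sqrt (64 * γ ^ 2) ≤ Real.sqrt (β * ℓ) := Real.sqrt_le_sqrt hy
    rwa [show (64 : ℝ) * γ ^ 2 = (8 * γ) ^ 2 by ring, Real.sqrt_sq (by linarith)] at h5
  have hlogy : Real.log (β * ℓ) ≤ 2 * Real.sqrt (β * ℓ) - 2 := by
    have h5 : Real.log (Real.sqrt (β * ℓ)) ≤ Real.sqrt (β * ℓ) - 1 :=
      Real.log_le_sub_one_of_pos (Real.sqrt_pos.mpr hβℓ)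
    have h6 : Real.log (Real.sqrt (β * ℓ)) = Real.log (β * ℓ) / 2 :=
      Real.log_sqrt hβℓ.le
    linarith
  have hkey2 : γ * (1 + Real.log (β * ℓ)) ≤ (β * ℓ) / 2 := by
    nlinarith [hsq, h8γ, hlogy, Real.sqrt_nonneg (β * ℓ),
      mul_le_mul_of_nonneg_left hlogy (by positivity : (0:ℝ) ≤ γ),
      mul_nonneg (sub_nonneg.mpr h8γ) (Real.sqrt_nonneg (β * ℓ))]
  calc γ * (x * (ℓ - Real.log x)) ≤ γ * (K * (1 + Real.log (β * ℓ))) :=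
        mul_le_mul_of_nonneg_left hxlog (by linarith)
    _ = K * (γ * (1 + Real.log (β * ℓ))) := by ring
    _ ≤ K * ((β * ℓ) / 2) := mul_le_mul_of_nonneg_left hkey2 hK0.le
    _ = L / 2 := by rw [show K * ((β * ℓ) / 2) = K * (β * ℓ) / 2 by ring, hKβℓ]

private lemma aux_sum_prod_le (n M : ℕ) (h : ℕ → ℝ) (hh : ∀ j, 0 ≤ h j) :
    ∑ α ∈ Lam M n, ∏ i, h (α i) ≤ (∑ j ∈ Finset.range (M + 1), h j) ^ n := by
  have hsub : Lam M n ⊆ Fintype.piFinset (fun _ : Fin n => Finset.range (M + 1)) := by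
    intro α hα
    simp only [Lam, Finset.Nat.mem_antidiagonalTuple] at hα
    rw [Fintype.mem_piFinset]
    intro i
    rw [Finset.mem_range, Nat.lt_succ_iff, ← hα]
    exact Finset.single_le_sum (fun _ _ => Nat.zero_le _) (Finset.mem_univ i)
  calc ∑ α ∈ Lam M n, ∏ i, h (α i)
      ≤ ∑ α ∈ Fintype.piFinset (fun _ : Fin n => Finset.range (M + 1)), ∏ i, h (α i) :=
        Finset.sum_le_sum_of_subset_of_nonneg hsub
          (fun α _ _ => Finset.prod_nonneg fun i _ => hh _)
    _ = ∏ _i : Fin n, ∑ j ∈ Finset.range (M + 1), h j :=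
        (Finset.prod_univ_sum _ _).symm
    _ = (∑ j ∈ Finset.range (M + 1), h j) ^ n := by
        rw [Finset.prod_const, Finset.card_univ, Fintype.card_fin]
set_option maxHeartbeats 4000000 in
/-- For `1 < q ≤ p ≤ 2` with conjugate exponents `p'`, `q'` and `β = q'(1/q − 1/p)`,
there is `C > 0` such that for `n` large enough and `m ≤ log n / (β log log n)`:
`(Σ_{α ∈ Λ(m−1,n)} ((m−1)!/α!)^((1/p − 1/q) q'))^(1/q') ≤ C^m n^(m/q') / (log n)^(m/p')`. -/
theorem sum_multinomial_bound_small_m (p q p' q' : ℝ) (hq : 1 < q) (hqp : q ≤ p) (hp : p ≤ 2)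
    (hp' : 1/p + 1/p' = 1) (hq' : 1/q + 1/q' = 1) :
    ∃ C : ℝ, 0 < C ∧ ∃ N : ℕ, ∀ m n : ℕ, N ≤ n → 1 ≤ m →
      (m : ℝ) ≤ Real.log n / (q' * (1/q - 1/p) * Real.log (Real.log n)) →
      (∑ α ∈ Lam (m-1) n,
          (((m-1).factorial : ℝ) / ∏ i, ((α i).factorial : ℝ)) ^ ((1/p - 1/q) * q'))
          ^ ((1:ℝ)/q')
        ≤ C ^ m * (n : ℝ) ^ ((m : ℝ)/q') / Real.log n ^ ((m : ℝ)/p') := by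
  have hq0 : (0:ℝ) < q := lt_trans one_pos hq
  have hp1 : 1 < p := lt_of_lt_of_le hq hqp
  have hp0 : (0:ℝ) < p := lt_trans one_pos hp1
  have hq'0 : 0 < q' := by
    have h1 : 1/q < 1 := by rw [div_lt_one hq0]; exact hq
    have h2 : 0 < 1/q' := by linarith
    exact one_div_pos.mp h2
  have hp'0 : 0 < p' := by
    have h1 : 1/p < 1 := by rw [div_lt_one hp0]; exact hp1
    have h2 : 0 < 1/p' := by linarith
    exact one_div_pos.mp h2
  set β := q' * (1/q - 1/p) with hβdef
  clear_value β
  have hpq : 1/p ≤ 1/q := one_div_le_one_div_of_le hq0 hqp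
  have hβ0 : 0 ≤ β := by
    rw [hβdef]
    exact mul_nonneg hq'0.le (by linarith)
  have hγq' : (1 + β) * (1/q') = 1/p' := by
    have h1 : β * (1/q') = 1/q - 1/p := by
      rw [hβdef]; field_simp
    have h2 : (1 + β) * (1/q') = 1/q' + β * (1/q') := by ring
    rw [h2, h1]; linarith
  rcases eq_or_lt_of_le hβ0 with hβz | hβpos
  · -- degenerate case p = q : the hypothesis on m is contradictory
    refine ⟨1, one_pos, 0, fun m n _ hm1 hmle => absurd hmle ?_⟩
    push_neg
    rw [← hβz, zero_mul, div_zero]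
    exact_mod_cast lt_of_lt_of_le zero_lt_one (by exact_mod_cast hm1)
  · -- main case β > 0
    set A := 8 * (1 + β) + 64 * (1 + β) ^ 2 / β + 8 * β + 1 with hAdef
    clear_value A
    have hApos : 0 ≤ 64 * (1 + β) ^ 2 / β := by positivity
    have hA1 : 1 ≤ A := by rw [hAdef]; nlinarith
    refine ⟨Real.exp ((β + 2) * (1/q')), Real.exp_pos _,
      ⌈Real.exp (Real.exp A)⌉₊ + 3, fun m n hn hm1 hmle => ?_⟩
    -- basic facts about n, L, ℓ
    have hnR : Real.exp (Real.exp A) ≤ (n:ℝ) := by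
      calc Real.exp (Real.exp A) ≤ (⌈Real.exp (Real.exp A)⌉₊ : ℝ) := Nat.le_ceil _
        _ ≤ n := by exact_mod_cast le_trans (Nat.le_add_right _ 3) hn
    have hn0 : (0:ℝ) < n := lt_of_lt_of_le (Real.exp_pos _) hnR
    set L := Real.log n with hLdef
    have hLA : Real.exp A ≤ L := (Real.le_log_iff_exp_le hn0).mpr hnR
    have hL0 : 0 < L := lt_of_lt_of_le (Real.exp_pos _) hLA
    set ℓ := Real.log L with hldef
    have hlA : A ≤ ℓ := (Real.le_log_iff_exp_le hL0).mpr hLA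
    have hl1 : 1 ≤ ℓ := le_trans hA1 hlA
    rw [hAdef] at hlA
    have hl0 : 0 < ℓ := lt_of_lt_of_le one_pos hl1
    have hexpl : Real.exp ℓ = L := Real.exp_log hL0
    have hexpL : Real.exp L = n := Real.exp_log hn0
    clear_value L ℓ
    clear hn hnR hLA hA1 hApos hAdef A
    have hApos : 0 ≤ 64 * (1 + β) ^ 2 / β := by positivity
    have hl8γ : 8 * (1 + β) ≤ ℓ := by linarith [hlA, hβ0, hApos]
    have hl8β : 8 * β ≤ ℓ := by linarith [hlA, hβ0, hApos]
    have hLquad : 1 + ℓ + ℓ^2/4 ≤ L := by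
      have h2 := Real.add_one_le_exp (ℓ/2)
      have h3 : Real.exp (ℓ/2) * Real.exp (ℓ/2) = L := by
        rw [← Real.exp_add]
        rw [show ℓ/2 + ℓ/2 = ℓ by ring]
        exact hexpl
      have h4 : (ℓ/2 + 1) * (ℓ/2 + 1) ≤ Real.exp (ℓ/2) * Real.exp (ℓ/2) :=
        mul_le_mul h2 h2 (by linarith only [hl0]) (Real.exp_pos _).le
      linarith only [h4, h3]
    have hγℓ : (1 + β) * ℓ ≤ L / 2 := by
      have h1 : (1 + β) * ℓ ≤ ℓ/8 * ℓ :=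
        mul_le_mul_of_nonneg_right (by linarith only [hl8γ]) hl0.le
      have h2 : ℓ/8 * ℓ ≤ L / 2 := by linarith only [hLquad, hl0.le]
      linarith only [h1, h2]
    have hβℓ : 64 * (1 + β)^2 ≤ β * ℓ := by
      have h1 : 64 * (1 + β)^2 / β ≤ ℓ := by linarith [hlA, hβ0, hApos]
      calc 64 * (1 + β)^2 = (64 * (1 + β)^2 / β) * β := by field_simp
        _ ≤ ℓ * β := mul_le_mul_of_nonneg_right h1 hβpos.le
        _ = β * ℓ := mul_comm _ _
    have h64 : (1:ℝ) ≤ 64 * (1 + β)^2 := by nlinarith only [hβ0, sq_nonneg β]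
    have hβℓ1 : 1 ≤ β * ℓ := le_trans h64 hβℓ
    have hβℓ0 : 0 < β * ℓ := mul_pos hβpos hl0
    -- bounds on m
    have hmK : (m:ℝ) ≤ L / (β * ℓ) := hmle
    have hmL : (m:ℝ) ≤ L := le_trans hmK (div_le_self hL0.le hβℓ1)
    obtain ⟨M, rfl⟩ : ∃ M, m = M + 1 := ⟨m - 1, (Nat.succ_pred_eq_of_pos hm1).symm⟩
    have hm' : M + 1 - 1 = M := by omega
    rw [hm']
    push_cast at hmK hmL
    have hMK : (M:ℝ) ≤ L / (β * ℓ) := by linarith only [hmK]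
    have hMleL : (M:ℝ) ≤ L := by linarith only [hmL]
    have htβ : (1/p - 1/q) * q' = -β := by rw [hβdef]; ring
    -- The main estimate: the sum S is at most exp((M+1)(β+2) + (M+1)L - (1+β)(M+1)ℓ)
    have hS0 : 0 ≤ ∑ α ∈ Lam M n,
        ((M.factorial : ℝ) / ∏ i, ((α i).factorial : ℝ)) ^ ((1/p - 1/q) * q') :=
      Finset.sum_nonneg fun α _ => Real.rpow_nonneg (by positivity) _
    have hEt : (∑ α ∈ Lam M n,
        ((M.factorial : ℝ) / ∏ i, ((α i).factorial : ℝ)) ^ ((1/p - 1/q) * q'))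
        ≤ Real.exp (((M:ℝ)+1)*(β+2) + ((M:ℝ)+1)*L - (1+β)*(((M:ℝ)+1)*ℓ)) := by
      rcases Nat.eq_zero_or_pos M with hM0 | hM1
      · -- base case M = 0 : the sum is 1
        subst hM0
        have hsum1 : (∑ α ∈ Lam 0 n,
            ((Nat.factorial 0 : ℝ) / ∏ i, ((α i).factorial : ℝ)) ^ ((1/p - 1/q) * q')) = 1 := by
          rw [show Lam 0 n = {0} from Finset.Nat.antidiagonalTuple_zero_right n]
          rw [Finset.sum_singleton]
          norm_num [Real.one_rpow]
        rw [hsum1]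
        calc (1:ℝ) = Real.exp 0 := Real.exp_zero.symm
          _ ≤ _ := Real.exp_le_exp.mpr (by push_cast; linarith only [hγℓ, hβpos.le, hL0])
      · -- main case M ≥ 1
        have hM1R : (1:ℝ) ≤ (M:ℝ) := Nat.one_le_cast.mpr hM1
        have hM0R : (0:ℝ) < (M:ℝ) := lt_of_lt_of_le one_pos hM1R
        set h : ℕ → ℝ := fun j => ((j.factorial : ℝ)) ^ β * ((M:ℝ)/(n:ℝ)) ^ j with hhdef
        have hh0 : ∀ j, 0 ≤ h j := by
          intro j; rw [hhdef]
          positivity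
        -- ρ bound
        have hρhalf : ((M:ℝ)^2) ^ β * ((M:ℝ)/(n:ℝ)) ≤ 1/2 := by
          have hMM2 : (M:ℝ) * (M:ℝ) ≤ L * L :=
            mul_le_mul hMleL hMleL (by positivity) hL0.le
          have hM2L : ((M:ℝ)^2) ^ β ≤ (L^2) ^ β :=
            Real.rpow_le_rpow (by positivity) (by linarith only [hMM2]) hβ0
          have hL2 : (L^2 : ℝ) ^ β = Real.exp (2*ℓ*β) := by
            rw [Real.rpow_def_of_pos (by positivity), Real.log_pow, ← hldef]
            norm_num
          have hMn : (M:ℝ)/(n:ℝ) ≤ Real.exp ℓ / (n:ℝ) := by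
            apply div_le_div_of_nonneg_right ?_ hn0.le
            · rw [hexpl]; exact hMleL
          calc ((M:ℝ)^2) ^ β * ((M:ℝ)/(n:ℝ)) ≤ Real.exp (2*ℓ*β) * (Real.exp ℓ / (n:ℝ)) := by
                rw [← hL2]
                exact mul_le_mul hM2L hMn (by positivity) (by positivity)
            _ = Real.exp (2*ℓ*β + ℓ) / (n:ℝ) := by rw [Real.exp_add]; ring
            _ ≤ Real.exp (L - 1) / (n:ℝ) := by
                apply div_le_div_of_nonneg_right ?_ hn0.le
                · apply Real.exp_le_exp.mpr
                  have h5 : (8*β) * (ℓ/4) ≤ ℓ * (ℓ/4) :=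
                    mul_le_mul_of_nonneg_right hl8β (by positivity)
                  linarith only [h5, hLquad]
            _ = 1 / Real.exp 1 := by
                rw [Real.exp_sub, hexpL]
                field_simp
            _ ≤ 1/2 := by
                rw [div_le_div_iff₀ (Real.exp_pos 1) (by norm_num)]
                linarith only [Real.add_one_le_exp (1:ℝ)]
        -- per-index bound for the geometric sum
        have hstep : ∀ i ∈ Finset.range M, h (i+1) ≤ ((M:ℝ)/(n:ℝ)) * (1/2)^i := by
          intro i hi
          have hiM : i + 1 ≤ M := Nat.succ_le_of_lt (Finset.mem_range.mp hi)
          have hfactN : ((i+1).factorial) ≤ (M^2)^i := by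
            calc (i+1).factorial ≤ (i+1)^i := aux_factorial_le_pow i
              _ ≤ M^i := Nat.pow_le_pow_left hiM i
              _ ≤ (M^2)^i := Nat.pow_le_pow_left (Nat.le_self_pow two_ne_zero M) i
          have hcast : (((i+1).factorial : ℝ)) ≤ ((M:ℝ)^2)^i := by exact_mod_cast hfactN
          have h1 : (((i+1).factorial : ℝ)) ^ β ≤ (((M:ℝ)^2)^i) ^ β :=
            Real.rpow_le_rpow (by positivity) hcast hβ0
          have h2 : (((M:ℝ)^2)^i) ^ β = (((M:ℝ)^2) ^ β)^i :=
            aux_rpow_pow_comm (by positivity) i β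
          rw [hhdef]
          calc ((i+1).factorial : ℝ) ^ β * ((M:ℝ)/(n:ℝ)) ^ (i+1)
              ≤ (((M:ℝ)^2) ^ β)^i * (((M:ℝ)/(n:ℝ)) ^ i * ((M:ℝ)/(n:ℝ))) := by
                rw [pow_succ]
                exact mul_le_mul (h1.trans_eq h2) le_rfl (by positivity) (by positivity)
            _ = (((M:ℝ)^2) ^ β * ((M:ℝ)/(n:ℝ)))^i * ((M:ℝ)/(n:ℝ)) := by
                rw [mul_pow]; ring
            _ ≤ (1/2:ℝ)^i * ((M:ℝ)/(n:ℝ)) := by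
                have h3 := pow_le_pow_left₀ (by positivity) hρhalf i
                exact mul_le_mul_of_nonneg_right h3 (by positivity)
            _ = ((M:ℝ)/(n:ℝ)) * (1/2)^i := mul_comm _ _
        -- the geometric-sum factor
        have hFle : (∑ j ∈ Finset.range (M+1), h j) ≤ 1 + 2*((M:ℝ)/(n:ℝ)) := by
          rw [Finset.sum_range_succ']
          have hh00 : h 0 = 1 := by
            rw [hhdef]; norm_num [Real.one_rpow]
          calc (∑ i ∈ Finset.range M, h (i+1)) + h 0
              ≤ (∑ i ∈ Finset.range M, ((M:ℝ)/(n:ℝ)) * (1/2)^i) + 1 :=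
                add_le_add (Finset.sum_le_sum hstep) (le_of_eq hh00)
            _ = ((M:ℝ)/(n:ℝ)) * (∑ i ∈ Finset.range M, (1/2:ℝ)^i) + 1 := by
                rw [Finset.mul_sum]
            _ ≤ ((M:ℝ)/(n:ℝ)) * 2 + 1 :=
                add_le_add (mul_le_mul_of_nonneg_left (sum_geometric_two_le M)
                  (by positivity)) le_rfl
            _ = 1 + 2*((M:ℝ)/(n:ℝ)) := by ring
        have hF0 : 0 ≤ ∑ j ∈ Finset.range (M+1), h j :=
          Finset.sum_nonneg fun j _ => hh0 j
        have hFn : (∑ j ∈ Finset.range (M+1), h j)^n ≤ Real.exp (2*(M:ℝ)) := by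
          have h1 : (∑ j ∈ Finset.range (M+1), h j) ≤ Real.exp (2*((M:ℝ)/(n:ℝ))) := by
            have := Real.add_one_le_exp (2*((M:ℝ)/(n:ℝ)))
            linarith only [hFle, this]
          calc (∑ j ∈ Finset.range (M+1), h j)^n ≤ (Real.exp (2*((M:ℝ)/(n:ℝ))))^n :=
                pow_le_pow_left₀ hF0 h1 n
            _ = Real.exp ((n:ℝ) * (2*((M:ℝ)/(n:ℝ)))) := (Real.exp_nat_mul _ n).symm
            _ = Real.exp (2*(M:ℝ)) := by
                congr 1
                field_simp
        -- the per-term bound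
        have hterm : ∀ α ∈ Lam M n,
            ((M.factorial : ℝ) / ∏ i, ((α i).factorial : ℝ)) ^ ((1/p - 1/q) * q') ≤
            (Real.exp M / (M:ℝ)^M) ^ β * ((((n:ℝ)/(M:ℝ))^M) * ∏ i, h (α i)) := by
          intro α hα
          have hsumα : ∑ i, α i = M := by
            simpa [Lam, Finset.Nat.mem_antidiagonalTuple] using hα
          have hP1 : (1:ℝ) ≤ ∏ i, ((α i).factorial : ℝ) := by
            rw [← Nat.cast_prod]
            exact Nat.one_le_cast.mpr (Finset.prod_pos fun i _ => (α i).factorial_pos)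
          have hP0 : (0:ℝ) < ∏ i, ((α i).factorial : ℝ) := lt_of_lt_of_le one_pos hP1
          have hfac0 : (0:ℝ) < (M.factorial : ℝ) := by exact_mod_cast M.factorial_pos
          have hMM : (0:ℝ) < (M:ℝ)^M := by positivity
          have heq : ((M.factorial : ℝ) / ∏ i, ((α i).factorial : ℝ)) ^ ((1/p - 1/q) * q')
              = ((∏ i, ((α i).factorial : ℝ)) / (M.factorial : ℝ)) ^ β := by
            rw [htβ, Real.rpow_neg (by positivity), ← Real.inv_rpow (by positivity), inv_div]
          rw [heq]
          have hkey : (∏ i, ((α i).factorial : ℝ)) / (M.factorial : ℝ) ≤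
              (∏ i, ((α i).factorial : ℝ)) * (Real.exp M / (M:ℝ)^M) := by
            have h2 := aux_pow_self_le_factorial_mul_exp M
            rw [show (∏ i, ((α i).factorial : ℝ)) * (Real.exp M / (M:ℝ)^M)
              = ((∏ i, ((α i).factorial : ℝ)) * Real.exp M) / (M:ℝ)^M from
              (mul_div_assoc _ _ _).symm]
            rw [div_le_div_iff₀ hfac0 hMM]
            have h3 := mul_le_mul_of_nonneg_left h2 hP0.le
            linarith only [h3]
          have hmono := Real.rpow_le_rpow (by positivity) hkey hβ0
          have hsplit : ((∏ i, ((α i).factorial : ℝ)) * (Real.exp M / (M:ℝ)^M)) ^ β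
              = (Real.exp M / (M:ℝ)^M) ^ β * (∏ i, ((α i).factorial : ℝ)) ^ β := by
            rw [Real.mul_rpow hP0.le (by positivity), mul_comm]
          have hPh : (∏ i, ((α i).factorial : ℝ)) ^ β
              = (((n:ℝ)/(M:ℝ))^M) * ∏ i, h (α i) := by
            have hprodh : ∏ i, h (α i)
                = (∏ i, ((α i).factorial : ℝ)) ^ β * ((M:ℝ)/(n:ℝ))^M := by
              rw [hhdef]
              rw [Finset.prod_mul_distrib, Finset.prod_pow_eq_pow_sum, hsumα]
              rw [Real.finset_prod_rpow _ _ (fun i _ => by positivity) β]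
            rw [hprodh]
            have hone : ((n:ℝ)/(M:ℝ))^M * (((M:ℝ)/(n:ℝ))^M) = 1 := by
              rw [← mul_pow, div_mul_div_comm, mul_comm (n:ℝ) (M:ℝ),
                div_self (by positivity), one_pow]
            calc (∏ i, ((α i).factorial : ℝ)) ^ β
                = (∏ i, ((α i).factorial : ℝ)) ^ β *
                  (((n:ℝ)/(M:ℝ))^M * (((M:ℝ)/(n:ℝ))^M)) := by rw [hone, mul_one]
              _ = ((n:ℝ)/(M:ℝ))^M *
                  ((∏ i, ((α i).factorial : ℝ)) ^ β * ((M:ℝ)/(n:ℝ))^M) := by ring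
          calc ((∏ i, ((α i).factorial : ℝ)) / (M.factorial : ℝ)) ^ β
              ≤ ((∏ i, ((α i).factorial : ℝ)) * (Real.exp M / (M:ℝ)^M)) ^ β := hmono
            _ = (Real.exp M / (M:ℝ)^M) ^ β * (∏ i, ((α i).factorial : ℝ)) ^ β := hsplit
            _ = (Real.exp M / (M:ℝ)^M) ^ β * ((((n:ℝ)/(M:ℝ))^M) * ∏ i, h (α i)) := by
                rw [hPh]
        -- exponential forms of the constants
        have e1 : (Real.exp M / (M:ℝ)^M : ℝ) ^ β
            = Real.exp (((M:ℝ) - (M:ℝ)*Real.log (M:ℝ)) * β) := by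
          rw [Real.rpow_def_of_pos (by positivity),
            Real.log_div (Real.exp_ne_zero _) (by positivity : ((M:ℝ)^M) ≠ 0), Real.log_exp,
            Real.log_pow]
        have e2 : (((n:ℝ)/(M:ℝ))^M : ℝ) = Real.exp ((M:ℝ) * (L - Real.log (M:ℝ))) := by
          rw [← Real.exp_log (show (0:ℝ) < (n:ℝ)/(M:ℝ) by positivity), ← Real.exp_nat_mul]
          rw [Real.log_div (ne_of_gt hn0) (ne_of_gt hM0R), ← hLdef]
        -- the master scalar inequality
        have hS1M := aux_S1 (1+β) β L ℓ (M:ℝ) (by linarith) hβpos hl0 hldef.symm hβℓ hM1R hMK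
        have hmaster : ((M:ℝ) - (M:ℝ)*Real.log (M:ℝ)) * β + (M:ℝ) * (L - Real.log (M:ℝ))
            + 2*(M:ℝ) ≤ ((M:ℝ)+1)*(β+2) + ((M:ℝ)+1)*L - (1+β)*(((M:ℝ)+1)*ℓ) := by
          linarith only [hS1M, hγℓ, hβpos.le]
        -- put it all together
        calc (∑ α ∈ Lam M n,
            ((M.factorial : ℝ) / ∏ i, ((α i).factorial : ℝ)) ^ ((1/p - 1/q) * q'))
            ≤ ∑ α ∈ Lam M n, (Real.exp M / (M:ℝ)^M) ^ β *
                ((((n:ℝ)/(M:ℝ))^M) * ∏ i, h (α i)) := Finset.sum_le_sum hterm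
          _ = (Real.exp M / (M:ℝ)^M) ^ β *
              ((((n:ℝ)/(M:ℝ))^M) * ∑ α ∈ Lam M n, ∏ i, h (α i)) := by
              rw [← Finset.mul_sum, ← Finset.mul_sum]
          _ ≤ (Real.exp M / (M:ℝ)^M) ^ β *
              ((((n:ℝ)/(M:ℝ))^M) * (∑ j ∈ Finset.range (M+1), h j)^n) := by
              apply mul_le_mul_of_nonneg_left ?_ (by positivity)
              apply mul_le_mul_of_nonneg_left ?_ (by positivity)
              exact aux_sum_prod_le n M h hh0
          _ ≤ (Real.exp M / (M:ℝ)^M) ^ β *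
              ((((n:ℝ)/(M:ℝ))^M) * Real.exp (2*(M:ℝ))) := by
              apply mul_le_mul_of_nonneg_left ?_ (by positivity)
              apply mul_le_mul_of_nonneg_left hFn (by positivity)
          _ = Real.exp (((M:ℝ) - (M:ℝ)*Real.log (M:ℝ)) * β + ((M:ℝ) * (L - Real.log (M:ℝ))
              + 2*(M:ℝ))) := by
              rw [e1, e2, ← Real.exp_add, ← Real.exp_add]
          _ ≤ Real.exp (((M:ℝ)+1)*(β+2) + ((M:ℝ)+1)*L - (1+β)*(((M:ℝ)+1)*ℓ)) := by
              apply Real.exp_le_exp.mpr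
              linarith only [hmaster]
    -- final conversion to the required form
    rw [Real.rpow_def_of_pos hn0, Real.rpow_def_of_pos hL0, ← Real.exp_nat_mul,
      ← Real.exp_add, ← Real.exp_sub, ← hLdef, ← hldef]
    calc (∑ α ∈ Lam M n,
        ((M.factorial : ℝ) / ∏ i, ((α i).factorial : ℝ)) ^ ((1/p - 1/q) * q')) ^ ((1:ℝ)/q')
        ≤ (Real.exp (((M:ℝ)+1)*(β+2) + ((M:ℝ)+1)*L - (1+β)*(((M:ℝ)+1)*ℓ))) ^ ((1:ℝ)/q') :=
          Real.rpow_le_rpow hS0 hEt (by positivity)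
      _ = Real.exp ((((M:ℝ)+1)*(β+2) + ((M:ℝ)+1)*L - (1+β)*(((M:ℝ)+1)*ℓ)) * ((1:ℝ)/q')) :=
          (Real.exp_mul _ _).symm
      _ = Real.exp (((M+1:ℕ):ℝ) * ((β + 2) * (1/q')) + L * (((M+1:ℕ):ℝ)/q')
          - ℓ * (((M+1:ℕ):ℝ)/p')) := by
          congr 1
          push_cast
          have h1p : ℓ * (((M:ℝ)+1)/p') = (1+β) * (((M:ℝ)+1)*ℓ) * (1/q') := by
            rw [show ((M:ℝ)+1)/p' = ((M:ℝ)+1) * (1/p') by ring, ← hγq']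
            ring
          rw [h1p]
          ring
      _ ≤ Real.exp (((M+1:ℕ):ℝ) * ((β + 2) * (1/q')) + L * (((M+1:ℕ):ℝ)/q')
          - ℓ * (((M+1:ℕ):ℝ)/p')) := le_rfl
end

section
/- Let 1 < q ≤ p ≤ 2, with conjugate exponents p', q', and let c > 1. There exists a constant C > 0 (depending only on p, q and c) such that for all m, n ∈ ℕ with n ≥ 2 and (log n)^{1/c} ≤ m ≤ (log n)^{c}, one has ( Σ_{α ∈ Λ(m−1,n)} ((m−1)!/α!)^{(1/p − 1/q) q'} )^{1/q'} ≤ C^m · n^{m/q'} / (log n)^{m/p'}. -/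
set_option maxHeartbeats 1000000


open scoped ENNReal NNReal BigOperators

section AuxLemmas

private lemma log_aux' {A t : ℝ} (hA : 1 ≤ A) (ht : 0 < t) :
    A * Real.log t ≤ t + A * Real.log A := by
  have hA0 : 0 < A := lt_of_lt_of_le one_pos hA
  have h := Real.log_le_sub_one_of_pos (show 0 < t / A by positivity)
  rw [Real.log_div (ne_of_gt ht) (ne_of_gt hA0)] at h
  have h2 : A * (Real.log t - Real.log A) ≤ A * (t/A - 1) :=
    mul_le_mul_of_nonneg_left h (le_of_lt hA0)
  have h3 : A * (t/A - 1) = t - A := by field_simp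
  nlinarith

private lemma succ_pow_le_exp_mul_pow' (k : ℕ) : ((k:ℝ)+1)^k ≤ Real.exp 1 * (k:ℝ)^k := by
  rcases Nat.eq_zero_or_pos k with h | h
  · subst h; simpa using Real.one_le_exp zero_le_one
  · have hk : (0:ℝ) < k := by exact_mod_cast h
    have h1 : (k:ℝ) + 1 ≤ (k:ℝ) * Real.exp (1/(k:ℝ)) := by
      have h0 := Real.add_one_le_exp (1/(k:ℝ))
      have h2 : (k:ℝ) * (1/(k:ℝ) + 1) ≤ (k:ℝ) * Real.exp (1/(k:ℝ)) :=
        mul_le_mul_of_nonneg_left h0 (le_of_lt hk)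
      calc (k:ℝ) + 1 = (k:ℝ) * (1/(k:ℝ) + 1) := by field_simp; ring
        _ ≤ _ := h2
    calc ((k:ℝ)+1)^k ≤ ((k:ℝ) * Real.exp (1/(k:ℝ)))^k :=
          pow_le_pow_left₀ (by positivity) h1 k
      _ = (k:ℝ)^k * (Real.exp (1/(k:ℝ)))^k := mul_pow _ _ _
      _ = (k:ℝ)^k * Real.exp ((k:ℝ)*(1/(k:ℝ))) := by rw [← Real.exp_nat_mul]
      _ = Real.exp 1 * (k:ℝ)^k := by rw [mul_one_div_cancel (ne_of_gt hk)]; ring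

private lemma pow_self_le_fact_mul_exp' (k : ℕ) : (k:ℝ)^k ≤ (k.factorial : ℝ) * Real.exp k := by
  induction k with
  | zero => simp
  | succ k ih =>
    have h1 := succ_pow_le_exp_mul_pow' k
    have hk1 : (0:ℝ) < (k:ℝ)+1 := by positivity
    have key : ((k:ℝ)+1)^(k+1) ≤ ((k+1).factorial : ℝ) * Real.exp ((k:ℝ)+1) := by
      calc ((k:ℝ)+1)^(k+1) = ((k:ℝ)+1) * ((k:ℝ)+1)^k := by ring
        _ ≤ ((k:ℝ)+1) * (Real.exp 1 * (k:ℝ)^k) :=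
            mul_le_mul_of_nonneg_left h1 (le_of_lt hk1)
        _ ≤ ((k:ℝ)+1) * (Real.exp 1 * ((k.factorial:ℝ) * Real.exp k)) := by
            have h3 : Real.exp 1 * (k:ℝ)^k ≤ Real.exp 1 * ((k.factorial:ℝ) * Real.exp k) :=
              mul_le_mul_of_nonneg_left ih (le_of_lt (Real.exp_pos 1))
            exact mul_le_mul_of_nonneg_left h3 (le_of_lt hk1)
        _ = ((k+1).factorial : ℝ) * Real.exp ((k:ℝ)+1) := by
            rw [Nat.factorial_succ, Real.exp_add]; push_cast; ring
    push_cast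
    exact key

private lemma sum_prod_le_pow' (μ n : ℕ) (g : ℕ → ℝ) (hg : ∀ a, 0 ≤ g a) :
    ∑ α ∈ Lam μ n, ∏ i, g (α i) ≤ (∑ a ∈ Finset.range (μ+1), g a)^n := by
  have hsub : Lam μ n ⊆ Fintype.piFinset (fun _ : Fin n => Finset.range (μ+1)) := by
    intro α hα
    rw [Lam, Finset.Nat.mem_antidiagonalTuple] at hα
    rw [Fintype.mem_piFinset]
    intro i
    rw [Finset.mem_range, Nat.lt_succ_iff, ← hα]
    exact Finset.single_le_sum (fun j _ => Nat.zero_le _) (Finset.mem_univ i)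
  calc ∑ α ∈ Lam μ n, ∏ i, g (α i)
      ≤ ∑ α ∈ Fintype.piFinset (fun _ : Fin n => Finset.range (μ+1)), ∏ i, g (α i) :=
        Finset.sum_le_sum_of_subset_of_nonneg hsub
          (fun α _ _ => Finset.prod_nonneg (fun i _ => hg _))
    _ = ∏ _i : Fin n, ∑ a ∈ Finset.range (μ+1), g a := by rw [Finset.prod_univ_sum]
    _ = (∑ a ∈ Finset.range (μ+1), g a)^n := by
        rw [Finset.prod_const, Finset.card_univ, Fintype.card_fin]

private lemma pow_eq_exp' {x : ℝ} (hx : 0 < x) (k : ℕ) :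
    x^k = Real.exp (k * Real.log x) := by
  rw [← Real.exp_log (pow_pos hx k), Real.log_pow]

end AuxLemmas


/-- For `1 < q ≤ p ≤ 2` with conjugate exponents `p'`, `q'` and `c > 1`, there is `C > 0`
such that for `n ≥ 2` and `(log n)^(1/c) ≤ m ≤ (log n)^c`:
`(Σ_{α ∈ Λ(m−1,n)} ((m−1)!/α!)^((1/p − 1/q) q'))^(1/q') ≤ C^m n^(m/q') / (log n)^(m/p')`. -/
theorem sum_multinomial_bound_mid_m (p q p' q' c : ℝ) (hq : 1 < q) (hqp : q ≤ p) (hp : p ≤ 2)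
    (hp' : 1/p + 1/p' = 1) (hq' : 1/q + 1/q' = 1) (hc : 1 < c) :
    ∃ C : ℝ, 0 < C ∧ ∀ m n : ℕ, 2 ≤ n →
      Real.log n ^ (1/c) ≤ (m : ℝ) → (m : ℝ) ≤ Real.log n ^ c →
      (∑ α ∈ Lam (m-1) n,
          (((m-1).factorial : ℝ) / ∏ i, ((α i).factorial : ℝ)) ^ ((1/p - 1/q) * q'))
          ^ ((1:ℝ)/q')
        ≤ C ^ m * (n : ℝ) ^ ((m : ℝ)/q') / Real.log n ^ ((m : ℝ)/p') := by
  have hq0 : (0:ℝ) < q := lt_trans one_pos hq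
  have hp0 : (0:ℝ) < p := lt_of_lt_of_le hq0 hqp
  have hiq1 : 1/q < 1 := by rw [div_lt_one hq0]; exact hq
  have hiq0 : 0 < 1/q := by positivity
  have hipq : 1/p ≤ 1/q := one_div_le_one_div_of_le hq0 hqp
  have hip1 : 1/p < 1 := lt_of_le_of_lt hipq hiq1
  have hip0 : 0 < 1/p := by positivity
  have hiq'0 : 0 < 1/q' := by linarith
  have hq'0 : 0 < q' := by
    rcases lt_trichotomy q' 0 with h | h | h
    · exfalso; have h2 : 1/q' < 0 := one_div_neg.mpr h; linarith
    · exfalso; rw [h] at hiq'0; simp at hiq'0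
    · exact h
  have hq'1 : 1 ≤ q' := by
    have h1' : 1/q' < 1 := by linarith
    have h2' := (div_lt_one hq'0).mp h1'
    linarith
  have hip'0 : 0 < 1/p' := by linarith
  have hp'0 : 0 < p' := by
    rcases lt_trichotomy p' 0 with h | h | h
    · exfalso; have h2 : 1/p' < 0 := one_div_neg.mpr h; linarith
    · exfalso; rw [h] at hip'0; simp at hip'0
    · exact h
  set s : ℝ := (1/q - 1/p) * q' with hs_def
  have hs : 0 ≤ s := mul_nonneg (by linarith) (le_of_lt hq'0)
  have key : (1/p') * q' = 1 + s := by
    have e1 : 1/p = 1 - 1/p' := by linarith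
    have e2 : 1/q = 1 - 1/q' := by linarith
    have e3 : (1/q') * q' = 1 := by field_simp
    rw [hs_def, e1, e2]
    nlinarith [e3]
  have hc0 : (0:ℝ) < c := lt_trans one_pos hc
  have hc1 : (1:ℝ) ≤ c := le_of_lt hc
  set A : ℝ := (1+2*s)*c with hA_def
  have hA1 : 1 ≤ A := by nlinarith
  set A' : ℝ := (1+s)*c with hA'_def
  have hA'1 : 1 ≤ A' := by nlinarith
  set T₀ : ℝ := 2*Real.log 2 + 2*A'*Real.log (2*A') with hT_def
  have hlog2 : 0 < Real.log 2 := Real.log_pos one_lt_two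
  have hlog2' : (0.6931471803:ℝ) < Real.log 2 := Real.log_two_gt_d9
  have hlog2A' : 0 ≤ Real.log (2*A') := Real.log_nonneg (by linarith)
  have hT1 : 1 ≤ T₀ := by
    rw [hT_def]
    nlinarith [mul_nonneg (show (0:ℝ) ≤ 2*A' by linarith) hlog2A']
  set D₂ : ℝ := (1+s)*Real.log (1+s) with hD_def
  have hD₂0 : 0 ≤ D₂ := mul_nonneg (by linarith) (Real.log_nonneg (by linarith))
  set B₁ : ℝ := 2*Real.exp (A*Real.log A) + Real.exp (A' * (T₀^c * Real.log T₀)) with hB_def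
  have hB₁0 : 0 ≤ B₁ := by positivity
  refine ⟨Real.exp (3*s + 2 + B₁ + D₂ + 1), Real.exp_pos _, ?_⟩
  intro m n hn h1 h2
  have hn2 : (2:ℝ) ≤ (n:ℝ) := by exact_mod_cast hn
  have hn0 : (0:ℝ) < (n:ℝ) := by linarith
  have hn1R : (1:ℝ) < (n:ℝ) := by linarith
  set L : ℝ := Real.log n with hL_def
  have hL : 0 < L := Real.log_pos hn1R
  have hm0 : (0:ℝ) < (m:ℝ) := lt_of_lt_of_le (Real.rpow_pos_of_pos hL (1/c)) h1
  have hm1 : 0 < m := by exact_mod_cast hm0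
  have hm1' : 1 ≤ m := hm1
  have hmR : (1:ℝ) ≤ (m:ℝ) := by exact_mod_cast hm1
  have hμR : ((m-1 : ℕ):ℝ) = (m:ℝ) - 1 := by
    have := Nat.cast_sub hm1' (R := ℝ)
    simpa using this
  set lm : ℝ := Real.log m with hlm_def
  have hlm0 : 0 ≤ lm := Real.log_nonneg hmR
  have hlmm : lm ≤ (m:ℝ) := by
    have := Real.log_le_sub_one_of_pos hm0
    linarith
  set t : ℝ := (m:ℝ)^((1:ℝ)/c) with ht_def
  have ht0 : 0 < t := Real.rpow_pos_of_pos hm0 _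
  have ht1 : 1 ≤ t := Real.one_le_rpow hmR (by positivity)
  have hlt0 : 0 ≤ Real.log t := Real.log_nonneg ht1
  have hlogm : lm = c * Real.log t := by
    rw [hlm_def, ht_def, Real.log_rpow hm0]
    field_simp
  have htL : t ≤ L := by
    have h3 := Real.rpow_le_rpow (le_of_lt hm0) h2 (by positivity : (0:ℝ) ≤ 1/c)
    rwa [← Real.rpow_mul (le_of_lt hL), mul_one_div_cancel (ne_of_gt hc0),
      Real.rpow_one] at h3
  have hmt : (m:ℝ) = t^c := by
    rw [ht_def, ← Real.rpow_mul (le_of_lt hm0), one_div_mul_cancel (ne_of_gt hc0),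
      Real.rpow_one]
  have hexpt : Real.exp t ≤ (n:ℝ) := by
    calc Real.exp t ≤ Real.exp L := Real.exp_le_exp.mpr htL
      _ = n := by rw [hL_def, Real.exp_log hn0]
  set x : ℝ := (m:ℝ)/(n:ℝ) with hx_def
  have hx0 : 0 < x := by rw [hx_def]; positivity
  set g : ℕ → ℝ := fun a => ((a.factorial:ℝ))^s * x^a with hg_def
  have hg0 : ∀ a, 0 ≤ g a := fun a =>
    mul_nonneg (Real.rpow_nonneg (Nat.cast_nonneg _) s) (pow_nonneg (le_of_lt hx0) a)
  set F : ℝ := ∑ a ∈ Finset.range ((m-1)+1), g a with hF_def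
  set E : ℝ := (n:ℝ) * ∑ a ∈ Finset.Ico 2 ((m-1)+1), g a with hE_def
  have hfacpos : ∀ α : Fin n → ℕ, (0:ℝ) < ∏ i, ((α i).factorial : ℝ) := fun α =>
    Finset.prod_pos (fun i _ => by exact_mod_cast (α i).factorial_pos)
  have hfp0 : (0:ℝ) < ((m-1).factorial : ℝ) := by exact_mod_cast (m-1).factorial_pos
  -- Step 1 : rewrite the sum
  have hS1 : (∑ α ∈ Lam (m-1) n,
        (((m-1).factorial : ℝ) / ∏ i, ((α i).factorial : ℝ)) ^ ((1/p - 1/q) * q'))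
      = ((m-1).factorial : ℝ)^(-s) * ∑ α ∈ Lam (m-1) n, ∏ i, ((α i).factorial : ℝ)^s := by
    rw [Finset.mul_sum]
    refine Finset.sum_congr rfl (fun α _ => ?_)
    have hB := hfacpos α
    have he : (1/p - 1/q) * q' = -s := by rw [hs_def]; ring
    rw [he, Real.div_rpow (le_of_lt hfp0) (le_of_lt hB),
      Real.rpow_neg (le_of_lt hB), div_eq_mul_inv, inv_inv,
      ← Real.finset_prod_rpow _ _ (fun i _ => Nat.cast_nonneg _) s]
  -- Step 2 : compare with the generating function
  have hS2 : ∑ α ∈ Lam (m-1) n, ∏ i, ((α i).factorial : ℝ)^s ≤ ((n:ℝ)/(m:ℝ))^(m-1) * F^n := by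
    have key2 := sum_prod_le_pow' (m-1) n g hg0
    have hprod : ∀ α ∈ Lam (m-1) n,
        ∏ i, g (α i) = (∏ i, ((α i).factorial:ℝ)^s) * x^(m-1) := by
      intro α hα
      have hsum : ∑ i, α i = m - 1 := Finset.Nat.mem_antidiagonalTuple.mp hα
      calc ∏ i, g (α i) = ∏ i, (((α i).factorial:ℝ)^s * x^(α i)) := by
            refine Finset.prod_congr rfl (fun i _ => ?_); simp only [hg_def]
        _ = (∏ i, ((α i).factorial:ℝ)^s) * ∏ i, x^(α i) := Finset.prod_mul_distrib
        _ = (∏ i, ((α i).factorial:ℝ)^s) * x^(m-1) := by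
            rw [Finset.prod_pow_eq_pow_sum, hsum]
    have hsum_eq : (∑ α ∈ Lam (m-1) n, ∏ i, ((α i).factorial:ℝ)^s) * x^(m-1)
        = ∑ α ∈ Lam (m-1) n, ∏ i, g (α i) := by
      rw [Finset.sum_mul]
      exact Finset.sum_congr rfl (fun α hα => (hprod α hα).symm)
    have hxinv : x^(m-1) * ((n:ℝ)/(m:ℝ))^(m-1) = 1 := by
      rw [← mul_pow, hx_def]
      rw [show (m:ℝ)/(n:ℝ) * ((n:ℝ)/(m:ℝ)) = 1 by field_simp]
      exact one_pow _
    calc ∑ α ∈ Lam (m-1) n, ∏ i, ((α i).factorial:ℝ)^s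
        = (∑ α ∈ Lam (m-1) n, ∏ i, ((α i).factorial:ℝ)^s)
            * (x^(m-1) * ((n:ℝ)/(m:ℝ))^(m-1)) := by rw [hxinv, mul_one]
      _ = ((∑ α ∈ Lam (m-1) n, ∏ i, ((α i).factorial:ℝ)^s) * x^(m-1))
            * ((n:ℝ)/(m:ℝ))^(m-1) := by ring
      _ = (∑ α ∈ Lam (m-1) n, ∏ i, g (α i)) * ((n:ℝ)/(m:ℝ))^(m-1) := by rw [hsum_eq]
      _ ≤ F^n * ((n:ℝ)/(m:ℝ))^(m-1) := by
          apply mul_le_mul_of_nonneg_right key2 (pow_nonneg (by positivity) _)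
      _ = ((n:ℝ)/(m:ℝ))^(m-1) * F^n := mul_comm _ _
  -- Step 3 : bound F^n
  have hFn : F^n ≤ Real.exp ((m:ℝ) + E) := by
    set R : ℝ := ∑ a ∈ Finset.Ico 1 ((m-1)+1), g a with hR_def
    have hR0 : 0 ≤ R := Finset.sum_nonneg (fun a _ => hg0 a)
    have hFR : F = 1 + R := by
      rw [hF_def, hR_def, Finset.range_eq_Ico,
        ← Finset.insert_Ico_add_one_left_eq_Ico (Nat.succ_pos _), Finset.sum_insert (by simp)]
      have hg00 : g 0 = 1 := by simp [hg_def]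
      rw [hg00]; rfl
    have hsub2 : Finset.Ico 1 ((m-1)+1) ⊆ insert 1 (Finset.Ico 2 ((m-1)+1)) := by
      intro a ha
      rcases Finset.mem_Ico.mp ha with ⟨h1a, h2a⟩
      rcases eq_or_lt_of_le h1a with h | h
      · simp [← h]
      · exact Finset.mem_insert_of_mem (Finset.mem_Ico.mpr ⟨h, h2a⟩)
    have hRle : R ≤ x + ∑ a ∈ Finset.Ico 2 ((m-1)+1), g a := by
      have h4 := Finset.sum_le_sum_of_subset_of_nonneg hsub2 (fun a _ _ => hg0 a)
      rw [Finset.sum_insert (by simp)] at h4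
      have hg1 : g 1 = x := by simp [hg_def]
      rw [hg1] at h4
      exact h4
    have hnR : (n:ℝ) * R ≤ (m:ℝ) + E := by
      have h5 : (n:ℝ) * R ≤ (n:ℝ)*x + (n:ℝ)*∑ a ∈ Finset.Ico 2 ((m-1)+1), g a := by
        rw [← mul_add]
        exact mul_le_mul_of_nonneg_left hRle (le_of_lt hn0)
      have h6 : (n:ℝ)*x = m := by rw [hx_def]; field_simp
      rw [hE_def]; linarith
    calc F^n = (1+R)^n := by rw [hFR]
      _ ≤ (Real.exp R)^n := by
          apply pow_le_pow_left₀ (by linarith)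
          have := Real.add_one_le_exp R
          linarith
      _ = Real.exp ((n:ℝ)*R) := (Real.exp_nat_mul R n).symm
      _ ≤ Real.exp ((m:ℝ) + E) := Real.exp_le_exp.mpr hnR
  -- Step 4 : bound E
  have hE : E ≤ B₁ * m := by
    have hm1s : (1:ℝ) ≤ (m:ℝ)^((1:ℝ)+s) := Real.one_le_rpow hmR (by linarith)
    have hm1s0 : (0:ℝ) < (m:ℝ)^((1:ℝ)+s) := lt_of_lt_of_le one_pos hm1s
    set ρ : ℝ := (m:ℝ)^((1:ℝ)+s) / (n:ℝ) with hρ_def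
    have hρ0 : 0 ≤ ρ := by rw [hρ_def]; positivity
    have hterm : ∀ a ∈ Finset.Ico 2 ((m-1)+1), g a ≤ ρ^a := by
      intro a ha
      have ham : a ≤ m := by
        have := (Finset.mem_Ico.mp ha).2
        omega
      have hfle : (a.factorial:ℝ) ≤ ((m:ℝ))^a := by
        exact_mod_cast le_trans a.factorial_le_pow (Nat.pow_le_pow_left ham a)
      have h1' : (a.factorial:ℝ)^s ≤ (((m:ℝ))^a)^s :=
        Real.rpow_le_rpow (Nat.cast_nonneg _) hfle hs
      have hpow_s : (((m:ℝ))^a)^s = ((m:ℝ)^s)^a := by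
        rw [← Real.rpow_natCast ((m:ℝ)) a, ← Real.rpow_natCast ((m:ℝ)^s) a,
          ← Real.rpow_mul (le_of_lt hm0), ← Real.rpow_mul (le_of_lt hm0), mul_comm]
      have heq : (((m:ℝ))^a)^s * x^a = ρ^a := by
        rw [hpow_s, ← mul_pow]
        congr 1
        rw [hρ_def, hx_def, Real.rpow_add hm0, Real.rpow_one]
        ring
      calc g a = (a.factorial:ℝ)^s * x^a := by simp only [hg_def]
        _ ≤ (((m:ℝ))^a)^s * x^a :=
            mul_le_mul_of_nonneg_right h1' (pow_nonneg (le_of_lt hx0) a)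
        _ = ρ^a := heq
    have hEρ : E ≤ (n:ℝ) * ∑ a ∈ Finset.Ico 2 ((m-1)+1), ρ^a := by
      rw [hE_def]
      exact mul_le_mul_of_nonneg_left (Finset.sum_le_sum hterm) (le_of_lt hn0)
    by_cases hcase : ρ ≤ 1/2
    · have hgeo : ∑ a ∈ Finset.Ico 2 ((m-1)+1), ρ^a ≤ 2 * ρ^2 := by
        rw [Finset.sum_Ico_eq_sum_range]
        calc ∑ i ∈ Finset.range ((m-1)+1-2), ρ^(2+i)
            = ∑ i ∈ Finset.range ((m-1)+1-2), ρ^2 * ρ^i := by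
              refine Finset.sum_congr rfl (fun i _ => ?_); rw [pow_add]
          _ ≤ ∑ i ∈ Finset.range ((m-1)+1-2), ρ^2 * (1/2)^i :=
              Finset.sum_le_sum (fun i _ => mul_le_mul_of_nonneg_left
                (pow_le_pow_left₀ hρ0 hcase i) (pow_nonneg hρ0 2))
          _ = ρ^2 * ∑ i ∈ Finset.range ((m-1)+1-2), (1/2:ℝ)^i := by rw [Finset.mul_sum]
          _ ≤ ρ^2 * 2 := mul_le_mul_of_nonneg_left (sum_geometric_two_le _) (pow_nonneg hρ0 2)
          _ = 2 * ρ^2 := by ring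
      have hm12s : (m:ℝ)^((1:ℝ)+2*s) ≤ Real.exp (A*Real.log A) * n := by
        have e1' : (m:ℝ)^((1:ℝ)+2*s) = Real.exp (((1:ℝ)+2*s) * lm) := by
          rw [Real.rpow_def_of_pos hm0, hlm_def, mul_comm]
        have e2' : ((1:ℝ)+2*s) * lm = A * Real.log t := by rw [hlogm, hA_def]; ring
        have e3' : A * Real.log t ≤ t + A * Real.log A := log_aux' hA1 ht0
        calc (m:ℝ)^((1:ℝ)+2*s) = Real.exp (((1:ℝ)+2*s)*lm) := e1'
          _ ≤ Real.exp (t + A*Real.log A) := by rw [e2']; exact Real.exp_le_exp.mpr e3'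
          _ = Real.exp t * Real.exp (A*Real.log A) := Real.exp_add _ _
          _ ≤ (n:ℝ) * Real.exp (A*Real.log A) :=
              mul_le_mul_of_nonneg_right hexpt (le_of_lt (Real.exp_pos _))
          _ = Real.exp (A*Real.log A) * n := mul_comm _ _
      have hnρ2 : (n:ℝ) * (2*ρ^2) ≤ 2 * Real.exp (A*Real.log A) * m := by
        have e4' : (n:ℝ) * (2*ρ^2) = 2 * (((m:ℝ)^((1:ℝ)+s))^2 / n) := by
          rw [hρ_def, div_pow]
          field_simp
        have e5' : ((m:ℝ)^((1:ℝ)+s))^2 = (m:ℝ) * (m:ℝ)^((1:ℝ)+2*s) := by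
          rw [← Real.rpow_natCast ((m:ℝ)^((1:ℝ)+s)) 2, ← Real.rpow_mul (le_of_lt hm0)]
          rw [show ((1:ℝ)+s)*((2:ℕ):ℝ) = 1 + ((1:ℝ)+2*s) by push_cast; ring]
          rw [Real.rpow_add hm0, Real.rpow_one]
        rw [e4', e5']
        have h14 : ((m:ℝ) * (m:ℝ)^((1:ℝ)+2*s))/(n:ℝ) ≤ Real.exp (A*Real.log A) * (m:ℝ) := by
          rw [div_le_iff₀ hn0]
          calc (m:ℝ) * (m:ℝ)^((1:ℝ)+2*s) ≤ (m:ℝ) * (Real.exp (A*Real.log A) * (n:ℝ)) :=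
                mul_le_mul_of_nonneg_left hm12s (le_of_lt hm0)
            _ = Real.exp (A*Real.log A) * (m:ℝ) * (n:ℝ) := by ring
        calc 2 * ((m:ℝ) * (m:ℝ)^((1:ℝ)+2*s) / (n:ℝ))
            ≤ 2 * (Real.exp (A*Real.log A) * (m:ℝ)) :=
              mul_le_mul_of_nonneg_left h14 (by norm_num)
          _ = 2 * Real.exp (A*Real.log A) * (m:ℝ) := by ring
      have : E ≤ 2 * Real.exp (A*Real.log A) * m := by
        calc E ≤ (n:ℝ) * ∑ a ∈ Finset.Ico 2 ((m-1)+1), ρ^a := hEρ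
          _ ≤ (n:ℝ) * (2*ρ^2) := mul_le_mul_of_nonneg_left hgeo (le_of_lt hn0)
          _ ≤ 2 * Real.exp (A*Real.log A) * m := hnρ2
      calc E ≤ 2 * Real.exp (A*Real.log A) * m := this
        _ ≤ B₁ * m := by
            rw [hB_def]
            refine mul_le_mul_of_nonneg_right ?_ (le_of_lt hm0)
            linarith [le_of_lt (Real.exp_pos (A' * (T₀^c * Real.log T₀)))]
    · push_neg at hcase
      have hn2m : (n:ℝ) < 2 * (m:ℝ)^((1:ℝ)+s) := by
        rw [hρ_def, lt_div_iff₀ hn0] at hcase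
        linarith
      have hL2 : L < Real.log 2 + ((1:ℝ)+s) * lm := by
        have h7 := Real.log_lt_log hn0 hn2m
        rwa [Real.log_mul (by norm_num) (ne_of_gt hm1s0), Real.log_rpow hm0,
          ← hL_def, ← hlm_def] at h7
      have hA'2 : 2*A' * Real.log t ≤ t + 2*A' * Real.log (2*A') :=
        log_aux' (by linarith) ht0
      have e6' : ((1:ℝ)+s) * lm = A' * Real.log t := by rw [hlogm, hA'_def]; ring
      have htT : t ≤ T₀ := by rw [hT_def]; linarith
      have hmT : (m:ℝ) ≤ T₀^c := by
        rw [hmt]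
        exact Real.rpow_le_rpow (le_of_lt ht0) htT (le_of_lt hc0)
      have hltT : Real.log t ≤ Real.log T₀ := Real.log_le_log ht0 htT
      have hbig : ((m:ℝ)^((1:ℝ)+s))^m ≤ Real.exp (A' * (T₀^c * Real.log T₀)) := by
        have e7' : ((m:ℝ)^((1:ℝ)+s))^m = Real.exp ((m:ℝ) * (((1:ℝ)+s) * lm)) := by
          rw [pow_eq_exp' hm1s0 m, Real.log_rpow hm0, ← hlm_def]
        have e8' : (m:ℝ) * (((1:ℝ)+s)*lm) = A' * ((m:ℝ) * Real.log t) := by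
          rw [e6']; ring
        have e9' : (m:ℝ) * Real.log t ≤ T₀^c * Real.log T₀ :=
          mul_le_mul hmT hltT hlt0 (Real.rpow_nonneg (by linarith) c)
        rw [e7', e8']
        exact Real.exp_le_exp.mpr (mul_le_mul_of_nonneg_left e9' (by linarith))
      have hterm2 : ∀ a ∈ Finset.Ico 2 ((m-1)+1),
          (n:ℝ) * ρ^a ≤ Real.exp (A' * (T₀^c * Real.log T₀)) := by
        intro a ha
        rcases Finset.mem_Ico.mp ha with ⟨h2a, hma⟩
        have ham : a ≤ m := by omega
        have e10 : (n:ℝ) * ρ^a ≤ ((m:ℝ)^((1:ℝ)+s))^a := by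
          rw [hρ_def, div_pow]
          have hn_le : (n:ℝ) ≤ (n:ℝ)^a := le_self_pow₀ (by linarith) (by omega)
          calc (n:ℝ) * (((m:ℝ)^((1:ℝ)+s))^a / (n:ℝ)^a)
              = ((m:ℝ)^((1:ℝ)+s))^a * ((n:ℝ) / (n:ℝ)^a) := by ring
            _ ≤ ((m:ℝ)^((1:ℝ)+s))^a * 1 := by
                apply mul_le_mul_of_nonneg_left _ (pow_nonneg (le_of_lt hm1s0) a)
                rw [div_le_one (pow_pos hn0 a)]
                exact hn_le
            _ = ((m:ℝ)^((1:ℝ)+s))^a := mul_one _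
        have e11 : ((m:ℝ)^((1:ℝ)+s))^a ≤ ((m:ℝ)^((1:ℝ)+s))^m := pow_le_pow_right₀ hm1s ham
        exact le_trans e10 (le_trans e11 hbig)
      have hcard : (((Finset.Ico 2 ((m-1)+1)).card : ℕ):ℝ) ≤ (m:ℝ) := by
        have : (Finset.Ico 2 ((m-1)+1)).card ≤ m := by
          rw [Nat.card_Ico]; omega
        exact_mod_cast this
      have hsum2 : (n:ℝ) * ∑ a ∈ Finset.Ico 2 ((m-1)+1), ρ^a
          ≤ (m:ℝ) * Real.exp (A' * (T₀^c * Real.log T₀)) := by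
        rw [Finset.mul_sum]
        calc ∑ a ∈ Finset.Ico 2 ((m-1)+1), (n:ℝ)*ρ^a
            ≤ ∑ _a ∈ Finset.Ico 2 ((m-1)+1), Real.exp (A' * (T₀^c*Real.log T₀)) :=
              Finset.sum_le_sum hterm2
          _ = ((Finset.Ico 2 ((m-1)+1)).card : ℝ) * Real.exp (A' * (T₀^c*Real.log T₀)) := by
              rw [Finset.sum_const, nsmul_eq_mul]
          _ ≤ (m:ℝ) * Real.exp (A' * (T₀^c*Real.log T₀)) :=
              mul_le_mul_of_nonneg_right hcard (le_of_lt (Real.exp_pos _))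
      calc E ≤ (n:ℝ) * ∑ a ∈ Finset.Ico 2 ((m-1)+1), ρ^a := hEρ
        _ ≤ (m:ℝ) * Real.exp (A' * (T₀^c * Real.log T₀)) := hsum2
        _ ≤ B₁ * m := by
            rw [hB_def]
            calc (m:ℝ) * Real.exp (A' * (T₀^c * Real.log T₀))
                = Real.exp (A' * (T₀^c * Real.log T₀)) * (m:ℝ) := mul_comm _ _
              _ ≤ (2*Real.exp (A*Real.log A) + Real.exp (A' * (T₀^c * Real.log T₀))) * (m:ℝ) :=
                  mul_le_mul_of_nonneg_right
                    (by linarith [le_of_lt (Real.exp_pos (A*Real.log A))])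
                    (Nat.cast_nonneg m)
  -- Step 5 : factorial lower bound
  have hfact : (((m-1).factorial:ℝ))^(-s) ≤ Real.exp (s*(m:ℝ) - s*((m:ℝ)-1)*lm) := by
    have p1 : ((m:ℝ))^((m-1:ℕ)) ≤ Real.exp 1 * (((m-1:ℕ)):ℝ)^((m-1:ℕ)) := by
      have h8 := succ_pow_le_exp_mul_pow' (m-1)
      rwa [show ((m-1:ℕ):ℝ)+1 = (m:ℝ) by rw [hμR]; ring] at h8
    have p2 : ((((m-1:ℕ)):ℝ))^((m-1:ℕ)) ≤ ((m-1).factorial:ℝ) * Real.exp ((m-1:ℕ)) :=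
      pow_self_le_fact_mul_exp' (m-1)
    have p3 : ((m:ℝ))^((m-1:ℕ)) ≤ ((m-1).factorial:ℝ) * Real.exp (m:ℝ) := by
      calc ((m:ℝ))^((m-1:ℕ)) ≤ Real.exp 1 * (((m-1:ℕ)):ℝ)^((m-1:ℕ)) := p1
        _ ≤ Real.exp 1 * (((m-1).factorial:ℝ) * Real.exp ((m-1:ℕ))) :=
            mul_le_mul_of_nonneg_left p2 (le_of_lt (Real.exp_pos 1))
        _ = ((m-1).factorial:ℝ) * (Real.exp 1 * Real.exp ((m-1:ℕ))) := by ring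
        _ = ((m-1).factorial:ℝ) * Real.exp (1 + ((m-1:ℕ):ℝ)) := by rw [Real.exp_add]
        _ = ((m-1).factorial:ℝ) * Real.exp (m:ℝ) := by rw [hμR]; ring_nf
    have p4 : ((m:ℝ))^((m-1:ℕ)) = Real.exp (((m:ℝ)-1)*lm) := by
      rw [pow_eq_exp' hm0, ← hlm_def, hμR]
    have hlow : Real.exp (((m:ℝ)-1)*lm - (m:ℝ)) ≤ ((m-1).factorial:ℝ) := by
      rw [Real.exp_sub, ← p4, div_le_iff₀ (Real.exp_pos _)]
      exact p3
    have p6 := Real.rpow_le_rpow_of_nonpos (Real.exp_pos _) hlow (neg_nonpos.mpr hs)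
    calc (((m-1).factorial:ℝ))^(-s)
        ≤ (Real.exp (((m:ℝ)-1)*lm - (m:ℝ)))^(-s) := p6
      _ = Real.exp ((((m:ℝ)-1)*lm - (m:ℝ)) * (-s)) := by rw [← Real.exp_mul]
      _ = Real.exp (s*(m:ℝ) - s*((m:ℝ)-1)*lm) := by ring_nf
  -- Step 6 : (n/m)^(m-1) in exponential form
  have hnm : ((n:ℝ)/(m:ℝ))^(m-1:ℕ) = Real.exp (((m:ℝ)-1) * (L - lm)) := by
    rw [pow_eq_exp' (show (0:ℝ) < (n:ℝ)/(m:ℝ) by positivity),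
      Real.log_div (ne_of_gt hn0) (ne_of_gt hm0), ← hL_def, ← hlm_def, hμR]
  -- Step 7 : total bound on the sum
  have hsum_nn : 0 ≤ ∑ α ∈ Lam (m-1) n, ∏ i, ((α i).factorial:ℝ)^s :=
    Finset.sum_nonneg (fun α _ => Finset.prod_nonneg
      (fun i _ => Real.rpow_nonneg (Nat.cast_nonneg _) s))
  have hStot : (∑ α ∈ Lam (m-1) n,
        (((m-1).factorial : ℝ) / ∏ i, ((α i).factorial : ℝ)) ^ ((1/p - 1/q) * q'))
      ≤ Real.exp ((s*(m:ℝ) - s*((m:ℝ)-1)*lm) + (((m:ℝ)-1)*(L-lm) + ((m:ℝ) + B₁*(m:ℝ)))) := by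
    rw [hS1]
    have step_a : ((m-1).factorial : ℝ)^(-s) * ∑ α ∈ Lam (m-1) n, ∏ i, ((α i).factorial:ℝ)^s
        ≤ ((m-1).factorial : ℝ)^(-s) * (((n:ℝ)/(m:ℝ))^(m-1) * F^n) :=
      mul_le_mul_of_nonneg_left hS2 (Real.rpow_nonneg (le_of_lt hfp0) _)
    have hFn' : F^n ≤ Real.exp ((m:ℝ) + B₁*(m:ℝ)) := by
      calc F^n ≤ Real.exp ((m:ℝ) + E) := hFn
        _ ≤ Real.exp ((m:ℝ) + B₁*(m:ℝ)) := by
            apply Real.exp_le_exp.mpr; linarith [hE]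
    have hF0 : (0:ℝ) ≤ F := Finset.sum_nonneg (fun a _ => hg0 a)
    have step_b : ((n:ℝ)/(m:ℝ))^(m-1) * F^n
        ≤ Real.exp (((m:ℝ)-1)*(L-lm)) * Real.exp ((m:ℝ) + B₁*(m:ℝ)) := by
      rw [hnm]
      exact mul_le_mul_of_nonneg_left hFn' (le_of_lt (Real.exp_pos _))
    calc ((m-1).factorial : ℝ)^(-s) * ∑ α ∈ Lam (m-1) n, ∏ i, ((α i).factorial:ℝ)^s
        ≤ ((m-1).factorial : ℝ)^(-s) * (((n:ℝ)/(m:ℝ))^(m-1) * F^n) := step_a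
      _ ≤ Real.exp (s*(m:ℝ) - s*((m:ℝ)-1)*lm)
            * (Real.exp (((m:ℝ)-1)*(L-lm)) * Real.exp ((m:ℝ) + B₁*(m:ℝ))) := by
          apply mul_le_mul hfact (le_trans (le_of_eq rfl) step_b) _ (le_of_lt (Real.exp_pos _))
          exact mul_nonneg (pow_nonneg (by positivity) _) (pow_nonneg hF0 _)
      _ = Real.exp ((s*(m:ℝ) - s*((m:ℝ)-1)*lm) + (((m:ℝ)-1)*(L-lm) + ((m:ℝ) + B₁*(m:ℝ)))) := by
          rw [← Real.exp_add, ← Real.exp_add]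
  -- Step 8 : conclusion
  set RHS : ℝ := Real.exp (3*s + 2 + B₁ + D₂ + 1) ^ m * (n:ℝ)^((m:ℝ)/q') / L^((m:ℝ)/p')
    with hRHS_def
  have hRHS0 : 0 ≤ RHS := by
    rw [hRHS_def]
    positivity
  have hRHSq : RHS^q' = Real.exp ((3*s+2+B₁+D₂+1)*(m:ℝ)*q' + (m:ℝ)*L - (1+s)*(m:ℝ)*Real.log L) := by
    have r1 : Real.exp (3*s + 2 + B₁ + D₂ + 1)^m = Real.exp ((3*s+2+B₁+D₂+1)*(m:ℝ)) := by
      rw [← Real.exp_nat_mul, mul_comm]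
    have r2 : (n:ℝ)^((m:ℝ)/q') = Real.exp (((m:ℝ)/q')*L) := by
      rw [Real.rpow_def_of_pos hn0, ← hL_def, mul_comm]
    have r3 : L^((m:ℝ)/p') = Real.exp (((m:ℝ)/p')*Real.log L) := by
      rw [Real.rpow_def_of_pos hL, mul_comm]
    have e2'' : ((m:ℝ)/p')*q' = (1+s)*(m:ℝ) := by
      calc (m:ℝ)/p'*q' = (m:ℝ)*((1/p')*q') := by ring
        _ = (m:ℝ)*(1+s) := by rw [key]
        _ = (1+s)*(m:ℝ) := mul_comm _ _
    have e1'' : ((m:ℝ)/q')*q' = (m:ℝ) := div_mul_cancel₀ _ (ne_of_gt hq'0)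
    rw [hRHS_def, r1, r2, r3, ← Real.exp_add, ← Real.exp_sub, ← Real.exp_mul]
    congr 1
    calc ((3*s+2+B₁+D₂+1)*(m:ℝ) + ((m:ℝ)/q')*L - ((m:ℝ)/p')*Real.log L) * q'
        = (3*s+2+B₁+D₂+1)*(m:ℝ)*q' + (((m:ℝ)/q')*q')*L - (((m:ℝ)/p')*q')*Real.log L := by
          ring
      _ = (3*s+2+B₁+D₂+1)*(m:ℝ)*q' + (m:ℝ)*L - (1+s)*(m:ℝ)*Real.log L := by
          rw [e1'', e2'']
  have hfinal : Real.exp ((s*(m:ℝ) - s*((m:ℝ)-1)*lm) + (((m:ℝ)-1)*(L-lm) + ((m:ℝ) + B₁*(m:ℝ))))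
      ≤ RHS^q' := by
    rw [hRHSq]
    apply Real.exp_le_exp.mpr
    have hw : Real.log L = Real.log (L/(m:ℝ)) + lm := by
      rw [Real.log_div (ne_of_gt hL) (ne_of_gt hm0), ← hlm_def]
      ring
    have hP1 : (1+s) * ((m:ℝ) * Real.log (L/(m:ℝ))) ≤ L + D₂*(m:ℝ) := by
      have h9 := log_aux' (show (1:ℝ) ≤ 1+s by linarith) (show 0 < L/(m:ℝ) by positivity)
      have h10 : (m:ℝ) * ((1+s)*Real.log (L/(m:ℝ)))
          ≤ (m:ℝ) * (L/(m:ℝ) + (1+s)*Real.log (1+s)) :=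
        mul_le_mul_of_nonneg_left h9 (le_of_lt hm0)
      have h11 : (m:ℝ) * (L/(m:ℝ)) = L := by rw [mul_comm]; exact div_mul_cancel₀ L (ne_of_gt hm0)
      have h13 : (m:ℝ) * (L/(m:ℝ) + (1+s)*Real.log (1+s))
          = L + (1+s)*Real.log (1+s)*(m:ℝ) := by rw [mul_add, h11]; ring
      rw [hD_def]
      calc (1+s) * ((m:ℝ) * Real.log (L/(m:ℝ)))
          = (m:ℝ) * ((1+s)*Real.log (L/(m:ℝ))) := by ring
        _ ≤ (m:ℝ) * (L/(m:ℝ) + (1+s)*Real.log (1+s)) := h10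
        _ = L + (1+s)*Real.log (1+s)*(m:ℝ) := h13
    have hI2 : (1+s)*lm ≤ (1+s)*(m:ℝ) := mul_le_mul_of_nonneg_left hlmm (by linarith)
    have hI5 : (3*s+2+B₁+D₂)*(m:ℝ) ≤ (3*s+2+B₁+D₂+1)*(m:ℝ)*q' := by
      have h12 : (3*s+2+B₁+D₂) ≤ (3*s+2+B₁+D₂+1)*q' := by
        have h12' : (3*s+2+B₁+D₂+1) ≤ (3*s+2+B₁+D₂+1)*q' :=
          le_mul_of_one_le_right (by linarith) hq'1
        linarith
      calc (3*s+2+B₁+D₂)*(m:ℝ) ≤ ((3*s+2+B₁+D₂+1)*q')*(m:ℝ) :=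
            mul_le_mul_of_nonneg_right h12 (le_of_lt hm0)
        _ = (3*s+2+B₁+D₂+1)*(m:ℝ)*q' := by ring
    rw [hw]
    have hexp : s*(m:ℝ) - s*((m:ℝ)-1)*lm + (((m:ℝ)-1)*(L-lm) + ((m:ℝ) + B₁*(m:ℝ)))
        + (1+s)*(m:ℝ)*(Real.log (L/(m:ℝ)) + lm)
        = s*(m:ℝ) + (1+s)*lm + (1+B₁)*(m:ℝ) + (1+s)*((m:ℝ)*Real.log (L/(m:ℝ)))
          + (m:ℝ)*L - L := by ring
    have hsm := mul_nonneg hs (le_of_lt hm0)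
    clear_value s D₂ B₁ L lm
    linarith only [hexp, hP1, hI2, hI5, hsm]
  have hSnn : 0 ≤ (∑ α ∈ Lam (m-1) n,
      (((m-1).factorial : ℝ) / ∏ i, ((α i).factorial : ℝ)) ^ ((1/p - 1/q) * q')) :=
    Finset.sum_nonneg (fun α _ => Real.rpow_nonneg (div_nonneg (le_of_lt hfp0)
      (le_of_lt (hfacpos α))) _)
  have hSR := le_trans hStot hfinal
  calc (∑ α ∈ Lam (m-1) n,
        (((m-1).factorial : ℝ) / ∏ i, ((α i).factorial : ℝ)) ^ ((1/p - 1/q) * q')) ^ ((1:ℝ)/q')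
      ≤ (RHS^q') ^ ((1:ℝ)/q') := Real.rpow_le_rpow hSnn hSR (by positivity)
    _ = RHS := by
        rw [← Real.rpow_mul hRHS0, mul_one_div_cancel (ne_of_gt hq'0), Real.rpow_one]
end

section
/- Let m, n, k ∈ ℕ with m ≥ k + 2. The number of multi-indices α ∈ Λ(m−1,n) for which α_i ≥ k+1 for at least one coordinate i is at most n · |Λ(m−k−2, n)| = n · C(n + m − k − 3, m − k − 2), where C(·,·) denotes the binomial coefficient. Moreover, if m ≤ n this quantity is at most 2^m · n^{m−k−1} / (m−k−2)!. -/
open scoped ENNReal NNReal BigOperators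

section AuxCardLemmas

private lemma mem_Lam_iff {M N : ℕ} {α : Fin N → ℕ} : α ∈ Lam M N ↔ ∑ i, α i = M :=
  Finset.Nat.mem_antidiagonalTuple

private lemma mcard_sum' {N : ℕ} (s : Finset (Fin N)) (f : Fin N → Multiset (Fin N)) :
    Multiset.card (∑ j ∈ s, f j) = ∑ j ∈ s, Multiset.card (f j) := by
  induction s using Finset.cons_induction with
  | empty => simp
  | cons a s ha ih => simp [Finset.sum_cons, ih]

private lemma card_Lam (M N : ℕ) : (Lam M N).card = Nat.choose (N + M - 1) M := by
  have h : (Lam M N).card = Fintype.card (Sym (Fin N) M) := by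
    rw [← Finset.card_univ]
    refine Finset.card_bij'
      (fun α hα => (⟨∑ j, (α j) • ({j} : Multiset (Fin N)), by
        simp only [mcard_sum', Multiset.card_nsmul, Multiset.card_singleton, mul_one]
        exact mem_Lam_iff.mp hα⟩ : Sym (Fin N) M))
      (fun s _ => fun i => Multiset.count i (s : Multiset (Fin N)))
      (fun α hα => Finset.mem_univ _)
      (fun s _ => by
        refine mem_Lam_iff.mpr ?_
        rw [Multiset.sum_count_eq_card (fun a _ => Finset.mem_univ a)]
        exact s.2)
      (fun α hα => by
        funext i
        simp [Multiset.count_sum', Multiset.count_nsmul, Multiset.count_singleton,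
          Finset.sum_ite_eq])
      (fun s _ => Subtype.ext (by
        show (∑ j, Multiset.count j (s : Multiset (Fin N)) • ({j} : Multiset (Fin N)))
          = (s : Multiset (Fin N))
        have h2 : (∑ j, Multiset.count j (s : Multiset (Fin N)) • ({j} : Multiset (Fin N)))
            = ∑ j ∈ (s : Multiset (Fin N)).toFinset,
              Multiset.count j (s : Multiset (Fin N)) • ({j} : Multiset (Fin N)) := by
          refine (Finset.sum_subset (Finset.subset_univ _) ?_).symm
          intro x _ hx
          rw [Multiset.count_eq_zero_of_notMem (by simpa using hx), zero_nsmul]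
        rw [h2, Multiset.toFinset_sum_count_nsmul_eq]))
  rw [h, Sym.card_sym_eq_choose, Fintype.card_fin]

end AuxCardLemmas

/-- For `m ≥ k + 2`, the number of `α ∈ Λ(m−1,n)` with some coordinate `≥ k+1` is at most
`n · |Λ(m−k−2,n)| = n · C(n+m−k−3, m−k−2)`; and if moreover `m ≤ n`, it is at most
`2^m n^(m−k−1)/(m−k−2)!`. -/
theorem card_unbounded_indices_le (m n k : ℕ) (hn : 1 ≤ n) (hmk : k + 2 ≤ m) :
    (((Lam (m-1) n).filter (fun α => ∃ i, k + 1 ≤ α i)).card ≤ n * (Lam (m-k-2) n).card) ∧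
      ((Lam (m-k-2) n).card = Nat.choose (n + m - k - 3) (m - k - 2)) ∧
      (m ≤ n →
        ((((Lam (m-1) n).filter (fun α => ∃ i, k + 1 ≤ α i)).card : ℝ) ≤
          2 ^ m * (n : ℝ) ^ (m - k - 1) / ((m - k - 2).factorial : ℝ))) := by
  have hsum : ∀ {M : ℕ} {α : Fin n → ℕ}, α ∈ Lam M n ↔ ∑ i, α i = M := @fun M α => mem_Lam_iff
  -- Part 1: the counting inequality via an injection
  set S := (Lam (m-1) n).filter (fun α => ∃ i, k + 1 ≤ α i) with hS
  have key : S.card ≤ n * (Lam (m-k-2) n).card := by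
    classical
    have := Finset.card_le_card_of_injOn
      (f := fun α : Fin n → ℕ =>
        (if h : ∃ i, k + 1 ≤ α i then (h.choose,
          Function.update α h.choose (α h.choose - (k+1))) else (⟨0, hn⟩, α)))
      (s := S) (t := (Finset.univ : Finset (Fin n)) ×ˢ Lam (m-k-2) n) ?_ ?_
    · simpa [Finset.card_product] using this
    · intro α hα
      rw [Finset.mem_coe, Finset.mem_filter] at hα
      obtain ⟨hαm, hex⟩ := hα
      simp only [dif_pos hex]
      refine Finset.mem_product.mpr ⟨Finset.mem_univ _, ?_⟩
      have hge : k + 1 ≤ α hex.choose := hex.choose_spec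
      refine hsum.mpr ?_
      rw [Finset.sum_update_of_mem (Finset.mem_univ _)]
      have hsplit : ∑ i, α i = α hex.choose + ∑ x ∈ Finset.univ \ {hex.choose}, α x := by
        rw [Finset.sdiff_singleton_eq_erase, ← Finset.add_sum_erase _ _ (Finset.mem_univ _)]
      have hαsum := hsum.mp hαm
      omega
    · intro α hα β hβ hfe
      rw [Finset.coe_filter, Set.mem_setOf_eq] at hα hβ
      obtain ⟨hαm, hexα⟩ := hα
      obtain ⟨hβm, hexβ⟩ := hβ
      simp only [dif_pos hexα, dif_pos hexβ] at hfe
      have h1 : hexα.choose = hexβ.choose := congrArg Prod.fst hfe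
      have h2 := congrArg Prod.snd hfe
      simp only at h2
      set i := hexα.choose with hi
      have hgα : k + 1 ≤ α i := hexα.choose_spec
      have hgβ : k + 1 ≤ β i := h1 ▸ hexβ.choose_spec
      funext j
      by_cases hji : j = i
      · subst hji
        have := congrFun h2 i
        rw [← h1] at this
        simp only [Function.update_self] at this
        omega
      · have := congrFun h2 j
        rw [← h1] at this
        simpa [Function.update_of_ne hji] using this
  have hcard2 : (Lam (m-k-2) n).card = Nat.choose (n + m - k - 3) (m - k - 2) := by
    rw [card_Lam]
    congr 1
    omega
  refine ⟨key, hcard2, ?_⟩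
  intro hmn
  -- Part 3
  set s := m - k - 2 with hs
  have hsn : s ≤ n := by omega
  have hsm : s ≤ m := by omega
  have hnat : S.card * s.factorial ≤ 2 ^ m * n ^ (s + 1) := by
    have h1 : S.card ≤ n * Nat.choose (n + s - 1) s := by
      have : n + m - k - 3 = n + s - 1 := by omega
      calc S.card ≤ n * (Lam (m-k-2) n).card := key
        _ = n * Nat.choose (n + s - 1) s := by rw [hcard2, this]
    have h2 : Nat.choose (n + s - 1) s * s.factorial ≤ (n + s - 1) ^ s := by
      rw [mul_comm, ← Nat.descFactorial_eq_factorial_mul_choose]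
      exact Nat.descFactorial_le_pow _ _
    have h3 : (n + s - 1) ^ s ≤ (2 * n) ^ s :=
      Nat.pow_le_pow_left (by omega) s
    have h4 : (2 * n) ^ s = 2 ^ s * n ^ s := mul_pow 2 n s
    have h5 : 2 ^ s ≤ 2 ^ m := Nat.pow_le_pow_right (by norm_num) hsm
    calc S.card * s.factorial ≤ (n * Nat.choose (n + s - 1) s) * s.factorial :=
          Nat.mul_le_mul_right _ h1
      _ = n * (Nat.choose (n + s - 1) s * s.factorial) := by ring
      _ ≤ n * (2 ^ s * n ^ s) := Nat.mul_le_mul_left _ ((h2.trans h3).trans_eq h4)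
      _ ≤ n * (2 ^ m * n ^ s) := Nat.mul_le_mul_left _ (Nat.mul_le_mul_right _ h5)
      _ = 2 ^ m * n ^ (s + 1) := by ring
  have hmk1 : m - k - 1 = s + 1 := by omega
  rw [hmk1, le_div_iff₀ (by positivity : (0:ℝ) < (s.factorial : ℝ))]
  have hc := (Nat.cast_le (α := ℝ)).mpr hnat
  push_cast at hc
  convert hc using 2
end

section
/- Let 1 ≤ p, q ≤ ∞, m, n ∈ ℕ and D > 0. Suppose there exist signs ε_α ∈ {−1, +1} for α ∈ Λ(m,n) such that sup_{z ∈ B_{ℓ_p^n}} | Σ_{α ∈ Λ(m,n)} ε_α (m!/α!) z^α | ≤ D. Then n^{m(1 − 1/q)} ≤ χ_M(𝒫(^m ℓ_p^n), 𝒫(^m ℓ_q^n)) · D. -/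
open scoped ENNReal NNReal BigOperators

lemma sum_eq_of_mem_Lam {m n : ℕ} {α : Fin n → ℕ} (h : α ∈ Lam m n) : ∑ i, α i = m :=
  Finset.Nat.mem_antidiagonalTuple.mp h

lemma mem_lpBall_of_forall {p : ℝ≥0∞} (hp : 1 ≤ p) {n : ℕ} (hn : 1 ≤ n) {z : Fin n → ℂ}
    (h : ∀ i, ‖z i‖ ≤ (n : ℝ) ^ (-(1 / p.toReal))) : z ∈ lpBall p n 1 := by
  have hn0 : (0:ℝ) < n := by exact_mod_cast hn
  unfold lpBall lpNorm
  by_cases hptop : p = ∞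
  · simp only [hptop, if_pos rfl, Set.mem_setOf_eq]
    refine Real.iSup_le (fun i => ?_) one_pos.le
    simpa [hptop] using h i
  · have hp1 : (1:ℝ) ≤ p.toReal := by
      rw [← ENNReal.toReal_one]
      exact ENNReal.toReal_mono hptop hp
    have hp0 : (0:ℝ) < p.toReal := lt_of_lt_of_le one_pos hp1
    simp only [if_neg hptop, Set.mem_setOf_eq]
    have key : ∀ i : Fin n, ‖z i‖ ^ p.toReal ≤ (n:ℝ)⁻¹ := by
      intro i
      have h1 : ‖z i‖ ^ p.toReal ≤ ((n:ℝ) ^ (-(1/p.toReal))) ^ p.toReal :=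
        Real.rpow_le_rpow (norm_nonneg _) (h i) hp0.le
      refine h1.trans_eq ?_
      rw [← Real.rpow_mul hn0.le]
      have : -(1/p.toReal) * p.toReal = -1 := by field_simp
      rw [this, Real.rpow_neg_one]
    have hsum : (∑ i, ‖z i‖ ^ p.toReal) ≤ 1 := by
      calc (∑ i, ‖z i‖ ^ p.toReal) ≤ ∑ _i : Fin n, (n:ℝ)⁻¹ :=
            Finset.sum_le_sum fun i _ => key i
        _ = n * (n:ℝ)⁻¹ := by simp [Finset.sum_const, mul_comm]
        _ = 1 := mul_inv_cancel₀ hn0.ne'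
    exact Real.rpow_le_one (Finset.sum_nonneg fun i _ => Real.rpow_nonneg (norm_nonneg _) _)
      hsum (by positivity)

lemma norm_coord_le_of_mem {q : ℝ≥0∞} (hq : 1 ≤ q) {n : ℕ} {z : Fin n → ℂ}
    (hz : z ∈ lpBall q n 1) (i : Fin n) : ‖z i‖ ≤ 1 := by
  unfold lpBall lpNorm at hz
  by_cases hqtop : q = ∞
  · rw [hqtop] at hz
    rw [Set.mem_setOf_eq, if_pos rfl] at hz
    exact le_trans (le_ciSup (Set.Finite.bddAbove (Set.finite_range fun j => ‖z j‖)) i) hz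
  · have hq1 : (1:ℝ) ≤ q.toReal := by
      rw [← ENNReal.toReal_one]
      exact ENNReal.toReal_mono hqtop hq
    have hq0 : (0:ℝ) < q.toReal := lt_of_lt_of_le one_pos hq1
    simp only [if_neg hqtop, Set.mem_setOf_eq] at hz
    have hsumnn : (0:ℝ) ≤ ∑ j, ‖z j‖ ^ q.toReal :=
      Finset.sum_nonneg fun j _ => Real.rpow_nonneg (norm_nonneg _) _
    have hsum : (∑ j, ‖z j‖ ^ q.toReal) ≤ 1 := by
      by_contra hcon
      push_neg at hcon
      have : (1:ℝ) < (∑ j, ‖z j‖ ^ q.toReal) ^ (1/q.toReal) := by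
        refine Real.one_lt_rpow_iff_of_pos (lt_of_le_of_lt one_pos.le hcon) |>.mpr ?_
        exact Or.inl ⟨hcon, by positivity⟩
      linarith
    have hterm : ‖z i‖ ^ q.toReal ≤ 1 :=
      le_trans (Finset.single_le_sum (fun j _ => Real.rpow_nonneg (norm_nonneg _) _)
        (Finset.mem_univ i)) hsum
    by_contra hcon
    push_neg at hcon
    have : (1:ℝ) < ‖z i‖ ^ q.toReal :=
      (Real.one_lt_rpow_iff_of_pos (lt_of_le_of_lt one_pos.le hcon)).mpr (Or.inl ⟨hcon, hq0⟩)
    linarith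

/-- crude ℓ¹ bound for polynomial values on a unit ball, with unimodular twists -/
lemma norm_tsum_le {m n : ℕ} {q : ℝ≥0∞} (hq : 1 ≤ q) (a θ : (Fin n → ℕ) → ℂ)
    (hθ : ∀ α ∈ Lam m n, ‖θ α‖ ≤ 1) {z : Fin n → ℂ} (hz : z ∈ lpBall q n 1) :
    ‖∑ α ∈ Lam m n, θ α * a α * ∏ i, z i ^ α i‖ ≤ ∑ α ∈ Lam m n, ‖a α‖ := by
  refine le_trans (norm_sum_le _ _) (Finset.sum_le_sum fun α hα => ?_)
  rw [norm_mul, norm_mul, norm_prod]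
  calc ‖θ α‖ * ‖a α‖ * ∏ i, ‖z i ^ α i‖
      ≤ 1 * ‖a α‖ * 1 := by
        refine mul_le_mul (mul_le_mul (hθ α hα) le_rfl (norm_nonneg _)
          (le_trans (norm_nonneg _) (hθ α hα))) ?_
          (Finset.prod_nonneg fun i _ => norm_nonneg _) (by positivity)
        refine Finset.prod_le_one (fun i _ => norm_nonneg _) fun i _ => ?_
        rw [norm_pow]
        exact pow_le_one₀ (norm_nonneg _) (norm_coord_le_of_mem hq hz i)
    _ = ‖a α‖ := by ring

-- the sup of a polynomial over the ball, basic facts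
section supFacts

variable {m n : ℕ} {p : ℝ≥0∞} (a : (Fin n → ℕ) → ℂ)

noncomputable def polySup (m : ℕ) (p : ℝ≥0∞) {n : ℕ} (a : (Fin n → ℕ) → ℂ) : ℝ :=
  ⨆ w ∈ lpBall p n 1, ‖∑ α ∈ Lam m n, a α * ∏ i, w i ^ α i‖

lemma polySup_nonneg : 0 ≤ polySup m p a :=
  Real.iSup_nonneg fun w => Real.iSup_nonneg fun _ => norm_nonneg _

lemma polySup_le {D : ℝ} (hD : 0 ≤ D)
    (h : ∀ w ∈ lpBall p n 1, ‖∑ α ∈ Lam m n, a α * ∏ i, w i ^ α i‖ ≤ D) :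
    polySup m p a ≤ D :=
  Real.iSup_le (fun w => Real.iSup_le (fun hw => h w hw) hD) hD

lemma bddAbove_polySup (hp : 1 ≤ p) :
    BddAbove (Set.range fun w => ⨆ _ : w ∈ lpBall p n 1,
      ‖∑ α ∈ Lam m n, a α * ∏ i, w i ^ α i‖) := by
  refine ⟨∑ α ∈ Lam m n, ‖a α‖, ?_⟩
  rintro x ⟨w, rfl⟩
  refine Real.iSup_le (fun hw => ?_) (Finset.sum_nonneg fun α _ => norm_nonneg _)
  simpa using norm_tsum_le hp a (fun _ => 1) (fun α _ => by norm_num) hw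

lemma le_polySup (hp : 1 ≤ p) {w : Fin n → ℂ} (hw : w ∈ lpBall p n 1) :
    ‖∑ α ∈ Lam m n, a α * ∏ i, w i ^ α i‖ ≤ polySup m p a := by
  refine le_trans ?_ (le_ciSup (bddAbove_polySup a hp) w)
  rw [ciSup_pos hw]

end supFacts

-- DFT on roots of unity
noncomputable def omg (m : ℕ) : ℂ :=
  Complex.exp (((2 * Real.pi / (m + 1) : ℝ) : ℂ) * Complex.I)

lemma omg_ne_zero (m : ℕ) : omg m ≠ 0 := Complex.exp_ne_zero _

lemma norm_omg_zpow (m : ℕ) (t : ℤ) : ‖omg m ^ t‖ = 1 := by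
  rw [norm_zpow, omg, Complex.norm_exp_ofReal_mul_I, one_zpow]

lemma omg_pow_succ (m : ℕ) : omg m ^ ((m : ℤ) + 1) = 1 := by
  have h1 : ((m : ℤ) + 1) = ((m + 1 : ℕ) : ℤ) := by push_cast; ring
  rw [h1, zpow_natCast, omg, ← Complex.exp_nat_mul]
  have : ((m + 1 : ℕ) : ℂ) * (((2 * Real.pi / (m + 1) : ℝ) : ℂ) * Complex.I)
      = 2 * (Real.pi : ℂ) * Complex.I := by
    have hne : ((m + 1 : ℕ) : ℂ) ≠ 0 := by exact_mod_cast Nat.succ_ne_zero m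
    push_cast
    push_cast at hne
    field_simp
  rw [this, Complex.exp_two_pi_mul_I]

lemma omg_zpow_ne_one (m : ℕ) {d : ℤ} (hd0 : d ≠ 0) (hdlt : d.natAbs < m + 1) :
    omg m ^ d ≠ 1 := by
  intro hone
  rw [omg, ← Complex.exp_int_mul] at hone
  obtain ⟨k, hk⟩ := Complex.exp_eq_one_iff.mp hone
  have hpi : (Real.pi : ℂ) ≠ 0 := by exact_mod_cast Real.pi_ne_zero
  have hM : ((m : ℂ) + 1) ≠ 0 := by
    have : ((m + 1 : ℕ) : ℂ) ≠ 0 := by exact_mod_cast Nat.succ_ne_zero m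
    push_cast at this; exact this
  have hdk : (d : ℂ) = (k : ℂ) * ((m : ℂ) + 1) := by
    have h2 : (d : ℂ) * (((2 * Real.pi / (m + 1) : ℝ) : ℂ) * Complex.I)
        = (k : ℂ) * (2 * (Real.pi : ℂ) * Complex.I) := hk
    push_cast at h2
    field_simp at h2
    have hne : (2 * (Real.pi : ℂ) * Complex.I) ≠ 0 :=
      mul_ne_zero (mul_ne_zero two_ne_zero hpi) Complex.I_ne_zero
    apply mul_right_cancel₀ hne
    linear_combination (2 * (Real.pi : ℂ) * Complex.I) * h2
  have hdkZ : d = k * ((m : ℤ) + 1) := by exact_mod_cast hdk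
  have hk0 : k ≠ 0 := by
    rintro rfl
    simp at hdkZ
    exact hd0 hdkZ
  have : (m + 1 : ℕ) ≤ d.natAbs := by
    rw [hdkZ]
    have h3 : ((m:ℤ)+1) = ((m+1:ℕ):ℤ) := by push_cast; ring
    rw [h3, Int.natAbs_mul, Int.natAbs_natCast]
    have hk1 : 0 < k.natAbs := Int.natAbs_pos.mpr hk0
    calc m + 1 = 1 * (m + 1) := (one_mul _).symm
      _ ≤ k.natAbs * (m + 1) := Nat.mul_le_mul_right _ hk1
  omega

lemma dft_sum (m : ℕ) (d : ℤ) (hdlt : d.natAbs < m + 1) :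
    ∑ j : Fin (m + 1), omg m ^ ((j : ℤ) * d) = if d = 0 then ((m : ℂ) + 1) else 0 := by
  by_cases hd : d = 0
  · subst hd
    simp [Finset.card_univ]
  · rw [if_neg hd]
    set ζ := omg m ^ d with hζdef
    have hterm : ∀ j : Fin (m + 1), omg m ^ ((j : ℤ) * d) = ζ ^ (j : ℕ) := by
      intro j
      rw [hζdef, mul_comm, zpow_mul, zpow_natCast]
    rw [Finset.sum_congr rfl fun j _ => hterm j]
    rw [Fin.sum_univ_eq_sum_range (fun j => ζ ^ j) (m + 1)]
    have hζ1 : ζ ≠ 1 := omg_zpow_ne_one m hd hdlt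
    rw [geom_sum_eq hζ1]
    have hζM : ζ ^ (m + 1) = 1 := by
      have hM1 : omg m ^ ((m + 1 : ℕ) : ℤ) = 1 := by
        push_cast
        exact omg_pow_succ m
      rw [hζdef, ← zpow_natCast (omg m ^ d) (m + 1), ← zpow_mul, mul_comm, zpow_mul, hM1, one_zpow]
    rw [hζM, sub_self, zero_div]

lemma coord_le_of_mem_Lam {m n : ℕ} {β : Fin n → ℕ} (hβ : β ∈ Lam m n) (i : Fin n) : β i ≤ m := by
  rw [← sum_eq_of_mem_Lam hβ]
  exact Finset.single_le_sum (fun j _ => Nat.zero_le _) (Finset.mem_univ i)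

lemma dft_identity {m n : ℕ} (a : (Fin n → ℕ) → ℂ) (c : ℂ) {α : Fin n → ℕ}
    (hα : α ∈ Lam m n) :
    ∑ k : Fin n → Fin (m + 1), (∏ i, omg m ^ (-((k i : ℤ) * (α i : ℤ)))) *
      (∑ β ∈ Lam m n, a β * ∏ i, (c * omg m ^ ((k i : ℕ))) ^ (β i))
    = ((m : ℂ) + 1) ^ n * c ^ m * a α := by
  have step1 : ∀ (k : Fin n → Fin (m + 1)) (β : Fin n → ℕ), β ∈ Lam m n →
      (∏ i, omg m ^ (-((k i : ℤ) * (α i : ℤ)))) * (a β * ∏ i, (c * omg m ^ ((k i : ℕ))) ^ (β i))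
      = a β * c ^ m * ∏ i, omg m ^ ((k i : ℤ) * ((β i : ℤ) - (α i : ℤ))) := by
    intro k β hβ
    have h1 : ∀ i, (c * omg m ^ ((k i : ℕ))) ^ (β i)
        = c ^ (β i) * omg m ^ (((k i : ℕ) * β i : ℕ)) := by
      intro i
      rw [mul_pow, ← pow_mul]
    have hprod : (∏ i, omg m ^ (-((k i : ℤ) * (α i : ℤ)))) *
        (∏ i, omg m ^ (((k i : ℕ) * β i : ℕ)))
        = ∏ i, omg m ^ ((k i : ℤ) * ((β i : ℤ) - (α i : ℤ))) := by
      rw [← Finset.prod_mul_distrib]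
      refine Finset.prod_congr rfl fun i _ => ?_
      rw [← zpow_natCast (omg m) ((k i : ℕ) * β i), ← zpow_add₀ (omg_ne_zero m)]
      congr 1
      push_cast
      ring
    rw [Finset.prod_congr rfl fun i _ => h1 i, Finset.prod_mul_distrib,
      Finset.prod_pow_eq_pow_sum, sum_eq_of_mem_Lam hβ, ← hprod]
    ring
  calc ∑ k : Fin n → Fin (m + 1), (∏ i, omg m ^ (-((k i : ℤ) * (α i : ℤ)))) *
        (∑ β ∈ Lam m n, a β * ∏ i, (c * omg m ^ ((k i : ℕ))) ^ (β i))
      = ∑ β ∈ Lam m n, ∑ k : Fin n → Fin (m + 1),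
          a β * c ^ m * ∏ i, omg m ^ ((k i : ℤ) * ((β i : ℤ) - (α i : ℤ))) := by
        rw [Finset.sum_congr rfl fun (k : Fin n → Fin (m + 1)) _ => Finset.mul_sum
          (Lam m n) (fun β => a β * ∏ i, (c * omg m ^ ((k i : ℕ))) ^ (β i))
          (∏ i, omg m ^ (-((k i : ℤ) * (α i : ℤ))))]
        rw [Finset.sum_comm]
        exact Finset.sum_congr rfl fun β hβ => Finset.sum_congr rfl fun k _ => step1 k β hβ
    _ = ∑ β ∈ Lam m n, a β * c ^ m *
          ∏ i, ∑ j : Fin (m + 1), omg m ^ ((j : ℤ) * ((β i : ℤ) - (α i : ℤ))) := by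
        refine Finset.sum_congr rfl fun β hβ => ?_
        rw [← Finset.mul_sum]
        congr 1
        rw [Finset.prod_univ_sum (fun (_ : Fin n) => (Finset.univ : Finset (Fin (m + 1))))
          (fun i (j : Fin (m + 1)) => omg m ^ ((j : ℤ) * ((β i : ℤ) - (α i : ℤ)))),
          Fintype.piFinset_univ]
    _ = ∑ β ∈ Lam m n, a β * c ^ m * (if β = α then ((m : ℂ) + 1) ^ n else 0) := by
        refine Finset.sum_congr rfl fun β hβ => ?_
        congr 1
        by_cases hβα : β = α
        · subst hβα
          rw [if_pos rfl]
          have : ∀ i : Fin n, ∑ j : Fin (m + 1), omg m ^ ((j : ℤ) * ((β i : ℤ) - (β i : ℤ)))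
              = ((m : ℂ) + 1) := by
            intro i
            rw [sub_self]
            simpa using dft_sum m 0 (by simp)
          rw [Finset.prod_congr rfl fun i _ => this i, Finset.prod_const, Finset.card_univ,
            Fintype.card_fin]
        · rw [if_neg hβα]
          obtain ⟨i, hi⟩ : ∃ i, β i ≠ α i := by
            by_contra hcon
            push_neg at hcon
            exact hβα (funext hcon)
          refine Finset.prod_eq_zero (Finset.mem_univ i) ?_
          have hd0 : ((β i : ℤ) - (α i : ℤ)) ≠ 0 := by
            intro h
            exact hi (by omega)
          have hdlt : ((β i : ℤ) - (α i : ℤ)).natAbs < m + 1 := by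
            have h1 := coord_le_of_mem_Lam hβ i
            have h2 := coord_le_of_mem_Lam hα i
            omega
          rw [dft_sum m _ hdlt, if_neg hd0]
    _ = ((m : ℂ) + 1) ^ n * c ^ m * a α := by
        rw [Finset.sum_eq_single α]
        · rw [if_pos rfl]; ring
        · intro β hβ hne
          rw [if_neg hne, mul_zero]
        · intro habs
          exact absurd hα habs

lemma norm_omg_pow (m j : ℕ) : ‖omg m ^ j‖ = 1 := by
  rw [← zpow_natCast (omg m) j]
  exact norm_omg_zpow m _

lemma inv_le_rpow_exp {p : ℝ≥0∞} (hp : 1 ≤ p) {n : ℕ} (hn : 1 ≤ n) :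
    (n : ℝ)⁻¹ ≤ (n : ℝ) ^ (-(1 / p.toReal)) := by
  have hn1 : (1:ℝ) ≤ n := by exact_mod_cast hn
  have h1 : (n : ℝ)⁻¹ = (n : ℝ) ^ (-(1:ℝ)) := (Real.rpow_neg_one _).symm
  rw [h1]
  refine Real.rpow_le_rpow_of_exponent_le hn1 ?_
  have : 1 / p.toReal ≤ 1 := by
    by_cases hptop : p = ∞
    · simp [hptop]
    · have hp1 : (1:ℝ) ≤ p.toReal := by
        rw [← ENNReal.toReal_one]
        exact ENNReal.toReal_mono hptop hp
      rw [div_le_one (lt_of_lt_of_le one_pos hp1)]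
      exact hp1
  linarith

lemma coeff_le {m n : ℕ} {p : ℝ≥0∞} (hp : 1 ≤ p) (hn : 1 ≤ n)
    (a : (Fin n → ℕ) → ℂ) {α : Fin n → ℕ} (hα : α ∈ Lam m n) :
    ‖a α‖ ≤ (n : ℝ) ^ m * polySup m p a := by
  have hn0 : (0:ℝ) < n := by exact_mod_cast hn
  set c : ℂ := ((n : ℝ)⁻¹ : ℂ) with hc
  have hcn : ‖c‖ = (n : ℝ)⁻¹ := by
    rw [hc, norm_inv, Complex.norm_real, Real.norm_eq_abs, abs_of_nonneg hn0.le]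
  have hid := dft_identity a c hα
  have hmem : ∀ k : Fin n → Fin (m + 1),
      (fun i => c * omg m ^ ((k i : ℕ))) ∈ lpBall p n 1 := by
    intro k
    refine mem_lpBall_of_forall hp hn fun i => ?_
    rw [norm_mul, norm_omg_pow, mul_one, hcn]
    exact inv_le_rpow_exp hp hn
  have hbound : ‖∑ k : Fin n → Fin (m + 1), (∏ i, omg m ^ (-((k i : ℤ) * (α i : ℤ)))) *
      (∑ β ∈ Lam m n, a β * ∏ i, (c * omg m ^ ((k i : ℕ))) ^ (β i))‖
      ≤ ((m : ℝ) + 1) ^ n * polySup m p a := by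
    refine le_trans (norm_sum_le _ _) ?_
    have heach : ∀ k : Fin n → Fin (m + 1),
        ‖(∏ i, omg m ^ (-((k i : ℤ) * (α i : ℤ)))) *
          (∑ β ∈ Lam m n, a β * ∏ i, (c * omg m ^ ((k i : ℕ))) ^ (β i))‖
        ≤ polySup m p a := by
      intro k
      rw [norm_mul, norm_prod]
      have h1 : (∏ i, ‖omg m ^ (-((k i : ℤ) * (α i : ℤ)))‖) = 1 :=
        Finset.prod_eq_one fun i _ => norm_omg_zpow m _
      rw [h1, one_mul]
      exact le_polySup a hp (hmem k)
    calc (∑ k : Fin n → Fin (m + 1), ‖(∏ i, omg m ^ (-((k i : ℤ) * (α i : ℤ)))) *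
          (∑ β ∈ Lam m n, a β * ∏ i, (c * omg m ^ ((k i : ℕ))) ^ (β i))‖)
        ≤ ∑ _k : Fin n → Fin (m + 1), polySup m p a :=
          Finset.sum_le_sum fun k _ => heach k
      _ = ((m : ℝ) + 1) ^ n * polySup m p a := by
          rw [Finset.sum_const, Finset.card_univ, Fintype.card_fun, Fintype.card_fin,
            Fintype.card_fin, nsmul_eq_mul]
          push_cast
          ring
  rw [hid] at hbound
  have hnorm : ‖((m : ℂ) + 1) ^ n * c ^ m * a α‖
      = ((m : ℝ) + 1) ^ n * ((n : ℝ)⁻¹) ^ m * ‖a α‖ := by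
    rw [norm_mul, norm_mul, norm_pow, norm_pow, hcn]
    congr 3
    have : ((m : ℂ) + 1) = ((m + 1 : ℕ) : ℂ) := by push_cast; ring
    rw [this, Complex.norm_natCast]
    push_cast; ring
  rw [hnorm] at hbound
  have hMpos : (0:ℝ) < ((m : ℝ) + 1) ^ n := by positivity
  have h5 : ((n : ℝ)⁻¹) ^ m * ‖a α‖ ≤ polySup m p a := by
    have := hbound
    rw [mul_assoc] at this
    exact le_of_mul_le_mul_left this hMpos
  have hone : ((n : ℝ)) ^ m * ((n : ℝ)⁻¹) ^ m = 1 := by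
    rw [← mul_pow, mul_inv_cancel₀ hn0.ne', one_pow]
  calc ‖a α‖ = (n : ℝ) ^ m * (((n : ℝ)⁻¹) ^ m * ‖a α‖) := by
        rw [← mul_assoc, hone, one_mul]
    _ ≤ (n : ℝ) ^ m * polySup m p a := by
        refine mul_le_mul_of_nonneg_left h5 (by positivity)

lemma unconditional_set_nonempty {m n : ℕ} {p q : ℝ≥0∞} (hp : 1 ≤ p) (hq : 1 ≤ q) (hn : 1 ≤ n) :
    ((Lam m n).card * (n:ℝ)^m + 1) ∈ {l : ℝ | 0 < l ∧ ∀ (a θ : (Fin n → ℕ) → ℂ),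
      (∀ α ∈ Lam m n, ‖θ α‖ = 1) → ∀ z ∈ lpBall q n 1,
      ‖∑ α ∈ Lam m n, θ α * a α * ∏ i, z i ^ α i‖ ≤
        ((Lam m n).card * (n:ℝ)^m + 1) *
          ⨆ w ∈ lpBall p n 1, ‖∑ α ∈ Lam m n, a α * ∏ i, w i ^ α i‖} := by
  constructor
  · positivity
  · intro a θ hθ z hz
    have h1 := norm_tsum_le hq a θ (fun α hα => le_of_eq (hθ α hα)) hz
    have h2 : (∑ α ∈ Lam m n, ‖a α‖) ≤ (Lam m n).card * ((n:ℝ)^m * polySup m p a) := by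
      calc ∑ α ∈ Lam m n, ‖a α‖ ≤ ∑ _α ∈ Lam m n, (n:ℝ)^m * polySup m p a :=
            Finset.sum_le_sum fun α hα => coeff_le hp hn a hα
        _ = (Lam m n).card * ((n:ℝ)^m * polySup m p a) := by
            rw [Finset.sum_const, nsmul_eq_mul]
    have h3 : (0:ℝ) ≤ polySup m p a := polySup_nonneg a
    show _ ≤ _ * polySup m p a
    refine h1.trans (h2.trans ?_)
    nlinarith [h3]

lemma lower_bound_aux {m n : ℕ} {p q : ℝ≥0∞} (hp : 1 ≤ p) (hq : 1 ≤ q) (hn : 1 ≤ n)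
    {D : ℝ} (hD : 0 < D)
    (ε : (Fin n → ℕ) → ℝ) (hε : ∀ α ∈ Lam m n, ε α = 1 ∨ ε α = -1)
    (hsup : ∀ z ∈ lpBall p n 1,
      ‖∑ α ∈ Lam m n,
          (ε α : ℂ) * ((m.factorial : ℂ) / ((∏ i, (α i).factorial : ℕ) : ℂ)) *
            ∏ i, z i ^ α i‖ ≤ D)
    {l : ℝ}
    (hl : l ∈ {l : ℝ | 0 < l ∧ ∀ (a θ : (Fin n → ℕ) → ℂ),
      (∀ α ∈ Lam m n, ‖θ α‖ = 1) → ∀ z ∈ lpBall q n 1,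
      ‖∑ α ∈ Lam m n, θ α * a α * ∏ i, z i ^ α i‖ ≤
        l * ⨆ w ∈ lpBall p n 1, ‖∑ α ∈ Lam m n, a α * ∏ i, w i ^ α i‖}) :
    (n : ℝ) ^ ((m : ℝ) * (1 - 1/q.toReal)) ≤ l * D := by
  have hn0 : (0:ℝ) < n := by exact_mod_cast hn
  set t : ℝ := (n : ℝ) ^ (-(1/q.toReal)) with htdef
  have ht0 : 0 < t := Real.rpow_pos_of_pos hn0 _
  set a : (Fin n → ℕ) → ℂ :=
    fun α => (ε α : ℂ) * ((m.factorial : ℂ) / ((∏ i, (α i).factorial : ℕ) : ℂ)) with hadef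
  set θ : (Fin n → ℕ) → ℂ := fun α => (ε α : ℂ) with hθdef
  have hθ1 : ∀ α ∈ Lam m n, ‖θ α‖ = 1 := by
    intro α hα
    rcases hε α hα with h | h <;> simp [hθdef, h]
  set z : Fin n → ℂ := fun _ => ((t : ℝ) : ℂ) with hzdef
  have hznorm : ∀ i : Fin n, ‖z i‖ = t := by
    intro i
    rw [hzdef]
    simp [Complex.norm_real, Real.norm_eq_abs, abs_of_nonneg ht0.le]
  have hz : z ∈ lpBall q n 1 :=
    mem_lpBall_of_forall hq hn fun i => (hznorm i).le
  have key := hl.2 a θ hθ1 z hz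
  -- compute the left-hand side
  have hsum : (∑ α ∈ Lam m n, θ α * a α * ∏ i, z i ^ α i)
      = ((n : ℂ)) ^ m * ((t : ℝ) : ℂ) ^ m := by
    have hterm : ∀ α ∈ Lam m n, θ α * a α * ∏ i, z i ^ α i
        = ((Nat.multinomial Finset.univ α : ℕ) : ℂ) * ((t : ℝ) : ℂ) ^ m := by
      intro α hα
      have hprod : (∏ i, z i ^ α i) = ((t : ℝ) : ℂ) ^ m := by
        rw [hzdef]
        rw [Finset.prod_pow_eq_pow_sum, sum_eq_of_mem_Lam hα]
      have hsq : θ α * (ε α : ℂ) = 1 := by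
        rcases hε α hα with h | h <;> simp [hθdef, h]
      have hmult : ((m.factorial : ℂ) / ((∏ i, (α i).factorial : ℕ) : ℂ))
          = ((Nat.multinomial Finset.univ α : ℕ) : ℂ) := by
        have hspec := Nat.multinomial_spec Finset.univ α
        rw [sum_eq_of_mem_Lam hα] at hspec
        have hne : (((∏ i, (α i).factorial : ℕ) : ℂ)) ≠ 0 := by
          exact_mod_cast (Nat.prod_factorial_pos Finset.univ α).ne'
        rw [div_eq_iff hne, mul_comm]
        exact_mod_cast hspec.symm
      calc θ α * a α * ∏ i, z i ^ α i
          = (θ α * (ε α : ℂ)) * ((m.factorial : ℂ) / ((∏ i, (α i).factorial : ℕ) : ℂ)) *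
              ∏ i, z i ^ α i := by rw [hadef]; ring
        _ = ((Nat.multinomial Finset.univ α : ℕ) : ℂ) * ((t : ℝ) : ℂ) ^ m := by
            rw [hsq, hprod, hmult, one_mul]
    rw [Finset.sum_congr rfl hterm, ← Finset.sum_mul]
    congr 1
    have hLam : Lam m n = Finset.piAntidiag Finset.univ m :=
      (Finset.piAntidiag_univ_fin_eq_antidiagonalTuple m n).symm
    have hmt := Finset.sum_pow_eq_sum_piAntidiag (Finset.univ : Finset (Fin n))
      (fun _ => (1:ℂ)) m
    simp only [Finset.sum_const, Finset.card_univ, Fintype.card_fin, nsmul_eq_mul,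
      mul_one, one_pow, Finset.prod_const_one] at hmt
    rw [hLam, ← hmt]
  rw [hsum] at key
  have hnormval : ‖((n : ℂ)) ^ m * ((t : ℝ) : ℂ) ^ m‖ = (n:ℝ)^m * t^m := by
    rw [norm_mul, norm_pow, norm_pow, Complex.norm_natCast, Complex.norm_real,
      Real.norm_eq_abs, abs_of_nonneg ht0.le]
  rw [hnormval] at key
  have hsupD : (⨆ w ∈ lpBall p n 1, ‖∑ α ∈ Lam m n, a α * ∏ i, w i ^ α i‖) ≤ D :=
    polySup_le a hD.le hsup
  have hfin : (n:ℝ)^m * t^m ≤ l * D :=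
    key.trans (mul_le_mul_of_nonneg_left hsupD hl.1.le)
  have hexp : (n:ℝ)^m * t^m = (n : ℝ) ^ ((m : ℝ) * (1 - 1/q.toReal)) := by
    rw [htdef, ← Real.rpow_natCast ((n:ℝ) ^ (-(1/q.toReal))) m, ← Real.rpow_mul hn0.le,
      ← Real.rpow_natCast (n:ℝ) m, ← Real.rpow_add hn0]
    congr 1
    ring
  rw [hexp] at hfin
  exact hfin

/-- If there are signs `ε_α ∈ {−1,+1}` with
`sup_{z ∈ B_{ℓ_p^n}} |Σ_{α ∈ Λ(m,n)} ε_α (m!/α!) z^α| ≤ D`, then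
`n^(m(1 − 1/q)) ≤ χ_M(𝒫(^m ℓ_p^n), 𝒫(^m ℓ_q^n)) · D`. -/
theorem rpow_le_unconditionalConst_mul (p q : ℝ≥0∞) (hp : 1 ≤ p) (hq : 1 ≤ q)
    (m n : ℕ) (hm : 1 ≤ m) (hn : 1 ≤ n) (D : ℝ) (hD : 0 < D)
    (ε : (Fin n → ℕ) → ℝ) (hε : ∀ α ∈ Lam m n, ε α = 1 ∨ ε α = -1)
    (hsup : ∀ z ∈ lpBall p n 1,
      ‖∑ α ∈ Lam m n,
          (ε α : ℂ) * ((m.factorial : ℂ) / ((∏ i, (α i).factorial : ℕ) : ℂ)) *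
            ∏ i, z i ^ α i‖ ≤ D) :
    (n : ℝ) ^ ((m : ℝ) * (1 - 1/q.toReal)) ≤ unconditionalConst m p q n * D := by
  unfold unconditionalConst
  have hne : Set.Nonempty {l : ℝ | 0 < l ∧ ∀ (a θ : (Fin n → ℕ) → ℂ),
      (∀ α ∈ Lam m n, ‖θ α‖ = 1) → ∀ z ∈ lpBall q n 1,
      ‖∑ α ∈ Lam m n, θ α * a α * ∏ i, z i ^ α i‖ ≤
        l * ⨆ w ∈ lpBall p n 1, ‖∑ α ∈ Lam m n, a α * ∏ i, w i ^ α i‖} :=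
    ⟨_, unconditional_set_nonempty (m := m) hp hq hn⟩
  have h : (n : ℝ) ^ ((m : ℝ) * (1 - 1/q.toReal)) / D ≤ sInf {l : ℝ | 0 < l ∧
      ∀ (a θ : (Fin n → ℕ) → ℂ),
      (∀ α ∈ Lam m n, ‖θ α‖ = 1) → ∀ z ∈ lpBall q n 1,
      ‖∑ α ∈ Lam m n, θ α * a α * ∏ i, z i ^ α i‖ ≤
        l * ⨆ w ∈ lpBall p n 1, ‖∑ α ∈ Lam m n, a α * ∏ i, w i ^ α i‖} := by
    refine le_csInf hne fun l hl => ?_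
    exact (div_le_iff₀ hD).mpr (lower_bound_aux hp hq hn hD ε hε hsup hl)
  rw [div_le_iff₀ hD] at h
  exact h
end
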